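/- arXiv:2309.10143 — 7 statements merged into one kernel-verified Lean document; each statement's English description precedes it below -/
import Mathlib

section
/- Let X be a set with a partition X = X₁ ⊔ X₂, let Ω be a domain on X with X₁ × X₁ ⊆ Ω and X₂ × X₂ ⊆ Ω, let Δ = Ω ∩ (X₁ × X₂), and let K_Ω : Ω → ℝ be symmetric with K_{X₁} = K_Ω|_{X₁ × X₁} and K_{X₂} = K_Ω|_{X₂ × X₂} reproducing kernels. Let (H₁, k₁) and (H₂, k₂) be realizations of K_{X₁} and K_{X₂}. Then K_Ω admits a completion if and only if for every n ≥ 1, all (x₁,y₁),…,(x_n,y_n) ∈ Δ and all α₁,…,α_n ∈ ℝ, |∑_{j=1}^n α_j K_Ω(x_j, y_j)| ≤ sup{ |∑_{j=1}^n α_j ⟪Φ(k₁ x_j), k₂ y_j⟫| : Φ : H₁ → H₂ continuous linear, ‖Φ‖ ≤ 1 }. -/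
open scoped RealInnerProductSpace

/-- A reproducing kernel on a set `X`. -/
def IsKernel {X : Type*} (K : X → X → ℝ) : Prop :=
  (∀ x y, K x y = K y x) ∧
  ∀ (n : ℕ) (α : Fin n → ℝ) (x : Fin n → X),
    0 ≤ ∑ i, ∑ j, α i * α j * K (x i) (x j)

/-- A domain on `X`: a symmetric subset of `X × X` containing the diagonal. -/
def IsCompletionDomain {X : Type*} (Ω : Set (X × X)) : Prop :=
  (∀ x y, (x, y) ∈ Ω ↔ (y, x) ∈ Ω) ∧ ∀ x, (x, x) ∈ Ω

/-- `K` is a completion of `KΩ` on the domain `Ω`. -/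
def IsCompletion {X : Type*} (Ω : Set (X × X)) (KΩ : X → X → ℝ) (K : X → X → ℝ) : Prop :=
  IsKernel K ∧ ∀ x y, (x, y) ∈ Ω → K x y = KΩ x y

lemma exists_contraction_of_bilinear {H₁ H₂ : Type*}
    [NormedAddCommGroup H₁] [InnerProductSpace ℝ H₁]
    [NormedAddCommGroup H₂] [InnerProductSpace ℝ H₂] [CompleteSpace H₂]
    (b : H₁ → H₂ → ℝ)
    (hadd₁ : ∀ u u' v, b (u + u') v = b u v + b u' v)
    (hsmul₁ : ∀ (r : ℝ) u v, b (r • u) v = r * b u v)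
    (hadd₂ : ∀ u v v', b u (v + v') = b u v + b u v')
    (hsmul₂ : ∀ (r : ℝ) u v, b u (r • v) = r * b u v)
    (hbd : ∀ u v, |b u v| ≤ ‖u‖ * ‖v‖) :
    ∃ Φ : H₁ →L[ℝ] H₂, ‖Φ‖ ≤ 1 ∧ ∀ u v, ⟪Φ u, v⟫ = b u v := by
  let L : H₁ → (H₂ →L[ℝ] ℝ) := fun u =>
    LinearMap.mkContinuous
      { toFun := b u, map_add' := hadd₂ u, map_smul' := fun r v => hsmul₂ r u v }
      ‖u‖ (fun v => by rw [Real.norm_eq_abs]; exact hbd u v)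
  have hLapply : ∀ u v, L u v = b u v := fun u v => rfl
  have hLnorm : ∀ u, ‖L u‖ ≤ ‖u‖ := fun u =>
    LinearMap.mkContinuous_norm_le _ (norm_nonneg u) _
  have hLadd : ∀ u u', L (u + u') = L u + L u' := by
    intro u u'; ext v; simp [hLapply, hadd₁]
  have hLsmul : ∀ (r : ℝ) u, L (r • u) = r • L u := by
    intro r u; ext v; simp [hLapply, hsmul₁]
  let Φ₀ : H₁ →ₗ[ℝ] H₂ :=
    { toFun := fun u => (InnerProductSpace.toDual ℝ H₂).symm (L u)
      map_add' := fun u u' => by rw [hLadd, map_add]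
      map_smul' := fun r u => by rw [RingHom.id_apply, hLsmul, map_smul] }
  refine ⟨Φ₀.mkContinuous 1 (fun u => ?_), ?_, ?_⟩
  · have : ‖Φ₀ u‖ = ‖L u‖ :=
      LinearIsometryEquiv.norm_map (InnerProductSpace.toDual ℝ H₂).symm (L u)
    rw [this, one_mul]; exact hLnorm u
  · exact LinearMap.mkContinuous_norm_le _ zero_le_one _
  · intro u v
    show ⟪(InnerProductSpace.toDual ℝ H₂).symm (L u), v⟫ = b u v
    rw [InnerProductSpace.toDual_symm_apply]; rfl

lemma completion_of_contraction {X H₁ H₂ : Type*}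
    [NormedAddCommGroup H₁] [InnerProductSpace ℝ H₁]
    [NormedAddCommGroup H₂] [InnerProductSpace ℝ H₂]
    (X₁ X₂ : Set X) (hcover : X₁ ∪ X₂ = Set.univ) (hdisj : Disjoint X₁ X₂)
    (Ω : Set (X × X)) (hΩ : IsCompletionDomain Ω)
    (KΩ : X → X → ℝ) (hsymm : ∀ u v, (u, v) ∈ Ω → KΩ u v = KΩ v u)
    (k₁ : X₁ → H₁) (hk₁ : ∀ u v : X₁, ⟪k₁ u, k₁ v⟫ = KΩ u v)
    (k₂ : X₂ → H₂) (hk₂ : ∀ u v : X₂, ⟪k₂ u, k₂ v⟫ = KΩ u v)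
    (Φ : H₁ →L[ℝ] H₂) (hΦ : ‖Φ‖ ≤ 1)
    (hint : ∀ (x y : X) (hx : x ∈ X₁) (hy : y ∈ X₂), (x, y) ∈ Ω →
      ⟪Φ (k₁ ⟨x, hx⟩), k₂ ⟨y, hy⟩⟫ = KΩ x y) :
    ∃ K : X → X → ℝ, IsCompletion Ω KΩ K := by
  classical
  have hmem : ∀ x : X, x ∈ X₁ ∨ x ∈ X₂ := by
    intro x
    have : x ∈ X₁ ∪ X₂ := hcover ▸ Set.mem_univ x
    exact this
  have hnot : ∀ x : X, x ∈ X₁ → x ∉ X₂ := fun x hx => Set.disjoint_left.mp hdisj hx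
  set f : X → H₁ := fun x => if h : x ∈ X₁ then k₁ ⟨x, h⟩ else 0 with hf
  set g : X → H₂ := fun x => if h : x ∈ X₂ then k₂ ⟨x, h⟩ else 0 with hg
  set K : X → X → ℝ := fun x y =>
    ⟪f x, f y⟫ + ⟪g x, g y⟫ + ⟪Φ (f x), g y⟫ + ⟪Φ (f y), g x⟫ with hK
  refine ⟨K, ⟨?_, ?_⟩, ?_⟩
  · -- symmetry
    intro x y
    simp only [hK]
    rw [real_inner_comm (f x) (f y), real_inner_comm (g x) (g y)]
    ring
  · -- PSD
    intro n α z
    set U : H₁ := ∑ i, α i • f (z i) with hU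
    set V : H₂ := ∑ i, α i • g (z i) with hV
    have e1 : ∑ i, ∑ j, α i * α j * ⟪f (z i), f (z j)⟫ = ⟪U, U⟫ := by
      rw [hU, sum_inner]
      refine Finset.sum_congr rfl fun i _ => ?_
      rw [inner_sum]
      refine Finset.sum_congr rfl fun j _ => ?_
      rw [real_inner_smul_left, real_inner_smul_right]; ring
    have e2 : ∑ i, ∑ j, α i * α j * ⟪g (z i), g (z j)⟫ = ⟪V, V⟫ := by
      rw [hV, sum_inner]
      refine Finset.sum_congr rfl fun i _ => ?_
      rw [inner_sum]
      refine Finset.sum_congr rfl fun j _ => ?_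
      rw [real_inner_smul_left, real_inner_smul_right]; ring
    have e3 : ∑ i, ∑ j, α i * α j * ⟪Φ (f (z i)), g (z j)⟫ = ⟪Φ U, V⟫ := by
      rw [hU, hV, map_sum, sum_inner]
      refine Finset.sum_congr rfl fun i _ => ?_
      rw [inner_sum]
      refine Finset.sum_congr rfl fun j _ => ?_
      rw [map_smul, real_inner_smul_left, real_inner_smul_right]; ring
    have e4 : ∑ i, ∑ j, α i * α j * ⟪Φ (f (z j)), g (z i)⟫ = ⟪Φ U, V⟫ := by
      rw [Finset.sum_comm]
      rw [hU, hV, map_sum, sum_inner]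
      refine Finset.sum_congr rfl fun j _ => ?_
      rw [inner_sum]
      refine Finset.sum_congr rfl fun i _ => ?_
      rw [map_smul, real_inner_smul_left, real_inner_smul_right]; ring
    have expand : ∑ i, ∑ j, α i * α j * K (z i) (z j)
        = ⟪U, U⟫ + ⟪V, V⟫ + 2 * ⟪Φ U, V⟫ := by
      have : ∀ i j, α i * α j * K (z i) (z j)
          = α i * α j * ⟪f (z i), f (z j)⟫ + α i * α j * ⟪g (z i), g (z j)⟫
            + α i * α j * ⟪Φ (f (z i)), g (z j)⟫ + α i * α j * ⟪Φ (f (z j)), g (z i)⟫ := by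
        intro i j; simp only [hK]; ring
      simp only [this, Finset.sum_add_distrib]
      rw [e1, e2, e3, e4]; ring
    rw [expand]
    have h1 : ⟪U, U⟫ = ‖U‖ ^ 2 := real_inner_self_eq_norm_sq U
    have h2 : ⟪V, V⟫ = ‖V‖ ^ 2 := real_inner_self_eq_norm_sq V
    have h3 : |⟪Φ U, V⟫| ≤ ‖U‖ * ‖V‖ := by
      calc |⟪Φ U, V⟫| ≤ ‖Φ U‖ * ‖V‖ := abs_real_inner_le_norm _ _
        _ ≤ (‖Φ‖ * ‖U‖) * ‖V‖ := by
            have := Φ.le_opNorm U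
            exact mul_le_mul_of_nonneg_right this (norm_nonneg V)
        _ ≤ ‖U‖ * ‖V‖ := by
            have : ‖Φ‖ * ‖U‖ ≤ 1 * ‖U‖ :=
              mul_le_mul_of_nonneg_right hΦ (norm_nonneg U)
            nlinarith [norm_nonneg U, norm_nonneg V]
    have h4 : -(‖U‖ * ‖V‖) ≤ ⟪Φ U, V⟫ := neg_le_of_abs_le h3
    nlinarith [sq_nonneg (‖U‖ - ‖V‖)]
  · -- restriction
    intro x y hxy
    have hΩs := (hΩ.1 x y).mp hxy
    have hnot2 : ∀ x : X, x ∈ X₂ → x ∉ X₁ := fun x hx => Set.disjoint_right.mp hdisj hx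
    have hfmem : ∀ (x : X) (h : x ∈ X₁), f x = k₁ ⟨x, h⟩ := fun x h => dif_pos h
    have hgmem : ∀ (x : X) (h : x ∈ X₂), g x = k₂ ⟨x, h⟩ := fun x h => dif_pos h
    have hf0 : ∀ x : X, x ∈ X₂ → f x = 0 := fun x h => dif_neg (hnot2 x h)
    have hg0 : ∀ x : X, x ∈ X₁ → g x = 0 := fun x h => dif_neg (hnot x h)
    rcases hmem x with hx | hx <;> rcases hmem y with hy | hy
    · have : K x y = ⟪k₁ ⟨x, hx⟩, k₁ ⟨y, hy⟩⟫ := by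
        simp only [hK, hfmem x hx, hfmem y hy, hg0 x hx, hg0 y hy]
        simp
      rw [this, hk₁]
    · have : K x y = ⟪Φ (k₁ ⟨x, hx⟩), k₂ ⟨y, hy⟩⟫ := by
        simp only [hK, hfmem x hx, hgmem y hy, hg0 x hx, hf0 y hy]
        simp
      rw [this, hint x y hx hy hxy]
    · have : K x y = ⟪Φ (k₁ ⟨y, hy⟩), k₂ ⟨x, hx⟩⟫ := by
        simp only [hK, hfmem y hy, hgmem x hx, hg0 y hy, hf0 x hx]
        simp
      rw [this, hint y x hy hx hΩs]
      exact hsymm y x hΩs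
    · have : K x y = ⟪k₂ ⟨x, hx⟩, k₂ ⟨y, hy⟩⟫ := by
        simp only [hK, hgmem x hx, hgmem y hy, hf0 x hx, hf0 y hy]
        simp
      rw [this, hk₂]

set_option maxHeartbeats 1000000 in
lemma exists_contraction_of_gram {H₁ H₂ : Type*}
    [NormedAddCommGroup H₁] [InnerProductSpace ℝ H₁]
    [NormedAddCommGroup H₂] [InnerProductSpace ℝ H₂] [CompleteSpace H₂]
    {n : ℕ} (u : Fin n → H₁) (v : Fin n → H₂) (c : Fin n → Fin n → ℝ)
    (hpsd : ∀ a b : Fin n → ℝ, 0 ≤ ‖∑ i, a i • u i‖ ^ 2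
      + 2 * (∑ i, ∑ j, a i * b j * c i j) + ‖∑ j, b j • v j‖ ^ 2) :
    ∃ (β : H₁ → H₂ → ℝ),
      (∀ x x' y, β (x + x') y = β x y + β x' y) ∧
      (∀ (r : ℝ) x y, β (r • x) y = r * β x y) ∧
      (∀ x y y', β x (y + y') = β x y + β x y') ∧
      (∀ (r : ℝ) x y, β x (r • y) = r * β x y) ∧
      (∀ x y, |β x y| ≤ ‖x‖ * ‖y‖) ∧
      (∀ i j, β (u i) (v j) = c i j) := by
  classical
  -- the coordinate maps
  set A : (Fin n → ℝ) →ₗ[ℝ] H₁ :=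
    { toFun := fun a => ∑ i, a i • u i
      map_add' := by intro a a'; simp [add_smul, Finset.sum_add_distrib]
      map_smul' := by intro r a; simp [smul_smul, Finset.smul_sum] } with hA
  set B : (Fin n → ℝ) →ₗ[ℝ] H₂ :=
    { toFun := fun b => ∑ j, b j • v j
      map_add' := by intro a a'; simp [add_smul, Finset.sum_add_distrib]
      map_smul' := by intro r a; simp [smul_smul, Finset.smul_sum] } with hB
  set C : (Fin n → ℝ) →ₗ[ℝ] (Fin n → ℝ) →ₗ[ℝ] ℝ :=
    LinearMap.mk₂ ℝ (fun a b => ∑ i, ∑ j, a i * b j * c i j)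
      (by intro a a' b; simp [add_mul, Finset.sum_add_distrib])
      (by intro r a b; simp [Finset.mul_sum, mul_assoc])
      (by intro a b b'; simp [mul_add, add_mul, Finset.sum_add_distrib])
      (by intro r a b; simp only [Pi.smul_apply, smul_eq_mul, Finset.mul_sum]
          refine Finset.sum_congr rfl fun i _ => Finset.sum_congr rfl fun j _ => by ring)
    with hC
  have hCS : ∀ a b, |C a b| ≤ ‖A a‖ * ‖B b‖ := by
    intro a b
    have key : ∀ t : ℝ, 0 ≤ ‖A a‖ ^ 2 * (t * t) + (2 * C a b) * t + ‖B b‖ ^ 2 := by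
      intro t
      have := hpsd (t • a) b
      have hAt : ‖∑ i, (t • a) i • u i‖ ^ 2 = ‖A a‖ ^ 2 * (t * t) := by
        have : ∑ i, (t • a) i • u i = t • A a := by
          simp [hA, Finset.smul_sum, smul_smul]
        rw [this, norm_smul]
        simp [Real.norm_eq_abs, mul_pow, sq_abs]
        ring
      have hCt : ∑ i, ∑ j, (t • a) i * b j * c i j = t * C a b := by
        simp only [hC, LinearMap.mk₂_apply, Pi.smul_apply, smul_eq_mul, Finset.mul_sum]
        refine Finset.sum_congr rfl fun i _ => Finset.sum_congr rfl fun j _ => by ring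
      rw [hAt, hCt] at this
      calc (0:ℝ) ≤ ‖A a‖ ^ 2 * (t * t) + 2 * (t * C a b) + ‖∑ j, b j • v j‖ ^ 2 := this
        _ = ‖A a‖ ^ 2 * (t * t) + (2 * C a b) * t + ‖B b‖ ^ 2 := by
            have hnb : ‖∑ j, b j • v j‖ = ‖B b‖ := rfl
            rw [hnb]; ring
    have hd := discrim_le_zero key
    rw [discrim] at hd
    have hsq : (C a b) ^ 2 ≤ (‖A a‖ * ‖B b‖) ^ 2 := by nlinarith
    have h0 : (0:ℝ) ≤ ‖A a‖ * ‖B b‖ := mul_nonneg (norm_nonneg _) (norm_nonneg _)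
    nlinarith [sq_abs (C a b), abs_nonneg (C a b)]
  set E₁ := LinearMap.range A with hE₁
  set E₂ := LinearMap.range B with hE₂
  -- C kills ker A in the first variable
  have hkerA : LinearMap.ker A ≤ LinearMap.ker C := by
    intro a ha
    rw [LinearMap.mem_ker] at ha ⊢
    refine LinearMap.ext fun b => ?_
    rw [LinearMap.zero_apply]
    have := hCS a b
    rw [ha] at this
    simp only [norm_zero, zero_mul] at this
    exact abs_nonpos_iff.mp this
  set C₁ : E₁ →ₗ[ℝ] ((Fin n → ℝ) →ₗ[ℝ] ℝ) :=
    ((LinearMap.ker A).liftQ C hkerA).comp A.quotKerEquivRange.symm.toLinearMap with hC₁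
  have hsymmmk : ∀ a : Fin n → ℝ,
      A.quotKerEquivRange.symm ⟨A a, LinearMap.mem_range_self A a⟩
        = Submodule.Quotient.mk a := by
    intro a
    apply A.quotKerEquivRange.injective
    rw [LinearEquiv.apply_symm_apply]
    exact Subtype.ext (A.quotKerEquivRange_apply_mk a).symm
  have hC₁A : ∀ a : Fin n → ℝ, C₁ ⟨A a, LinearMap.mem_range_self A a⟩ = C a := by
    intro a
    simp only [hC₁, LinearMap.comp_apply, LinearEquiv.coe_coe, hsymmmk a]
    exact Submodule.liftQ_apply _ C a
  have hkerB : LinearMap.ker B ≤ LinearMap.ker C₁.flip := by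
    intro b hb
    rw [LinearMap.mem_ker] at hb ⊢
    refine LinearMap.ext fun e => ?_
    rw [LinearMap.zero_apply]
    obtain ⟨a, ha⟩ := e.2
    have he : e = ⟨A a, LinearMap.mem_range_self A a⟩ := Subtype.ext ha.symm
    rw [LinearMap.flip_apply, he, hC₁A a]
    have := hCS a b
    rw [hb] at this
    simp only [norm_zero, mul_zero] at this
    exact abs_nonpos_iff.mp this
  set D : E₂ →ₗ[ℝ] (E₁ →ₗ[ℝ] ℝ) :=
    ((LinearMap.ker B).liftQ C₁.flip hkerB).comp B.quotKerEquivRange.symm.toLinearMap with hD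
  have hsymmmkB : ∀ b : Fin n → ℝ,
      B.quotKerEquivRange.symm ⟨B b, LinearMap.mem_range_self B b⟩
        = Submodule.Quotient.mk b := by
    intro b
    apply B.quotKerEquivRange.injective
    rw [LinearEquiv.apply_symm_apply]
    exact Subtype.ext (B.quotKerEquivRange_apply_mk b).symm
  have hDapp : ∀ a b : Fin n → ℝ,
      D ⟨B b, LinearMap.mem_range_self B b⟩ ⟨A a, LinearMap.mem_range_self A a⟩ = C a b := by
    intro a b
    simp only [hD, LinearMap.comp_apply, LinearEquiv.coe_coe, hsymmmkB b]
    rw [Submodule.liftQ_apply]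
    rw [LinearMap.flip_apply, hC₁A a]
  have hDbd : ∀ (w : E₂) (e : E₁), |D w e| ≤ ‖e‖ * ‖w‖ := by
    intro w e
    obtain ⟨a, ha⟩ := e.2
    obtain ⟨bb, hbb⟩ := w.2
    have he : e = ⟨A a, LinearMap.mem_range_self A a⟩ := Subtype.ext ha.symm
    have hw : w = ⟨B bb, LinearMap.mem_range_self B bb⟩ := Subtype.ext hbb.symm
    rw [he, hw, hDapp a bb]
    have h1 : ‖(⟨A a, LinearMap.mem_range_self A a⟩ : E₁)‖ = ‖A a‖ := rfl
    have h2 : ‖(⟨B bb, LinearMap.mem_range_self B bb⟩ : E₂)‖ = ‖B bb‖ := rfl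
    rw [h1, h2]
    exact hCS a bb
  -- extend to all of H₁ × H₂ by orthogonal projection
  set P₁ := E₁.orthogonalProjectionOnto with hP₁
  set P₂ := E₂.orthogonalProjectionOnto with hP₂
  refine ⟨fun x y => D (P₂ y) (P₁ x), ?_, ?_, ?_, ?_, ?_, ?_⟩
  · intro x x' y
    show D (P₂ y) (P₁ (x + x')) = D (P₂ y) (P₁ x) + D (P₂ y) (P₁ x')
    rw [map_add, map_add]
  · intro r x y
    show D (P₂ y) (P₁ (r • x)) = r * D (P₂ y) (P₁ x)
    rw [map_smul, map_smul]; rfl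
  · intro x y y'
    show D (P₂ (y + y')) (P₁ x) = D (P₂ y) (P₁ x) + D (P₂ y') (P₁ x)
    rw [map_add, map_add, LinearMap.add_apply]
  · intro r x y
    show D (P₂ (r • y)) (P₁ x) = r * D (P₂ y) (P₁ x)
    rw [map_smul, map_smul, LinearMap.smul_apply]; rfl
  · intro x y
    calc |D (P₂ y) (P₁ x)| ≤ ‖P₁ x‖ * ‖P₂ y‖ := hDbd _ _
      _ ≤ ‖x‖ * ‖y‖ := by
          have hx : ‖P₁ x‖ ≤ ‖x‖ := by
            calc ‖P₁ x‖ ≤ ‖P₁‖ * ‖x‖ := ContinuousLinearMap.le_opNorm _ _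
              _ ≤ 1 * ‖x‖ := by
                  have := Submodule.orthogonalProjectionOnto_norm_le E₁ (𝕜 := ℝ)
                  gcongr
              _ = ‖x‖ := one_mul _
          have hy : ‖P₂ y‖ ≤ ‖y‖ := by
            calc ‖P₂ y‖ ≤ ‖P₂‖ * ‖y‖ := ContinuousLinearMap.le_opNorm _ _
              _ ≤ 1 * ‖y‖ := by
                  have := Submodule.orthogonalProjectionOnto_norm_le E₂ (𝕜 := ℝ)
                  gcongr
              _ = ‖y‖ := one_mul _
          exact mul_le_mul hx hy (norm_nonneg _) (norm_nonneg _)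
  · intro i j
    have hui : A (Pi.single i 1) = u i := by
      simp only [hA, LinearMap.coe_mk, AddHom.coe_mk]
      rw [Finset.sum_eq_single i]
      · simp
      · intro k _ hk; simp [Pi.single_apply, hk]
      · intro h; exact absurd (Finset.mem_univ i) h
    have hvj : B (Pi.single j 1) = v j := by
      simp only [hB, LinearMap.coe_mk, AddHom.coe_mk]
      rw [Finset.sum_eq_single j]
      · simp
      · intro k _ hk; simp [Pi.single_apply, hk]
      · intro h; exact absurd (Finset.mem_univ j) h
    have hmem₁ : u i ∈ E₁ := hui ▸ LinearMap.mem_range_self A _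
    have hmem₂ : v j ∈ E₂ := hvj ▸ LinearMap.mem_range_self B _
    have hp₁ : P₁ (u i) = ⟨u i, hmem₁⟩ :=
      Submodule.orthogonalProjectionOnto_mem_subspace_eq_self (⟨u i, hmem₁⟩ : E₁)
    have hp₂ : P₂ (v j) = ⟨v j, hmem₂⟩ :=
      Submodule.orthogonalProjectionOnto_mem_subspace_eq_self (⟨v j, hmem₂⟩ : E₂)
    show D (P₂ (v j)) (P₁ (u i)) = c i j
    rw [hp₁, hp₂]
    have he : (⟨u i, hmem₁⟩ : E₁) = ⟨A (Pi.single i 1), LinearMap.mem_range_self A _⟩ :=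
      Subtype.ext hui.symm
    have hw : (⟨v j, hmem₂⟩ : E₂) = ⟨B (Pi.single j 1), LinearMap.mem_range_self B _⟩ :=
      Subtype.ext hvj.symm
    rw [he, hw, hDapp]
    simp only [hC, LinearMap.mk₂_apply]
    rw [Finset.sum_eq_single i]
    · rw [Finset.sum_eq_single j]
      · simp
      · intro k _ hk; simp [Pi.single_apply, hk]
      · intro h; exact absurd (Finset.mem_univ j) h
    · intro k _ hk
      apply Finset.sum_eq_zero
      intro l _
      simp [Pi.single_apply, hk]
    · intro h; exact absurd (Finset.mem_univ i) h

/-- Existence criterion for completion on a large domain: `KΩ` admits a completion iff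
for every finite family of points of `Δ = Ω ∩ (X₁ × X₂)` and coefficients `α`, the pairing
with `KΩ` is dominated by the projective tensor norm, expressed via the duality formula as a
supremum over contractions `Φ : H₁ → H₂`. -/
theorem completion_exists_iff_tensor_bound {X H₁ H₂ : Type*}
    [NormedAddCommGroup H₁] [InnerProductSpace ℝ H₁] [CompleteSpace H₁]
    [NormedAddCommGroup H₂] [InnerProductSpace ℝ H₂] [CompleteSpace H₂]
    (X₁ X₂ : Set X) (hcover : X₁ ∪ X₂ = Set.univ) (hdisj : Disjoint X₁ X₂)
    (Ω : Set (X × X)) (hΩ : IsCompletionDomain Ω)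
    (hsq₁ : X₁ ×ˢ X₁ ⊆ Ω) (hsq₂ : X₂ ×ˢ X₂ ⊆ Ω)
    (KΩ : X → X → ℝ) (hsymm : ∀ u v, (u, v) ∈ Ω → KΩ u v = KΩ v u)
    (hker₁ : IsKernel (fun a b : X₁ => KΩ a b))
    (hker₂ : IsKernel (fun a b : X₂ => KΩ a b))
    (k₁ : X₁ → H₁) (hk₁ : ∀ u v : X₁, ⟪k₁ u, k₁ v⟫ = KΩ u v)
    (hd₁ : Dense (Submodule.span ℝ (Set.range k₁) : Set H₁))
    (k₂ : X₂ → H₂) (hk₂ : ∀ u v : X₂, ⟪k₂ u, k₂ v⟫ = KΩ u v)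
    (hd₂ : Dense (Submodule.span ℝ (Set.range k₂) : Set H₂)) :
    (∃ K : X → X → ℝ, IsCompletion Ω KΩ K) ↔
      ∀ (n : ℕ) (xs ys : Fin n → X) (hx : ∀ j, xs j ∈ X₁) (hy : ∀ j, ys j ∈ X₂),
        (∀ j, (xs j, ys j) ∈ Ω) → ∀ α : Fin n → ℝ,
        |∑ j, α j * KΩ (xs j) (ys j)| ≤
          sSup {s : ℝ | ∃ Φ : H₁ →L[ℝ] H₂, ‖Φ‖ ≤ 1 ∧
            s = |∑ j, α j * ⟪Φ (k₁ ⟨xs j, hx j⟩), k₂ ⟨ys j, hy j⟩⟫|} := by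
  classical
  constructor
  · -- forward direction
    rintro ⟨K, hKker, hKres⟩
    intro n xs ys hx hy hΩmem α
    set u : Fin n → H₁ := fun j => k₁ ⟨xs j, hx j⟩ with hu
    set v : Fin n → H₂ := fun j => k₂ ⟨ys j, hy j⟩ with hv
    set c : Fin n → Fin n → ℝ := fun i j => K (xs i) (ys j) with hc
    have hKx : ∀ i j, K (xs i) (xs j) = ⟪u i, u j⟫ := by
      intro i j
      rw [hKres _ _ (hsq₁ (Set.mk_mem_prod (hx i) (hx j)))]
      exact (hk₁ ⟨xs i, hx i⟩ ⟨xs j, hx j⟩).symm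
    have hKy : ∀ i j, K (ys i) (ys j) = ⟪v i, v j⟫ := by
      intro i j
      rw [hKres _ _ (hsq₂ (Set.mk_mem_prod (hy i) (hy j)))]
      exact (hk₂ ⟨ys i, hy i⟩ ⟨ys j, hy j⟩).symm
    have hpsd : ∀ a b : Fin n → ℝ, 0 ≤ ‖∑ i, a i • u i‖ ^ 2
        + 2 * (∑ i, ∑ j, a i * b j * c i j) + ‖∑ j, b j • v j‖ ^ 2 := by
      intro a b
      have h0 := hKker.2 (n + n) (Fin.append a b) (Fin.append xs ys)
      have hsplit : ∑ i, ∑ j, (Fin.append a b) i * (Fin.append a b) j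
            * K ((Fin.append xs ys) i) ((Fin.append xs ys) j)
          = (∑ i, ∑ j, a i * a j * K (xs i) (xs j))
            + (∑ i, ∑ j, a i * b j * K (xs i) (ys j))
            + ((∑ i, ∑ j, b i * a j * K (ys i) (xs j))
            + (∑ i, ∑ j, b i * b j * K (ys i) (ys j))) := by
        rw [Fin.sum_univ_add]
        congr 1
        · rw [← Finset.sum_add_distrib]
          refine Finset.sum_congr rfl fun i _ => ?_
          rw [Fin.sum_univ_add]
          simp only [Fin.append_left, Fin.append_right]
        · rw [← Finset.sum_add_distrib]
          refine Finset.sum_congr rfl fun i _ => ?_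
          rw [Fin.sum_univ_add]
          simp only [Fin.append_left, Fin.append_right]
      rw [hsplit] at h0
      have e1 : ∑ i, ∑ j, a i * a j * K (xs i) (xs j) = ‖∑ i, a i • u i‖ ^ 2 := by
        rw [← real_inner_self_eq_norm_sq, sum_inner]
        refine Finset.sum_congr rfl fun i _ => ?_
        rw [inner_sum]
        refine Finset.sum_congr rfl fun j _ => ?_
        rw [real_inner_smul_left, real_inner_smul_right, hKx i j]; ring
      have e4 : ∑ i, ∑ j, b i * b j * K (ys i) (ys j) = ‖∑ j, b j • v j‖ ^ 2 := by
        rw [← real_inner_self_eq_norm_sq, sum_inner]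
        refine Finset.sum_congr rfl fun i _ => ?_
        rw [inner_sum]
        refine Finset.sum_congr rfl fun j _ => ?_
        rw [real_inner_smul_left, real_inner_smul_right, hKy i j]; ring
      have e3 : ∑ i, ∑ j, b i * a j * K (ys i) (xs j) = ∑ i, ∑ j, a i * b j * c i j := by
        rw [Finset.sum_comm]
        refine Finset.sum_congr rfl fun j _ => Finset.sum_congr rfl fun i _ => ?_
        rw [hKker.1 (ys i) (xs j)]
        simp only [hc]; ring
      rw [e1, e4, e3] at h0
      calc (0:ℝ) ≤ ‖∑ i, a i • u i‖ ^ 2 + (∑ i, ∑ j, a i * b j * c i j)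
            + ((∑ i, ∑ j, a i * b j * c i j) + ‖∑ j, b j • v j‖ ^ 2) := h0
        _ = ‖∑ i, a i • u i‖ ^ 2 + 2 * (∑ i, ∑ j, a i * b j * c i j)
            + ‖∑ j, b j • v j‖ ^ 2 := by ring
    obtain ⟨β, hβ1, hβ2, hβ3, hβ4, hβ5, hβ6⟩ := exists_contraction_of_gram u v c hpsd
    obtain ⟨Φ, hΦn, hΦi⟩ := exists_contraction_of_bilinear β hβ1 hβ2 hβ3 hβ4 hβ5
    have hval : ∀ j, ⟪Φ (u j), v j⟫ = KΩ (xs j) (ys j) := by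
      intro j
      rw [hΦi, hβ6]
      exact hKres _ _ (hΩmem j)
    have hmemset : |∑ j, α j * KΩ (xs j) (ys j)| ∈
        {s : ℝ | ∃ Φ : H₁ →L[ℝ] H₂, ‖Φ‖ ≤ 1 ∧
          s = |∑ j, α j * ⟪Φ (k₁ ⟨xs j, hx j⟩), k₂ ⟨ys j, hy j⟩⟫|} := by
      refine ⟨Φ, hΦn, ?_⟩
      congr 1
      exact Finset.sum_congr rfl fun j _ => by rw [hval j]
    have hbdd : BddAbove {s : ℝ | ∃ Φ : H₁ →L[ℝ] H₂, ‖Φ‖ ≤ 1 ∧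
        s = |∑ j, α j * ⟪Φ (k₁ ⟨xs j, hx j⟩), k₂ ⟨ys j, hy j⟩⟫|} := by
      refine ⟨∑ j, |α j| * (‖k₁ ⟨xs j, hx j⟩‖ * ‖k₂ ⟨ys j, hy j⟩‖), ?_⟩
      rintro s ⟨Ψ, hΨ, rfl⟩
      calc |∑ j, α j * ⟪Ψ (k₁ ⟨xs j, hx j⟩), k₂ ⟨ys j, hy j⟩⟫|
          ≤ ∑ j, |α j * ⟪Ψ (k₁ ⟨xs j, hx j⟩), k₂ ⟨ys j, hy j⟩⟫| :=
            Finset.abs_sum_le_sum_abs _ _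
        _ ≤ ∑ j, |α j| * (‖k₁ ⟨xs j, hx j⟩‖ * ‖k₂ ⟨ys j, hy j⟩‖) := by
            refine Finset.sum_le_sum fun j _ => ?_
            rw [abs_mul]
            refine mul_le_mul_of_nonneg_left ?_ (abs_nonneg _)
            calc |⟪Ψ (k₁ ⟨xs j, hx j⟩), k₂ ⟨ys j, hy j⟩⟫|
                ≤ ‖Ψ (k₁ ⟨xs j, hx j⟩)‖ * ‖k₂ ⟨ys j, hy j⟩‖ := abs_real_inner_le_norm _ _
              _ ≤ ‖k₁ ⟨xs j, hx j⟩‖ * ‖k₂ ⟨ys j, hy j⟩‖ := by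
                  refine mul_le_mul_of_nonneg_right ?_ (norm_nonneg _)
                  calc ‖Ψ (k₁ ⟨xs j, hx j⟩)‖ ≤ ‖Ψ‖ * ‖k₁ ⟨xs j, hx j⟩‖ := Ψ.le_opNorm _
                    _ ≤ 1 * ‖k₁ ⟨xs j, hx j⟩‖ :=
                        mul_le_mul_of_nonneg_right hΨ (norm_nonneg _)
                    _ = ‖k₁ ⟨xs j, hx j⟩‖ := one_mul _
    exact le_csSup hbdd hmemset
  · -- backward direction
    intro hyp
    -- the subtype of cross pairs in the domain
    let Δs := {p : X × X // p ∈ Ω ∧ p.1 ∈ X₁ ∧ p.2 ∈ X₂}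
    -- Step 1: approximate interpolation on finite subsets
    have key : ∀ (F : Finset Δs) (ε : ℝ), 0 < ε → ∃ Φ : H₁ →L[ℝ] H₂, ‖Φ‖ ≤ 1 ∧
        ∀ q : Δs, q ∈ F →
          |⟪Φ (k₁ ⟨q.1.1, q.2.2.1⟩), k₂ ⟨q.1.2, q.2.2.2⟩⟫ - KΩ q.1.1 q.1.2| ≤ ε := by
      intro F ε hε
      set n := F.card with hn
      set e := F.equivFin with he
      set xs : Fin n → X := fun i => ((e.symm i : Δs) : X × X).1 with hxs
      set ys : Fin n → X := fun i => ((e.symm i : Δs) : X × X).2 with hys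
      have hx : ∀ i, xs i ∈ X₁ := fun i => (e.symm i).1.2.2.1
      have hy : ∀ i, ys i ∈ X₂ := fun i => (e.symm i).1.2.2.2
      have hΩm : ∀ i, (xs i, ys i) ∈ Ω := fun i => (e.symm i).1.2.1
      set Im : Set (Fin n → ℝ) := {w | ∃ Φ : H₁ →L[ℝ] H₂, ‖Φ‖ ≤ 1 ∧
        w = fun j => ⟪Φ (k₁ ⟨xs j, hx j⟩), k₂ ⟨ys j, hy j⟩⟫} with hIm
    -- convexity of the image
      have hconv : Convex ℝ Im := by
        rintro w₁ ⟨Φ₁, hΦ₁, rfl⟩ w₂ ⟨Φ₂, hΦ₂, rfl⟩ s t hs ht hst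
        refine ⟨s • Φ₁ + t • Φ₂, ?_, ?_⟩
        · have h1 : ‖s • Φ₁‖ ≤ s * ‖Φ₁‖ := by
            simpa [Real.norm_eq_abs, abs_of_nonneg hs] using norm_smul_le s Φ₁
          have h2 : ‖t • Φ₂‖ ≤ t * ‖Φ₂‖ := by
            simpa [Real.norm_eq_abs, abs_of_nonneg ht] using norm_smul_le t Φ₂
          calc ‖s • Φ₁ + t • Φ₂‖ ≤ ‖s • Φ₁‖ + ‖t • Φ₂‖ := norm_add_le _ _
            _ ≤ s * ‖Φ₁‖ + t * ‖Φ₂‖ := add_le_add h1 h2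
            _ ≤ s * 1 + t * 1 := add_le_add (mul_le_mul_of_nonneg_left hΦ₁ hs)
                  (mul_le_mul_of_nonneg_left hΦ₂ ht)
            _ = 1 := by rw [mul_one, mul_one, hst]
        · funext j
          simp only [Pi.add_apply, Pi.smul_apply, smul_eq_mul,
            ContinuousLinearMap.add_apply, ContinuousLinearMap.coe_smul', Pi.smul_apply]
          rw [inner_add_left, real_inner_smul_left, real_inner_smul_left]
      set vv : Fin n → ℝ := fun j => KΩ (xs j) (ys j) with hvv
      have hvC : vv ∈ closure Im := by
        by_contra hvC
        obtain ⟨f, s, hfs, hsv⟩ := geometric_hahn_banach_closed_point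
          hconv.closure isClosed_closure hvC
        set α : Fin n → ℝ := fun i => f (fun j => if i = j then 1 else 0) with hα
        have hf : ∀ w : Fin n → ℝ, f w = ∑ i, w i * α i := by
          intro w
          have h := LinearMap.pi_apply_eq_sum_univ
            (f.toLinearMap : (Fin n → ℝ) →ₗ[ℝ] ℝ) w
          simpa [smul_eq_mul] using h
        have hbound := hyp n xs ys hx hy hΩm α
        -- every element of the sup set is < s
        have hSle : ∀ r ∈ {r : ℝ | ∃ Φ : H₁ →L[ℝ] H₂, ‖Φ‖ ≤ 1 ∧
            r = |∑ j, α j * ⟪Φ (k₁ ⟨xs j, hx j⟩), k₂ ⟨ys j, hy j⟩⟫|}, r ≤ s := by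
          rintro r ⟨Φ, hΦ, rfl⟩
          set w : Fin n → ℝ := fun j => ⟪Φ (k₁ ⟨xs j, hx j⟩), k₂ ⟨ys j, hy j⟩⟫ with hw
          have hwIm : w ∈ Im := ⟨Φ, hΦ, rfl⟩
          have hwIm' : -w ∈ Im := by
            refine ⟨-Φ, ?_, ?_⟩
            · rw [norm_neg]; exact hΦ
            · funext j
              simp only [Pi.neg_apply, hw, ContinuousLinearMap.neg_apply, inner_neg_left]
          have h1 : f w < s := hfs w (subset_closure hwIm)
          have h2 : f (-w) < s := hfs (-w) (subset_closure hwIm')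
          have h2' : -f w < s := by rwa [map_neg] at h2
          have heq : ∑ j, α j * w j = f w := by
            rw [hf w]
            exact Finset.sum_congr rfl fun j _ => mul_comm _ _
          rw [heq]
          rcases abs_cases (f w) with ⟨h, _⟩ | ⟨h, _⟩
          · rw [h]; exact le_of_lt h1
          · rw [h]; exact le_of_lt h2'
        have hne : {r : ℝ | ∃ Φ : H₁ →L[ℝ] H₂, ‖Φ‖ ≤ 1 ∧
            r = |∑ j, α j * ⟪Φ (k₁ ⟨xs j, hx j⟩), k₂ ⟨ys j, hy j⟩⟫|}.Nonempty := by
          refine ⟨_, (0 : H₁ →L[ℝ] H₂), by simp, rfl⟩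
        have hsup : sSup {r : ℝ | ∃ Φ : H₁ →L[ℝ] H₂, ‖Φ‖ ≤ 1 ∧
            r = |∑ j, α j * ⟪Φ (k₁ ⟨xs j, hx j⟩), k₂ ⟨ys j, hy j⟩⟫|} ≤ s :=
          csSup_le hne hSle
        have hfv : f vv = ∑ j, α j * KΩ (xs j) (ys j) := by
          rw [hf vv]
          exact Finset.sum_congr rfl fun j _ => mul_comm _ _
        have : f vv ≤ s := by
          calc f vv = ∑ j, α j * KΩ (xs j) (ys j) := hfv
            _ ≤ |∑ j, α j * KΩ (xs j) (ys j)| := le_abs_self _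
            _ ≤ _ := hbound
            _ ≤ s := hsup
        linarith
      rw [Metric.mem_closure_iff] at hvC
      obtain ⟨w, hwIm, hdist⟩ := hvC ε hε
      obtain ⟨Φ, hΦ, rfl⟩ := hwIm
      refine ⟨Φ, hΦ, ?_⟩
      intro q hq
      have hqi : e.symm (e ⟨q, hq⟩) = ⟨q, hq⟩ := Equiv.symm_apply_apply e ⟨q, hq⟩
      have hd := dist_le_pi_dist vv
        (fun j => ⟪Φ (k₁ ⟨xs j, hx j⟩), k₂ ⟨ys j, hy j⟩⟫) (e ⟨q, hq⟩)
      have hd2 : |⟪Φ (k₁ ⟨xs (e ⟨q, hq⟩), hx _⟩), k₂ ⟨ys (e ⟨q, hq⟩), hy _⟩⟫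
          - KΩ (xs (e ⟨q, hq⟩)) (ys (e ⟨q, hq⟩))| ≤ ε := by
        have h3 := le_trans hd (le_of_lt hdist)
        simp only [Real.dist_eq] at h3
        rw [abs_sub_comm]
        exact h3
      have hxq : xs (e ⟨q, hq⟩) = q.1.1 := by rw [hxs]; simp only [hqi]
      have hyq : ys (e ⟨q, hq⟩) = q.1.2 := by rw [hys]; simp only [hqi]
      have hsub1 : (⟨xs (e ⟨q, hq⟩), hx _⟩ : X₁) = ⟨q.1.1, q.2.2.1⟩ := Subtype.ext hxq
      have hsub2 : (⟨ys (e ⟨q, hq⟩), hy _⟩ : X₂) = ⟨q.1.2, q.2.2.2⟩ := Subtype.ext hyq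
      rw [hsub1, hsub2, hxq, hyq] at hd2
      exact hd2
    -- Step 2: compactness argument to get a single contraction
    set T : Set ((H₁ × H₂) → ℝ) :=
      Set.univ.pi (fun p => Set.Icc (-(‖p.1‖ * ‖p.2‖)) (‖p.1‖ * ‖p.2‖)) with hT
    have hTcomp : IsCompact T := isCompact_univ_pi fun p => isCompact_Icc
    have hTclosed : IsClosed T := isClosed_set_pi fun p _ => isClosed_Icc
    set G : Set ((H₁ × H₂) → ℝ) := {b | ∃ Φ : H₁ →L[ℝ] H₂, ‖Φ‖ ≤ 1 ∧
      b = fun p => ⟪Φ p.1, p.2⟫} with hG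
    have hGT : G ⊆ T := by
      rintro b ⟨Φ, hΦ, rfl⟩
      intro p _
      have habs : |⟪Φ p.1, p.2⟫| ≤ ‖p.1‖ * ‖p.2‖ := by
        calc |⟪Φ p.1, p.2⟫| ≤ ‖Φ p.1‖ * ‖p.2‖ := abs_real_inner_le_norm _ _
          _ ≤ ‖p.1‖ * ‖p.2‖ := by
              refine mul_le_mul_of_nonneg_right ?_ (norm_nonneg _)
              calc ‖Φ p.1‖ ≤ ‖Φ‖ * ‖p.1‖ := Φ.le_opNorm _
                _ ≤ 1 * ‖p.1‖ := mul_le_mul_of_nonneg_right hΦ (norm_nonneg _)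
                _ = ‖p.1‖ := one_mul _
      exact Set.mem_Icc.mpr (abs_le.mp habs)
    have hS'T : closure G ⊆ T := closure_minimal hGT hTclosed
    have hS'comp : IsCompact (closure G) :=
      hTcomp.of_isClosed_subset isClosed_closure hS'T
    -- the family of closed constraint sets
    set Z : (Finset Δs × ℕ) → Set ((H₁ × H₂) → ℝ) := fun Fm =>
      {b ∈ closure G | ∀ q : Δs, q ∈ Fm.1 →
        |b (k₁ ⟨q.1.1, q.2.2.1⟩, k₂ ⟨q.1.2, q.2.2.2⟩) - KΩ q.1.1 q.1.2|
          ≤ 1 / (Fm.2 + 1)} with hZ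
    have hZeq : ∀ Fm, Z Fm = closure G ∩ ⋂ q ∈ Fm.1,
        {b : (H₁ × H₂) → ℝ |
          |b (k₁ ⟨q.1.1, q.2.2.1⟩, k₂ ⟨q.1.2, q.2.2.2⟩) - KΩ q.1.1 q.1.2|
            ≤ 1 / (Fm.2 + 1)} := by
      intro Fm
      ext b
      simp only [hZ, Set.mem_setOf_eq, Set.mem_inter_iff, Set.mem_iInter]
    have hZclosed : ∀ Fm, IsClosed (Z Fm) := by
      intro Fm
      rw [hZeq]
      refine IsClosed.inter isClosed_closure (isClosed_biInter fun q _ => ?_)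
      have : {b : (H₁ × H₂) → ℝ |
          |b (k₁ ⟨q.1.1, q.2.2.1⟩, k₂ ⟨q.1.2, q.2.2.2⟩) - KΩ q.1.1 q.1.2|
            ≤ 1 / (Fm.2 + 1)}
          = (fun b : (H₁ × H₂) → ℝ => b (k₁ ⟨q.1.1, q.2.2.1⟩, k₂ ⟨q.1.2, q.2.2.2⟩))
            ⁻¹' (Metric.closedBall (KΩ q.1.1 q.1.2) (1 / (Fm.2 + 1))) := by
        ext b
        simp [Metric.mem_closedBall, Real.dist_eq]
      rw [this]
      exact IsClosed.preimage (continuous_apply _) Metric.isClosed_closedBall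
    have hZcomp : ∀ Fm, IsCompact (Z Fm) := by
      intro Fm
      refine hTcomp.of_isClosed_subset (hZclosed Fm) ?_
      intro b hb
      exact hS'T hb.1
    have hZne : ∀ Fm, (Z Fm).Nonempty := by
      intro Fm
      have hpos : (0:ℝ) < 1 / (Fm.2 + 1) := by positivity
      obtain ⟨Φ, hΦ, hΦq⟩ := key Fm.1 (1 / (Fm.2 + 1)) hpos
      refine ⟨fun p => ⟪Φ p.1, p.2⟫, subset_closure ⟨Φ, hΦ, rfl⟩, ?_⟩
      intro q hq
      exact hΦq q hq
    have hZdir : Directed (· ⊇ ·) Z := by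
      intro Fm Fm'
      refine ⟨(Fm.1 ∪ Fm'.1, max Fm.2 Fm'.2), ?_, ?_⟩
      · intro b hb
        refine ⟨hb.1, fun q hq => ?_⟩
        refine le_trans (hb.2 q (Finset.mem_union_left _ hq)) ?_
        apply one_div_le_one_div_of_le
        · positivity
        · have : (Fm.2 : ℝ) ≤ (max Fm.2 Fm'.2 : ℕ) := by
            exact_mod_cast le_max_left _ _
          linarith
      · intro b hb
        refine ⟨hb.1, fun q hq => ?_⟩
        refine le_trans (hb.2 q (Finset.mem_union_right _ hq)) ?_
        apply one_div_le_one_div_of_le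
        · positivity
        · have : (Fm'.2 : ℝ) ≤ (max Fm.2 Fm'.2 : ℕ) := by
            exact_mod_cast le_max_right _ _
          linarith
    obtain ⟨b, hb⟩ := IsCompact.nonempty_iInter_of_directed_nonempty_isCompact_isClosed
      Z hZdir hZne hZcomp hZclosed
    simp only [Set.mem_iInter] at hb
    have hbG : b ∈ closure G := (hb (∅, 0)).1
    -- exact interpolation
    have hbint : ∀ q : Δs,
        b (k₁ ⟨q.1.1, q.2.2.1⟩, k₂ ⟨q.1.2, q.2.2.2⟩) = KΩ q.1.1 q.1.2 := by
      intro q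
      set d := b (k₁ ⟨q.1.1, q.2.2.1⟩, k₂ ⟨q.1.2, q.2.2.2⟩) - KΩ q.1.1 q.1.2 with hd
      have hdle : ∀ m : ℕ, |d| ≤ 1 / (m + 1) := by
        intro m
        exact (hb ({q}, m)).2 q (Finset.mem_singleton_self q)
      have : |d| ≤ 0 := by
        by_contra hcon
        push_neg at hcon
        obtain ⟨m, hm⟩ := exists_nat_one_div_lt hcon
        exact absurd (hdle m) (not_le.mpr hm)
      have : d = 0 := abs_nonpos_iff.mp this
      linarith [this, sub_eq_zero.mp this]
    -- bilinearity from the closure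
    have hclosed_prop : ∀ (Q : Set ((H₁ × H₂) → ℝ)), IsClosed Q → G ⊆ Q → b ∈ Q :=
      fun Q hQc hGQ => closure_minimal hGQ hQc hbG
    have hadd₁ : ∀ u u' v, b (u + u', v) = b (u, v) + b (u', v) := by
      intro u u' v
      refine hclosed_prop {b | b (u + u', v) = b (u, v) + b (u', v)} ?_ ?_
      · exact isClosed_eq (continuous_apply _)
          ((continuous_apply ((u, v) : H₁ × H₂)).add (continuous_apply ((u', v) : H₁ × H₂)))
      · rintro c ⟨Φ, hΦ, rfl⟩
        simp only [Set.mem_setOf_eq, map_add]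
        exact inner_add_left _ _ _
    have hsmul₁ : ∀ (r : ℝ) u v, b (r • u, v) = r * b (u, v) := by
      intro r u v
      refine hclosed_prop {b | b (r • u, v) = r * b (u, v)} ?_ ?_
      · exact isClosed_eq (continuous_apply _)
          (continuous_const.mul (continuous_apply ((u, v) : H₁ × H₂)))
      · rintro c ⟨Φ, hΦ, rfl⟩
        simp only [Set.mem_setOf_eq, map_smul]
        exact real_inner_smul_left _ _ _
    have hadd₂ : ∀ u v v', b (u, v + v') = b (u, v) + b (u, v') := by
      intro u v v'
      refine hclosed_prop {b | b (u, v + v') = b (u, v) + b (u, v')} ?_ ?_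
      · exact isClosed_eq (continuous_apply _)
          ((continuous_apply ((u, v) : H₁ × H₂)).add (continuous_apply ((u, v') : H₁ × H₂)))
      · rintro c ⟨Φ, hΦ, rfl⟩
        simp only [Set.mem_setOf_eq]
        exact inner_add_right _ _ _
    have hsmul₂ : ∀ (r : ℝ) u v, b (u, r • v) = r * b (u, v) := by
      intro r u v
      refine hclosed_prop {b | b (u, r • v) = r * b (u, v)} ?_ ?_
      · exact isClosed_eq (continuous_apply _)
          (continuous_const.mul (continuous_apply ((u, v) : H₁ × H₂)))
      · rintro c ⟨Φ, hΦ, rfl⟩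
        simp only [Set.mem_setOf_eq]
        exact real_inner_smul_right _ _ _
    have hbd : ∀ u v, |b (u, v)| ≤ ‖u‖ * ‖v‖ := by
      intro u v
      have := hS'T hbG (u, v) (Set.mem_univ _)
      rw [Set.mem_Icc] at this
      exact abs_le.mpr this
    obtain ⟨Φ, hΦn, hΦv⟩ := exists_contraction_of_bilinear (fun u v => b (u, v))
      (fun u u' v => hadd₁ u u' v) (fun r u v => hsmul₁ r u v)
      (fun u v v' => hadd₂ u v v') (fun r u v => hsmul₂ r u v)
      (fun u v => hbd u v)
    refine completion_of_contraction X₁ X₂ hcover hdisj Ω hΩ KΩ hsymm k₁ hk₁ k₂ hk₂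
      Φ hΦn ?_
    intro x y hxm hym hxy
    rw [hΦv]
    exact hbint ⟨(x, y), hxy, hxm, hym⟩
end

section
/- Let X = [0,1] ⊆ ℝ, let 0 < t₀ < 1, and let b : [0, t₀] → ℝ be strictly increasing with b(t) > t for all t ∈ [0, t₀] and b(t₀) = 1; set I_t = [t, b(t)] and Ω = ⋃_{t ∈ [0,t₀]} (I_t × I_t) (a regular domain on [0,1]). Assume moreover t₀ ≤ b(0), so that Ω is large, i.e., ([0,b(0)] × [0,b(0)]) ∪ ([t₀,1] × [t₀,1]) ⊆ Ω covers via two squares whose union of sides is [0,1]. Then every partially reproducing kernel K_Ω on Ω admits a completion, i.e., there is a reproducing kernel K on [0,1] with K|_Ω = K_Ω. -/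
/-- A reproducing kernel on the subset `S ⊆ ℝ`, for a function defined on all of `ℝ × ℝ`. -/
def IsKernelOn (S : Set ℝ) (K : ℝ → ℝ → ℝ) : Prop :=
  (∀ x ∈ S, ∀ y ∈ S, K x y = K y x) ∧
  ∀ (n : ℕ) (α : Fin n → ℝ) (x : Fin n → ℝ), (∀ i, x i ∈ S) →
    0 ≤ ∑ i, ∑ j, α i * α j * K (x i) (x j)

/-- The regular domain `Ω = ⋃_{t ∈ [0, t₀]} I_t × I_t` with `I_t = [t, b t]`. -/
def regularDomain (t₀ : ℝ) (b : ℝ → ℝ) : Set (ℝ × ℝ) :=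
  ⋃ t ∈ Set.Icc 0 t₀, (Set.Icc t (b t)) ×ˢ (Set.Icc t (b t))

open scoped RealInnerProductSpace BigOperators

namespace RKCompletion

variable {t₀ : ℝ} {b : ℝ → ℝ}

lemma mem_rd {u v : ℝ} :
    (u, v) ∈ regularDomain t₀ b ↔
      ∃ t, 0 ≤ t ∧ t ≤ t₀ ∧ t ≤ u ∧ u ≤ b t ∧ t ≤ v ∧ v ≤ b t := by
  constructor
  · intro h
    simp only [regularDomain, Set.mem_iUnion, Set.mem_prod, Set.mem_Icc, exists_prop] at h
    obtain ⟨t, ⟨h0, h1⟩, ⟨h2, h3⟩, h4, h5⟩ := h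
    exact ⟨t, h0, h1, h2, h3, h4, h5⟩
  · rintro ⟨t, h0, h1, h2, h3, h4, h5⟩
    simp only [regularDomain, Set.mem_iUnion, Set.mem_prod, Set.mem_Icc, exists_prop]
    exact ⟨t, ⟨h0, h1⟩, ⟨h2, h3⟩, h4, h5⟩

lemma rd_symm {u v : ℝ} (h : (u, v) ∈ regularDomain t₀ b) :
    (v, u) ∈ regularDomain t₀ b := by
  rw [mem_rd] at h ⊢
  obtain ⟨t, h1, h2, h3, h4, h5, h6⟩ := h
  exact ⟨t, h1, h2, h5, h6, h3, h4⟩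

lemma pair_sub {u v : ℝ} (h : (u, v) ∈ regularDomain t₀ b) :
    ({u, v} : Set ℝ) ×ˢ ({u, v} : Set ℝ) ⊆ regularDomain t₀ b := by
  obtain ⟨t, ht0, ht1, h1, h2, h3, h4⟩ := mem_rd.1 h
  rintro ⟨a, c⟩ ⟨ha, hc⟩
  have key : ∀ w ∈ ({u, v} : Set ℝ), t ≤ w ∧ w ≤ b t := by
    rintro w (rfl | rfl)
    exacts [⟨h1, h2⟩, ⟨h3, h4⟩]
  obtain ⟨ha1, ha2⟩ := key a ha
  obtain ⟨hc1, hc2⟩ := key c hc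
  exact mem_rd.2 ⟨t, ht0, ht1, ha1, ha2, hc1, hc2⟩

lemma diag_mem (ht₀ : 0 < t₀) (hbt : ∀ t ∈ Set.Icc 0 t₀, t < b t) (hb1 : b t₀ = 1)
    {u : ℝ} (h0 : 0 ≤ u) (h1 : u ≤ 1) : (u, u) ∈ regularDomain t₀ b := by
  rcases le_total u t₀ with h | h
  · exact mem_rd.2 ⟨u, h0, h, le_rfl, (hbt u ⟨h0, h⟩).le, le_rfl, (hbt u ⟨h0, h⟩).le⟩
  · refine mem_rd.2 ⟨t₀, ht₀.le, le_rfl, h, ?_, h, ?_⟩ <;> rw [hb1] <;> exact h1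

section KernelFacts

variable {KΩ : ℝ → ℝ → ℝ}
variable (hpart : ∀ A : Set ℝ, A ×ˢ A ⊆ regularDomain t₀ b → IsKernelOn A KΩ)

include hpart

lemma kern_symm {u v : ℝ} (h : (u, v) ∈ regularDomain t₀ b) : KΩ u v = KΩ v u :=
  (hpart _ (pair_sub h)).1 u (by simp) v (by simp)

lemma diag_nonneg {u : ℝ} (h : (u, u) ∈ regularDomain t₀ b) : 0 ≤ KΩ u u := by
  have hK := hpart {u, u} (pair_sub h)
  have := hK.2 1 (fun _ => 1) (fun _ => u) (fun i => by simp)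
  simpa using this

lemma cs_bound {u v : ℝ} (h : (u, v) ∈ regularDomain t₀ b) :
    |KΩ u v| ≤ Real.sqrt (KΩ u u) * Real.sqrt (KΩ v v) := by
  have hK := hpart {u, v} (pair_sub h)
  have hsymm : KΩ v u = KΩ u v := (kern_symm hpart h).symm
  have huu : 0 ≤ KΩ u u := by
    have := hK.2 1 (fun _ => 1) (fun _ => u) (fun i => by simp)
    simpa using this
  have hvv : 0 ≤ KΩ v v := by
    have := hK.2 1 (fun _ => 1) (fun _ => v) (fun i => by simp)
    simpa using this
  have h2 : ∀ s : ℝ, 0 ≤ KΩ u u * (s * s) + (2 * KΩ u v) * s + KΩ v v := by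
    intro s
    have := hK.2 2 ![s, 1] ![u, v] (by intro i; fin_cases i <;> simp)
    simp only [Fin.sum_univ_two, Matrix.cons_val_zero, Matrix.cons_val_one, Matrix.head_cons] at this
    rw [hsymm] at this
    nlinarith [this]
  have hd := discrim_le_zero h2
  have hsq : (KΩ u v) ^ 2 ≤ KΩ u u * KΩ v v := by
    simp only [discrim] at hd
    nlinarith [hd]
  calc |KΩ u v| = Real.sqrt ((KΩ u v) ^ 2) := (Real.sqrt_sq_eq_abs _).symm
    _ ≤ Real.sqrt (KΩ u u * KΩ v v) := Real.sqrt_le_sqrt hsq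
    _ = Real.sqrt (KΩ u u) * Real.sqrt (KΩ v v) := Real.sqrt_mul huu _

end KernelFacts

/-- Packaging of the PSD hypothesis for a finite family together with one extra point. -/
lemma psd_ext {A : Set ℝ} {Kf : ℝ → ℝ → ℝ} (hK : IsKernelOn A Kf) {m : ℕ}
    (S : Finset (Fin m)) (y : Fin m → ℝ) (z : ℝ)
    (hyA : ∀ p ∈ S, y p ∈ A) (hzA : z ∈ A) (α : Fin m → ℝ) (s : ℝ) :
    0 ≤ (∑ p ∈ S, ∑ q ∈ S, α p * α q * Kf (y p) (y q))
        + 2 * s * (∑ p ∈ S, α p * Kf (y p) z) + s ^ 2 * Kf z z := by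
  classical
  set y' : Fin m → ℝ := fun i => if i ∈ S then y i else z with hy'
  set a' : Fin m → ℝ := fun i => if i ∈ S then α i else 0 with ha'
  have hy'A : ∀ i, y' i ∈ A := by
    intro i
    simp only [hy']
    split_ifs with h
    exacts [hyA i h, hzA]
  have hmem : ∀ i : Fin (m + 1), (Fin.snoc y' z : Fin (m+1) → ℝ) i ∈ A := by
    intro i
    induction i using Fin.lastCases with
    | last => simpa using hzA
    | cast i => simpa using hy'A i
  have h := hK.2 (m + 1) ((Fin.snoc a' s : Fin (m+1) → ℝ)) ((Fin.snoc y' z : Fin (m+1) → ℝ)) hmem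
  simp only [Fin.sum_univ_castSucc, Fin.snoc_castSucc, Fin.snoc_last] at h
  rw [Finset.sum_add_distrib] at h
  have e1 : (∑ i, ∑ j, a' i * a' j * Kf (y' i) (y' j))
      = ∑ p ∈ S, ∑ q ∈ S, α p * α q * Kf (y p) (y q) := by
    have einner : ∀ i : Fin m, (∑ j, a' i * a' j * Kf (y' i) (y' j))
        = if i ∈ S then ∑ q ∈ S, α i * α q * Kf (y i) (y q) else 0 := by
      intro i
      by_cases hi : i ∈ S
      · simp only [hi, if_true]
        have hterm : ∀ j : Fin m, a' i * a' j * Kf (y' i) (y' j)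
            = if j ∈ S then α i * α j * Kf (y i) (y j) else 0 := by
          intro j
          by_cases hj : j ∈ S <;> simp [ha', hy', hi, hj]
        rw [Finset.sum_congr rfl fun j _ => hterm j, Finset.sum_ite_mem, Finset.univ_inter]
      · simp [ha', hi]
    rw [Finset.sum_congr rfl fun i _ => einner i, Finset.sum_ite_mem, Finset.univ_inter]
  have e2 : (∑ i, a' i * s * Kf (y' i) z) = ∑ p ∈ S, α p * s * Kf (y p) z := by
    have hterm : ∀ i : Fin m, a' i * s * Kf (y' i) z
        = if i ∈ S then α i * s * Kf (y i) z else 0 := by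
      intro i
      by_cases hi : i ∈ S <;> simp [ha', hy', hi]
    rw [Finset.sum_congr rfl fun i _ => hterm i, Finset.sum_ite_mem, Finset.univ_inter]
  have e3 : (∑ j, s * a' j * Kf z (y' j)) = ∑ p ∈ S, α p * s * Kf (y p) z := by
    have hterm : ∀ j : Fin m, s * a' j * Kf z (y' j)
        = if j ∈ S then α j * s * Kf (y j) z else 0 := by
      intro j
      by_cases hj : j ∈ S
      · simp only [ha', hy', hj, if_true]
        rw [hK.1 z hzA (y j) (hyA j hj)]
        ring
      · simp [ha', hj]
    rw [Finset.sum_congr rfl fun j _ => hterm j, Finset.sum_ite_mem, Finset.univ_inter]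
  rw [e1, e2, e3] at h
  have e4 : (∑ p ∈ S, α p * s * Kf (y p) z) = s * ∑ p ∈ S, α p * Kf (y p) z := by
    rw [Finset.mul_sum]
    exact Finset.sum_congr rfl fun p _ => by ring
  rw [e4] at h
  nlinarith [h]

lemma gram_sum {ι : Type*} {E : Type*} [NormedAddCommGroup E] [InnerProductSpace ℝ E]
    (S : Finset ι) (w : ι → E) (α β : ι → ℝ) :
    ⟪(∑ p ∈ S, α p • w p), (∑ q ∈ S, β q • w q)⟫
      = ∑ p ∈ S, ∑ q ∈ S, α p * β q * ⟪w p, w q⟫ := by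
  rw [sum_inner]
  refine Finset.sum_congr rfl fun p _ => ?_
  rw [inner_sum]
  refine Finset.sum_congr rfl fun q _ => ?_
  rw [real_inner_smul_left, real_inner_smul_right]
  ring

/-- The finite Gram realization of the partial kernel on any monotone finite family. -/
lemma fin_gram (t₀ : ℝ) (b : ℝ → ℝ) (KΩ : ℝ → ℝ → ℝ)
    (hpart : ∀ A : Set ℝ, A ×ˢ A ⊆ regularDomain t₀ b → IsKernelOn A KΩ)
    {m : ℕ} (y : Fin m → ℝ) (hy : Monotone y)
    (hdiag : ∀ i, (y i, y i) ∈ regularDomain t₀ b) :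
    ∃ v : Fin m → EuclideanSpace ℝ (Fin m),
      ∀ i j, (y i, y j) ∈ regularDomain t₀ b → ⟪v i, v j⟫ = KΩ (y i) (y j) := by
  classical
  suffices h : ∀ k : ℕ, k ≤ m → ∃ v : Fin m → EuclideanSpace ℝ (Fin m),
      (∀ i : Fin m, k ≤ (i : ℕ) → v i = 0) ∧
      (∀ i l : Fin m, i < l → ⟪v i, EuclideanSpace.single l (1 : ℝ)⟫ = 0) ∧
      (∀ i j : Fin m, (i : ℕ) < k → (j : ℕ) < k → (y i, y j) ∈ regularDomain t₀ b →
        ⟪v i, v j⟫ = KΩ (y i) (y j)) by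
    obtain ⟨v, _, _, hv⟩ := h m le_rfl
    exact ⟨v, fun i j => hv i j i.isLt j.isLt⟩
  intro k
  induction k with
  | zero =>
    exact fun _ => ⟨0, fun _ _ => rfl, fun i l _ => by simp,
      fun i j h1 _ _ => absurd h1 (Nat.not_lt_zero _)⟩
  | succ k ih =>
    intro hk1
    have hk : k < m := hk1
    obtain ⟨v, hzero, hsupp, hinner⟩ := ih (Nat.le_of_lt hk)
    set kk : Fin m := ⟨k, hk⟩ with hkk
    set S : Finset (Fin m) :=
      Finset.univ.filter (fun p => p < kk ∧ (y p, y kk) ∈ regularDomain t₀ b) with hS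
    have hSmem : ∀ p, p ∈ S ↔ p < kk ∧ (y p, y kk) ∈ regularDomain t₀ b := by
      intro p; simp [hS]
    have hSlt : ∀ p ∈ S, p < kk := fun p hp => ((hSmem p).1 hp).1
    have hSΩ : ∀ p ∈ S, (y p, y kk) ∈ regularDomain t₀ b := fun p hp => ((hSmem p).1 hp).2
    have hpairS : ∀ p ∈ S, ∀ q ∈ S, (y p, y q) ∈ regularDomain t₀ b := by
      have key : ∀ p ∈ S, ∀ q ∈ S, p ≤ q → (y p, y q) ∈ regularDomain t₀ b := by
        intro p hp q hq hpq
        obtain ⟨t, h1, h2, h3, h4, h5, h6⟩ := mem_rd.1 (hSΩ p hp)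
        exact mem_rd.2 ⟨t, h1, h2, h3, h4, le_trans h3 (hy hpq),
          le_trans (hy (hSlt q hq).le) h6⟩
      intro p hp q hq
      rcases le_total p q with h | h
      · exact key p hp q hq h
      · exact rd_symm (key q hq p hp h)
    set A : Set ℝ := {z | (∃ p ∈ S, z = y p) ∨ z = y kk} with hA
    have hAsub : A ×ˢ A ⊆ regularDomain t₀ b := by
      rintro ⟨u1, u2⟩ ⟨h1, h2⟩
      simp only [hA, Set.mem_setOf_eq] at h1 h2
      rcases h1 with ⟨p, hp, rfl⟩ | rfl <;> rcases h2 with ⟨q, hq, rfl⟩ | rfl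
      exacts [hpairS p hp q hq, hSΩ p hp, rd_symm (hSΩ q hq), hdiag kk]
    have hKA := hpart A hAsub
    set g : Fin m → ℝ := fun p => KΩ (y p) (y kk) with hg
    set c : ℝ := KΩ (y kk) (y kk) with hc
    have hq : ∀ (α : Fin m → ℝ) (s : ℝ),
        0 ≤ (∑ p ∈ S, ∑ q ∈ S, α p * α q * KΩ (y p) (y q))
          + 2 * s * (∑ p ∈ S, α p * g p) + s ^ 2 * c :=
      fun α s => psd_ext hKA S y (y kk)
        (fun p hp => Or.inl ⟨p, hp, rfl⟩) (Or.inr rfl) α s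
    -- the linear maps
    obtain ⟨T, hTapp⟩ : ∃ T : (Fin m → ℝ) →ₗ[ℝ] EuclideanSpace ℝ (Fin m),
        ∀ α, T α = ∑ p ∈ S, α p • v p :=
      ⟨{ toFun := fun α => ∑ p ∈ S, α p • v p
         map_add' := by intro a1 a2; simp [add_smul, Finset.sum_add_distrib]
         map_smul' := by intro r a1; simp [Finset.smul_sum, smul_smul] }, fun _ => rfl⟩
    have hGram : ∀ α β : Fin m → ℝ,
        ⟪T α, T β⟫ = ∑ p ∈ S, ∑ q ∈ S, α p * β q * KΩ (y p) (y q) := by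
      intro α β
      rw [hTapp, hTapp, gram_sum]
      refine Finset.sum_congr rfl fun p hp => Finset.sum_congr rfl fun q hq => ?_
      rw [hinner p q (hSlt p hp) (hSlt q hq) (hpairS p hp q hq)]
    obtain ⟨φt, hφtapp⟩ : ∃ φt : (Fin m → ℝ) →ₗ[ℝ] ℝ,
        ∀ α, φt α = ∑ p ∈ S, α p * g p :=
      ⟨{ toFun := fun α => ∑ p ∈ S, α p * g p
         map_add' := by intro a1 a2; simp [add_mul, Finset.sum_add_distrib]
         map_smul' := by intro r a1; simp [Finset.mul_sum, mul_assoc] }, fun _ => rfl⟩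
    have hc0 : 0 ≤ c := by
      have := hq 0 1
      simpa using this
    have hker : LinearMap.ker T ≤ LinearMap.ker φt := by
      intro α hα
      rw [LinearMap.mem_ker] at hα
      have h1 : (∑ p ∈ S, ∑ q ∈ S, α p * α q * KΩ (y p) (y q)) = 0 := by
        rw [← hGram α α, hα]
        simp
      have h2 : ∀ s : ℝ, 0 ≤ c * (s * s) + (2 * (∑ p ∈ S, α p * g p)) * s + 0 := by
        intro s
        have := hq α s
        rw [h1] at this
        nlinarith [this]
      have hd := discrim_le_zero h2
      simp only [discrim] at hd
      have hL : (∑ p ∈ S, α p * g p) = 0 := by nlinarith [hd, sq_nonneg (∑ p ∈ S, α p * g p)]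
      rw [LinearMap.mem_ker, hφtapp, hL]
    have hφW : ∃ φW : LinearMap.range T →ₗ[ℝ] ℝ, ∀ α : Fin m → ℝ,
        φW ⟨T α, LinearMap.mem_range_self T α⟩ = ∑ p ∈ S, α p * g p := by
      refine ⟨((LinearMap.ker T).liftQ φt hker).comp
        (T.quotKerEquivRange.symm : LinearMap.range T →ₗ[ℝ] ((Fin m → ℝ) ⧸ LinearMap.ker T)), fun α => ?_⟩
      have h1 : T.quotKerEquivRange (Submodule.Quotient.mk α)
          = ⟨T α, LinearMap.mem_range_self T α⟩ := by
        apply Subtype.ext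
        exact T.quotKerEquivRange_apply_mk α
      have h2 : T.quotKerEquivRange.symm ⟨T α, LinearMap.mem_range_self T α⟩
          = Submodule.Quotient.mk α := by
        rw [← h1, LinearEquiv.symm_apply_apply]
      simp only [LinearMap.comp_apply, LinearEquiv.coe_coe, h2, Submodule.liftQ_apply]
      exact hφtapp α
    obtain ⟨φW, hφWapp⟩ := hφW
    have hu_ex : ∃ u : EuclideanSpace ℝ (Fin m), (∃ α₀, T α₀ = u) ∧
        ∀ p ∈ S, ⟪u, v p⟫ = g p := by
      set u' : LinearMap.range T := (InnerProductSpace.toDual ℝ (LinearMap.range T)).symm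
        (LinearMap.toContinuousLinearMap φW) with hu'def
      have hu' : ∀ w : LinearMap.range T, ⟪u', w⟫ = φW w := by
        intro w
        rw [hu'def, InnerProductSpace.toDual_symm_apply]
        rfl
      refine ⟨(u' : EuclideanSpace ℝ (Fin m)), u'.2, ?_⟩
      intro p hp
      have hvpW : T (Pi.single p 1) = v p := by
        rw [hTapp, Finset.sum_eq_single p]
        · simp
        · intro q _ hqp
          simp [Pi.single_apply, hqp]
        · intro hpS
          exact absurd hp hpS
      have hmem : v p ∈ LinearMap.range T := by
        rw [← hvpW]; exact LinearMap.mem_range_self T _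
      have step1 : ⟪(u' : EuclideanSpace ℝ (Fin m)), v p⟫
          = ⟪u', (⟨v p, hmem⟩ : LinearMap.range T)⟫ := by
        rw [Submodule.coe_inner]
      rw [step1, hu']
      have step2 : (⟨v p, hmem⟩ : LinearMap.range T)
          = ⟨T (Pi.single p 1), LinearMap.mem_range_self T _⟩ :=
        Subtype.ext hvpW.symm
      rw [step2, hφWapp]
      rw [Finset.sum_eq_single p]
      · simp
      · intro q _ hqp
        simp [Pi.single_apply, hqp]
      · intro hpS
        exact absurd hp hpS
    obtain ⟨u, ⟨α₀, huT⟩, hup⟩ := hu_ex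
    have huu : ⟪u, u⟫ ≤ c := by
      have h1 : ⟪u, u⟫ = ∑ p ∈ S, ∑ q ∈ S, α₀ p * α₀ q * KΩ (y p) (y q) := by
        rw [← huT, hGram]
      have h2 : (∑ p ∈ S, α₀ p * g p) = ⟪u, u⟫ := by
        have : (∑ p ∈ S, α₀ p * g p) = ∑ p ∈ S, α₀ p * ⟪u, v p⟫ :=
          Finset.sum_congr rfl fun p hp => by rw [hup p hp]
        rw [this]
        have : (∑ p ∈ S, α₀ p * ⟪u, v p⟫) = ⟪u, (∑ p ∈ S, α₀ p • v p)⟫ := by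
          rw [inner_sum]
          exact Finset.sum_congr rfl fun p _ => (real_inner_smul_right _ _ _).symm
        rw [this, ← hTapp, huT]
      have h3 := hq α₀ (-1)
      rw [← h1, h2] at h3
      nlinarith [h3]
    set tt : ℝ := Real.sqrt (c - ⟪u, u⟫) with htt0
    have htt : tt ^ 2 = c - ⟪u, u⟫ := Real.sq_sqrt (by linarith)
    set sgl : EuclideanSpace ℝ (Fin m) := EuclideanSpace.single kk (1 : ℝ) with hsgl0
    have husing : ∀ l : Fin m, kk ≤ l → ⟪u, EuclideanSpace.single l (1 : ℝ)⟫ = 0 := by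
      intro l hl
      rw [← huT, hTapp, sum_inner]
      refine Finset.sum_eq_zero fun p hp => ?_
      rw [real_inner_smul_left, hsupp p l (lt_of_lt_of_le (hSlt p hp) hl), mul_zero]
    have hsglsgl : ⟪sgl, sgl⟫ = 1 := by
      rw [hsgl0, EuclideanSpace.inner_single_left]
      simp [EuclideanSpace.single_apply]
    have husgl : ⟪u, sgl⟫ = 0 := husing kk le_rfl
    set vk : EuclideanSpace ℝ (Fin m) := u + tt • sgl with hvk0
    have hvk_p : ∀ p ∈ S, ⟪vk, v p⟫ = g p := by
      intro p hp
      rw [hvk0, inner_add_left, real_inner_smul_left, hup p hp]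
      have : ⟪sgl, v p⟫ = 0 := by
        rw [real_inner_comm]
        exact hsupp p kk (hSlt p hp)
      rw [this, mul_zero, add_zero]
    have hvkvk : ⟪vk, vk⟫ = c := by
      rw [hvk0]
      have expand := real_inner_add_add_self u (tt • sgl)
      rw [real_inner_smul_right, husgl, real_inner_smul_left, real_inner_smul_right,
        hsglsgl] at expand
      rw [expand]
      nlinarith [htt]
    have hvksupp : ∀ l : Fin m, kk < l → ⟪vk, EuclideanSpace.single l (1 : ℝ)⟫ = 0 := by
      intro l hl
      rw [hvk0, inner_add_left, husing l hl.le, real_inner_smul_left]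
      have hne : ¬ (kk = l) := Fin.ne_of_lt hl
      have h0 : ⟪sgl, EuclideanSpace.single l (1 : ℝ)⟫ = 0 := by
        rw [hsgl0, EuclideanSpace.inner_single_left, EuclideanSpace.single_apply, if_neg hne]
        simp
      rw [h0, mul_zero, add_zero]
    refine ⟨Function.update v kk vk, ?_, ?_, ?_⟩
    · intro i hi
      have hik : i ≠ kk := by
        intro hcontra
        rw [hcontra] at hi
        simp only [hkk] at hi
        omega
      rw [Function.update_of_ne hik]
      exact hzero i (by omega)
    · intro i l hil
      by_cases hik : i = kk
      · subst hik
        rw [Function.update_self]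
        exact hvksupp l hil
      · rw [Function.update_of_ne hik]
        exact hsupp i l hil
    · intro i j hi hj hΩij
      by_cases hik : i = kk <;> by_cases hjk : j = kk
      · subst hik; subst hjk
        rw [Function.update_self]
        exact hvkvk
      · subst hik
        have hjne : (j : ℕ) ≠ k := fun hcontra => hjk (Fin.ext (by simp [hkk, hcontra]))
        have hjlt : j < kk := by
          rw [Fin.lt_def]
          simp only [hkk]
          omega
        have hjS : j ∈ S := (hSmem j).2 ⟨hjlt, rd_symm hΩij⟩
        rw [Function.update_self, Function.update_of_ne hjk]
        exact (hvk_p j hjS).trans (kern_symm hpart hΩij).symm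
      · subst hjk
        have hine : (i : ℕ) ≠ k := fun hcontra => hik (Fin.ext (by simp [hkk, hcontra]))
        have hilt : i < kk := by
          rw [Fin.lt_def]
          simp only [hkk]
          omega
        have hiS : i ∈ S := (hSmem i).2 ⟨hilt, hΩij⟩
        rw [Function.update_of_ne hik, Function.update_self, real_inner_comm]
        exact hvk_p i hiS
      · have hilt : (i : ℕ) < k := by
          have : (i : ℕ) ≠ k := fun hcontra => hik (Fin.ext (by simp [hkk, hcontra]))
          omega
        have hjlt : (j : ℕ) < k := by
          have : (j : ℕ) ≠ k := fun hcontra => hjk (Fin.ext (by simp [hkk, hcontra]))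
          omega
        rw [Function.update_of_ne hik, Function.update_of_ne hjk]
        exact hinner i j hilt hjlt hΩij

end RKCompletion

/-- On a large regular domain on `[0,1]`, every partially reproducing kernel admits a
completion. -/
theorem regularDomain_partialKernel_completion
    (t₀ : ℝ) (ht₀ : 0 < t₀) (ht₁ : t₀ < 1)
    (b : ℝ → ℝ) (hb : StrictMonoOn b (Set.Icc 0 t₀))
    (hbt : ∀ t ∈ Set.Icc 0 t₀, t < b t) (hb1 : b t₀ = 1)
    (hlarge : t₀ ≤ b 0)
    (KΩ : ℝ → ℝ → ℝ)
    (hpart : ∀ A : Set ℝ, A ×ˢ A ⊆ regularDomain t₀ b → IsKernelOn A KΩ) :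
    ∃ K : ℝ → ℝ → ℝ, IsKernelOn (Set.Icc 0 1) K ∧
      ∀ p ∈ regularDomain t₀ b, K p.1 p.2 = KΩ p.1 p.2 := by
  classical
  set Ω := regularDomain t₀ b with hΩdef
  set Bnd : ℝ × ℝ → ℝ := fun p => Real.sqrt (KΩ p.1 p.1) * Real.sqrt (KΩ p.2 p.2) with hBnd
  set C : Finset ℝ → Set ((ℝ × ℝ) → ℝ) := fun F =>
    {K | (∀ p : ℝ × ℝ, K p ∈ Set.Icc (-(Bnd p)) (Bnd p)) ∧
         (∀ p ∈ Ω, K p = KΩ p.1 p.2) ∧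
         (∀ a c : ℝ, K (a, c) = K (c, a)) ∧
         (∀ (n : ℕ) (α : Fin n → ℝ) (x : Fin n → ℝ),
            (∀ i, x i ∈ F ∧ x i ∈ Set.Icc (0 : ℝ) 1) →
            0 ≤ ∑ i, ∑ j, α i * α j * K (x i, x j))} with hC
  have hne : ∀ F : Finset ℝ, (C F).Nonempty := by
    intro F
    set Ff : Finset ℝ := F.filter (fun u => u ∈ Set.Icc (0 : ℝ) 1) with hFf
    set m := Ff.card with hm
    set e := Ff.orderIsoOfFin rfl with he
    set y : Fin m → ℝ := fun i => (e i : ℝ) with hy0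
    have hy : Monotone y := fun i j hij => Subtype.coe_le_coe.2 ((e : Fin m ≃o Ff).monotone hij)
    have hyIcc : ∀ i, y i ∈ Set.Icc (0 : ℝ) 1 := fun i => (Finset.mem_filter.1 (e i).2).2
    have hdiag : ∀ i, (y i, y i) ∈ Ω :=
      fun i => RKCompletion.diag_mem ht₀ hbt hb1 (hyIcc i).1 (hyIcc i).2
    obtain ⟨v, hv⟩ := RKCompletion.fin_gram t₀ b KΩ hpart y hy hdiag
    have hvdiag : ∀ i, ⟪v i, v i⟫ = KΩ (y i) (y i) := fun i => hv i i (hdiag i)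
    have hidx : ∀ (u : ℝ) (hu : u ∈ Ff), y (e.symm ⟨u, hu⟩) = u := by
      intro u hu
      simp [hy0]
    have hnormv : ∀ i, ‖v i‖ = Real.sqrt (KΩ (y i) (y i)) := by
      intro i
      rw [← hvdiag i, real_inner_self_eq_norm_mul_norm,
        Real.sqrt_mul_self (norm_nonneg _)]
    set K : (ℝ × ℝ) → ℝ := fun p =>
      if p ∈ Ω then KΩ p.1 p.2
      else if h : p.1 ∈ Ff ∧ p.2 ∈ Ff then ⟪v (e.symm ⟨p.1, h.1⟩), v (e.symm ⟨p.2, h.2⟩)⟫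
      else 0 with hK
    have hKΩval : ∀ p ∈ Ω, K p = KΩ p.1 p.2 := by
      intro p hp
      simp only [hK, hp, if_true]
    refine ⟨K, ?_, hKΩval, ?_, ?_⟩
    · -- bounds
      intro p
      rw [Set.mem_Icc, ← abs_le]
      by_cases h1 : p ∈ Ω
      · rw [hKΩval p h1]
        have hd1 : (p.1, p.1) ∈ Ω := by
          obtain ⟨t, a1, a2, a3, a4, a5, a6⟩ := RKCompletion.mem_rd.1 h1
          exact RKCompletion.mem_rd.2 ⟨t, a1, a2, a3, a4, a3, a4⟩
        have := RKCompletion.cs_bound hpart (show (p.1, p.2) ∈ regularDomain t₀ b by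
          rw [Prod.mk.eta]; exact h1)
        simpa [hBnd] using this
      · simp only [hK, h1, if_false]
        by_cases h2 : p.1 ∈ Ff ∧ p.2 ∈ Ff
        · rw [dif_pos h2]
          have hb1' := abs_real_inner_le_norm (v (e.symm ⟨p.1, h2.1⟩)) (v (e.symm ⟨p.2, h2.2⟩))
          rw [hnormv, hnormv, hidx p.1 h2.1, hidx p.2 h2.2] at hb1'
          simpa [hBnd] using hb1'
        · rw [dif_neg h2]
          simp only [abs_zero, hBnd]
          positivity
    · -- symmetry
      intro a c
      by_cases h : (a, c) ∈ Ω
      · have h' : (c, a) ∈ Ω := RKCompletion.rd_symm h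
        rw [hKΩval _ h, hKΩval _ h']
        exact RKCompletion.kern_symm hpart h
      · have h' : (c, a) ∉ Ω := fun hh => h (RKCompletion.rd_symm hh)
        simp only [hK, h, h', if_false]
        by_cases h2 : a ∈ Ff ∧ c ∈ Ff
        · have h2' : c ∈ Ff ∧ a ∈ Ff := ⟨h2.2, h2.1⟩
          rw [dif_pos h2, dif_pos h2']
          exact real_inner_comm _ _
        · have h2' : ¬ (c ∈ Ff ∧ a ∈ Ff) := fun hh => h2 ⟨hh.2, hh.1⟩
          rw [dif_neg h2, dif_neg h2']
    · -- positivity on tuples from F ∩ [0,1]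
      intro n α x hx
      have hxFf : ∀ i, x i ∈ Ff := fun i => Finset.mem_filter.2 ⟨(hx i).1, (hx i).2⟩
      set w : Fin n → EuclideanSpace ℝ (Fin m) := fun i => v (e.symm ⟨x i, hxFf i⟩) with hw
      have hKval : ∀ i j, K (x i, x j) = ⟪w i, w j⟫ := by
        intro i j
        by_cases h : (x i, x j) ∈ Ω
        · have h' := hv (e.symm ⟨x i, hxFf i⟩) (e.symm ⟨x j, hxFf j⟩)
            (by rw [hidx (x i) (hxFf i), hidx (x j) (hxFf j)]; exact h)
          rw [hidx (x i) (hxFf i), hidx (x j) (hxFf j)] at h'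
          simp only [hK, h, if_true]
          exact h'.symm
        · simp only [hK, h, if_false]
          rw [dif_pos ⟨hxFf i, hxFf j⟩]
      calc (0 : ℝ) ≤ ⟪(∑ i, α i • w i), (∑ j, α j • w j)⟫ := real_inner_self_nonneg
        _ = ∑ i, ∑ j, α i * α j * ⟪w i, w j⟫ := RKCompletion.gram_sum Finset.univ w α α
        _ = ∑ i, ∑ j, α i * α j * K (x i, x j) := by
          refine Finset.sum_congr rfl fun i _ => Finset.sum_congr rfl fun j _ => ?_
          rw [hKval i j]
  have hcl : ∀ F : Finset ℝ, IsClosed (C F) := by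
    intro F
    rw [hC]
    simp only [Set.setOf_and]
    refine IsClosed.inter ?_ (IsClosed.inter ?_ (IsClosed.inter ?_ ?_))
    · have : {K : (ℝ × ℝ) → ℝ | ∀ p, K p ∈ Set.Icc (-(Bnd p)) (Bnd p)}
          = ⋂ p, (fun K : (ℝ × ℝ) → ℝ => K p) ⁻¹' (Set.Icc (-(Bnd p)) (Bnd p)) := by
        ext K; simp
      rw [this]
      exact isClosed_iInter fun p => IsClosed.preimage (continuous_apply p) isClosed_Icc
    · have : {K : (ℝ × ℝ) → ℝ | ∀ p ∈ Ω, K p = KΩ p.1 p.2}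
          = ⋂ p, ⋂ (_ : p ∈ Ω), {K : (ℝ × ℝ) → ℝ | K p = KΩ p.1 p.2} := by
        ext K; simp
      rw [this]
      exact isClosed_iInter fun p => isClosed_iInter fun _ =>
        isClosed_eq (continuous_apply p) continuous_const
    · have : {K : (ℝ × ℝ) → ℝ | ∀ a c : ℝ, K (a, c) = K (c, a)}
          = ⋂ a, ⋂ c, {K : (ℝ × ℝ) → ℝ | K (a, c) = K (c, a)} := by
        ext K; simp
      rw [this]
      exact isClosed_iInter fun a => isClosed_iInter fun c =>
        isClosed_eq (continuous_apply _) (continuous_apply _)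
    · have : {K : (ℝ × ℝ) → ℝ | ∀ (n : ℕ) (α : Fin n → ℝ) (x : Fin n → ℝ),
            (∀ i, x i ∈ F ∧ x i ∈ Set.Icc (0 : ℝ) 1) →
            0 ≤ ∑ i, ∑ j, α i * α j * K (x i, x j)}
          = ⋂ n, ⋂ α : Fin n → ℝ, ⋂ x : Fin n → ℝ,
              ⋂ (_ : ∀ i, x i ∈ F ∧ x i ∈ Set.Icc (0 : ℝ) 1),
              {K : (ℝ × ℝ) → ℝ | 0 ≤ ∑ i, ∑ j, α i * α j * K (x i, x j)} := by
        ext K; simp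
      rw [this]
      refine isClosed_iInter fun n => isClosed_iInter fun α => isClosed_iInter fun x =>
        isClosed_iInter fun _ => isClosed_le continuous_const ?_
      exact continuous_finset_sum _ fun i _ => continuous_finset_sum _ fun j _ =>
        Continuous.mul continuous_const (continuous_apply ((x i, x j) : ℝ × ℝ))
  have hcp : ∀ F : Finset ℝ, IsCompact (C F) := by
    intro F
    refine IsCompact.of_isClosed_subset (isCompact_univ_pi
      (fun p : ℝ × ℝ => isCompact_Icc (a := -(Bnd p)) (b := Bnd p))) (hcl F) ?_
    intro K hK1
    exact fun p _ => hK1.1 p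
  have hdir : Directed (· ⊇ ·) C := by
    intro F G
    refine ⟨F ∪ G, ?_, ?_⟩
    · intro K hK1
      exact ⟨hK1.1, hK1.2.1, hK1.2.2.1, fun n α x hx =>
        hK1.2.2.2 n α x (fun i => ⟨Finset.mem_union_left _ (hx i).1, (hx i).2⟩)⟩
    · intro K hK1
      exact ⟨hK1.1, hK1.2.1, hK1.2.2.1, fun n α x hx =>
        hK1.2.2.2 n α x (fun i => ⟨Finset.mem_union_right _ (hx i).1, (hx i).2⟩)⟩
  obtain ⟨K0, hK0⟩ :=
    IsCompact.nonempty_iInter_of_directed_nonempty_isCompact_isClosed C hdir hne hcp hcl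
  simp only [Set.mem_iInter] at hK0
  refine ⟨fun a c => K0 (a, c), ⟨?_, ?_⟩, ?_⟩
  · intro a _ c _
    exact (hK0 ∅).2.2.1 a c
  · intro n α x hx
    exact (hK0 (Finset.image x Finset.univ)).2.2.2 n α x
      (fun i => ⟨Finset.mem_image_of_mem x (Finset.mem_univ i), hx i⟩)
  · intro p hp
    have := (hK0 ∅).2.1 p hp
    simpa using this
end

section
/- Let a > 0 and let F : ℝ → ℝ be positive-definite on (−a, a). Then there exists a function F̃ : ℝ → ℝ that is positive-definite on all of ℝ and satisfies F̃(t) = F(t) for all t ∈ (−a, a). -/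
noncomputable section
open Finset

/-- `F` is positive-definite on the symmetric set `I ⊆ ℝ`. -/
def IsPosDefOn (I : Set ℝ) (F : ℝ → ℝ) : Prop :=
  ∀ (n : ℕ) (x : Fin n → ℝ) (α : Fin n → ℝ),
    (∀ i j, x i - x j ∈ I) →
    0 ≤ ∑ i, ∑ j, α i * α j * F (x i - x j)

namespace KreinExt

/-- quadratic form of a kernel `M` over a finite index window `s`. -/
def wform (M : ℕ → ℕ → ℝ) (s : Finset ℕ) (f : ℕ → ℝ) : ℝ :=
  ∑ p ∈ s, ∑ q ∈ s, f p * f q * M p q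

/-- bilinear form -/
def cbil (M : ℕ → ℕ → ℝ) (s : Finset ℕ) (f g : ℕ → ℝ) : ℝ :=
  ∑ p ∈ s, ∑ q ∈ s, f p * g q * M p q

def PSDon (M : ℕ → ℕ → ℝ) (s : Finset ℕ) : Prop := ∀ f : ℕ → ℝ, 0 ≤ wform M s f

lemma wform_eq_cbil (M s f) : wform M s f = cbil M s f f := rfl

lemma wform_congr {M M' : ℕ → ℕ → ℝ} {s : Finset ℕ}
    (h : ∀ p ∈ s, ∀ q ∈ s, M p q = M' p q) (f : ℕ → ℝ) : wform M s f = wform M' s f := by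
  unfold wform
  refine Finset.sum_congr rfl fun p hp => Finset.sum_congr rfl fun q hq => ?_
  rw [h p hp q hq]

lemma wform_restrict {M : ℕ → ℕ → ℝ} {s s' : Finset ℕ} (hs : s' ⊆ s) (f : ℕ → ℝ)
    (hf : ∀ p ∈ s, p ∉ s' → f p = 0) : wform M s f = wform M s' f := by
  unfold wform
  rw [← Finset.sum_subset hs]
  · refine Finset.sum_congr rfl fun p _ => ?_
    rw [← Finset.sum_subset hs]
    intro q hq hq'
    rw [hf q hq hq']; ring
  · intro p hp hp'
    rw [hf p hp hp']
    simp

lemma cbil_symm {M : ℕ → ℕ → ℝ} (hsym : ∀ p q, M p q = M q p) (s : Finset ℕ) (f g : ℕ → ℝ) :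
    cbil M s f g = cbil M s g f := by
  unfold cbil
  rw [Finset.sum_comm]
  refine Finset.sum_congr rfl fun p _ => Finset.sum_congr rfl fun q _ => ?_
  rw [hsym q p]; ring

lemma cbil_expand (M : ℕ → ℕ → ℝ) (s : Finset ℕ) (b c : ℝ) (f g : ℕ → ℝ) :
    cbil M s (fun p => b * f p + c * g p) (fun p => b * f p + c * g p)
      = b^2 * cbil M s f f + b*c* cbil M s f g + b*c* cbil M s g f + c^2 * cbil M s g g := by
  unfold cbil
  rw [Finset.mul_sum, Finset.mul_sum, Finset.mul_sum, Finset.mul_sum]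
  rw [← Finset.sum_add_distrib, ← Finset.sum_add_distrib, ← Finset.sum_add_distrib]
  refine Finset.sum_congr rfl fun p _ => ?_
  rw [Finset.mul_sum, Finset.mul_sum, Finset.mul_sum, Finset.mul_sum]
  rw [← Finset.sum_add_distrib, ← Finset.sum_add_distrib, ← Finset.sum_add_distrib]
  refine Finset.sum_congr rfl fun q _ => ?_
  ring

/-- double sum concentrated on the two corner positions -/
lemma double_sum_pair {s : Finset ℕ} {i j : ℕ} (hi : i ∈ s) (hj : j ∈ s) (hij : i ≠ j)
    (g : ℕ → ℕ → ℝ) (hg : ∀ p q, ¬((p = i ∧ q = j) ∨ (p = j ∧ q = i)) → g p q = 0) :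
    ∑ p ∈ s, ∑ q ∈ s, g p q = g i j + g j i := by
  have hsub : ({i, j} : Finset ℕ) ⊆ s := by
    intro t ht; simp at ht; rcases ht with h | h <;> simp [h, hi, hj]
  rw [← Finset.sum_subset hsub]
  · rw [Finset.sum_pair hij]
    have e1 : ∀ p, p = i ∨ p = j → ∑ q ∈ s, g p q = g p i + g p j := by
      intro p _
      rw [← Finset.sum_subset hsub, Finset.sum_pair hij]
      intro q hq hq'
      apply hg
      rintro (⟨_, rfl⟩ | ⟨_, rfl⟩) <;> simp at hq'
    rw [e1 i (Or.inl rfl), e1 j (Or.inr rfl)]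
    have h2 : g j j = 0 := by
      apply hg; rintro (⟨h, _⟩ | ⟨_, h⟩) <;> exact hij h.symm
    have h1 : g i i = 0 := by
      apply hg; rintro (⟨_, h⟩ | ⟨h, _⟩) <;> exact hij h
    rw [h1, h2]; ring
  · intro p hp hp'
    apply Finset.sum_eq_zero
    intro q _
    apply hg
    simp at hp'
    rintro (⟨rfl, _⟩ | ⟨rfl, _⟩) <;> simp at hp'

/-- update the two symmetric corner entries -/
def upd2 (M : ℕ → ℕ → ℝ) (i j : ℕ) (c : ℝ) : ℕ → ℕ → ℝ :=
  fun p q => if (p = i ∧ q = j) ∨ (p = j ∧ q = i) then c else M p q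

lemma upd2_symm {M : ℕ → ℕ → ℝ} (hsym : ∀ p q, M p q = M q p) (i j : ℕ) (c : ℝ) :
    ∀ p q, upd2 M i j c p q = upd2 M i j c q p := by
  intro p q
  unfold upd2
  by_cases h : (p = i ∧ q = j) ∨ (p = j ∧ q = i)
  · rw [if_pos h, if_pos (by tauto)]
  · rw [if_neg h, if_neg (by tauto), hsym]


lemma one_entry (M : ℕ → ℕ → ℝ) (hsym : ∀ p q, M p q = M q p) (i j : ℕ) (hij : i < j)
    (h1 : PSDon M (Icc (i+1) j)) (h2 : PSDon M (Icc i (j-1))) :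
    ∃ c, PSDon (upd2 M i j c) (Icc i j) := by
  have hij' : i ≠ j := Nat.ne_of_lt hij
  have himem : i ∈ Icc i j := by simp [hij.le]
  have hjmem : j ∈ Icc i j := by simp [hij.le]
  set Mz := upd2 M i j 0 with hMz
  have hzsym : ∀ p q, Mz p q = Mz q p := upd2_symm hsym i j 0
  set C : (ℕ → ℝ) → ℝ := fun f => wform Mz (Icc i j) f with hC
  set Q : (ℕ → ℝ) → (ℕ → ℝ) → ℝ := fun f g => cbil Mz (Icc i j) f g with hQ
  -- splitting of the form
  have split : ∀ (c : ℝ) (f : ℕ → ℝ),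
      wform (upd2 M i j c) (Icc i j) f = C f + 2*c*(f i * f j) := by
    intro c f
    have hdiff : ∀ p q, upd2 M i j c p q = Mz p q +
        (if (p = i ∧ q = j) ∨ (p = j ∧ q = i) then c else 0) := by
      intro p q
      unfold upd2 Mz upd2
      by_cases h : (p = i ∧ q = j) ∨ (p = j ∧ q = i) <;> simp [h]
    have step : wform (upd2 M i j c) (Icc i j) f
        = C f + ∑ p ∈ Icc i j, ∑ q ∈ Icc i j,
            f p * f q * (if (p = i ∧ q = j) ∨ (p = j ∧ q = i) then c else 0) := by
      show wform (upd2 M i j c) (Icc i j) f = wform Mz (Icc i j) f + _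
      unfold wform
      rw [← Finset.sum_add_distrib]
      refine Finset.sum_congr rfl fun p _ => ?_
      rw [← Finset.sum_add_distrib]
      refine Finset.sum_congr rfl fun q _ => ?_
      rw [hdiff]; ring
    rw [step, double_sum_pair himem hjmem hij'
      (fun p q => f p * f q * (if (p = i ∧ q = j) ∨ (p = j ∧ q = i) then c else 0))
      (by intro p q h; simp only [if_neg h]; ring)]
    have e1 : ((i = i ∧ j = j) ∨ (i = j ∧ j = i)) := Or.inl ⟨rfl, rfl⟩
    have e2 : ((j = i ∧ i = j) ∨ (j = j ∧ i = i)) := Or.inr ⟨rfl, rfl⟩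
    rw [if_pos e1, if_pos e2]; ring
  -- C is nonnegative on vectors vanishing at i resp. at j
  have h1' : ∀ f : ℕ → ℝ, f i = 0 → 0 ≤ C f := by
    intro f hf
    have e1 : C f = wform Mz (Icc (i+1) j) f := by
      apply wform_restrict (Finset.Icc_subset_Icc (by omega) le_rfl)
      intro p hp hp'
      simp at hp hp'
      have : p = i := by omega
      rw [this, hf]
    have e2 : wform Mz (Icc (i+1) j) f = wform M (Icc (i+1) j) f := by
      apply wform_congr
      intro p hp q hq
      simp at hp hq
      unfold Mz upd2
      rw [if_neg]
      rintro (⟨h, _⟩ | ⟨_, h⟩) <;> omega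
    rw [e1, e2]; exact h1 f
  have h2' : ∀ f : ℕ → ℝ, f j = 0 → 0 ≤ C f := by
    intro f hf
    have e1 : C f = wform Mz (Icc i (j-1)) f := by
      apply wform_restrict (Finset.Icc_subset_Icc le_rfl (by omega))
      intro p hp hp'
      simp at hp hp'
      have : p = j := by omega
      rw [this, hf]
    have e2 : wform Mz (Icc i (j-1)) f = wform M (Icc i (j-1)) f := by
      apply wform_congr
      intro p hp q hq
      simp at hp hq
      unfold Mz upd2
      rw [if_neg]
      rintro (⟨_, h⟩ | ⟨h, _⟩) <;> omega
    rw [e1, e2]; exact h2 f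
  -- expansion of C on linear combinations
  have Cexp : ∀ (b c : ℝ) (f g : ℕ → ℝ),
      C (fun p => b * f p + c * g p) = b^2 * C f + 2*b*c*(Q f g) + c^2 * C g := by
    intro b c f g
    show wform Mz (Icc i j) _
        = b^2 * wform Mz (Icc i j) f + 2*b*c*(cbil Mz (Icc i j) f g) + c^2 * wform Mz (Icc i j) g
    simp only [wform_eq_cbil]
    rw [cbil_expand, cbil_symm hzsym _ g f]
    ring
  have Csmul : ∀ (b : ℝ) (f : ℕ → ℝ), C (fun p => b * f p) = b^2 * C f := by
    intro b f
    have h := Cexp b 0 f f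
    have e : (fun p => b * f p + 0 * f p) = (fun p => b * f p) := by ext p; ring
    rw [e] at h
    rw [h]; ring
  -- normalized core inequality
  have core : ∀ f g : ℕ → ℝ, f i = 1 → g i = 1 → 0 < f j → g j < 0 →
      0 ≤ (-(g j)) * C f + (f j) * C g := by
    intro f g hfi hgi hfj hgj
    set u := f j with hu
    set v := -(g j) with hv
    have hv0 : 0 < v := by rw [hv]; linarith
    have ineq1 : 0 ≤ C f - 2 * Q f g + C g := by
      have h := h1' (fun p => 1 * f p + (-1) * g p) (by simp [hfi, hgi])
      rw [Cexp] at h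
      nlinarith [h]
    have ineq2 : 0 ≤ v^2 * C f + 2*u*v*(Q f g) + u^2 * C g := by
      have h := h2' (fun p => (g j) * f p + (-(f j)) * g p) (by simp; ring)
      rw [Cexp] at h
      have e : (g j)^2 * C f + 2*(g j)*(-(f j))*(Q f g) + (-(f j))^2 * C g
          = v^2 * C f + 2*u*v*(Q f g) + u^2 * C g := by
        rw [hv, hu]; ring
      rw [e] at h
      exact h
    have big : 0 ≤ (u+v) * (v * C f + u * C g) := by
      nlinarith [mul_nonneg (mul_pos hfj hv0).le ineq1, ineq2]
    have huv : 0 < u + v := by linarith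
    nlinarith [big, huv]
  -- unnormalized version
  have key : ∀ f g : ℕ → ℝ, 0 < f i * f j → g i * g j < 0 →
      -(C f) / (2*(f i * f j)) ≤ -(C g) / (2*(g i * g j)) := by
    intro f g hP hN
    have hfi : f i ≠ 0 := by intro h; rw [h] at hP; simp at hP
    have hgi : g i ≠ 0 := by intro h; rw [h] at hN; simp at hN
    set f' : ℕ → ℝ := fun p => (f i)⁻¹ * f p with hf'
    set g' : ℕ → ℝ := fun p => (g i)⁻¹ * g p with hg'
    have hf'i : f' i = 1 := by simp [hf', inv_mul_cancel₀ hfi]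
    have hg'i : g' i = 1 := by simp [hg', inv_mul_cancel₀ hgi]
    have hf'j : 0 < f' j := by
      simp only [hf']
      rcases mul_pos_iff.1 hP with ⟨ha, hb⟩ | ⟨ha, hb⟩
      · positivity
      · exact mul_pos_of_neg_of_neg (inv_neg''.2 ha) hb
    have hg'j : g' j < 0 := by
      simp only [hg']
      rcases mul_neg_iff.1 hN with ⟨ha, hb⟩ | ⟨ha, hb⟩
      · exact mul_neg_of_pos_of_neg (by positivity) hb
      · exact mul_neg_of_neg_of_pos (inv_neg''.2 ha) hb
    have hCf' : C f' = ((f i)⁻¹)^2 * C f := Csmul _ f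
    have hCg' : C g' = ((g i)⁻¹)^2 * C g := Csmul _ g
    have W := core f' g' hf'i hg'i hf'j hg'j
    rw [hCf', hCg'] at W
    have hW2 : 0 ≤ (-(g i * g j)) * C f + (f i * f j) * C g := by
      have hfi2 : (0:ℝ) < (f i)^2 := by positivity
      have hgi2 : (0:ℝ) < (g i)^2 := by positivity
      have hprod := mul_nonneg (mul_nonneg hfi2.le hgi2.le) W
      have e : (f i)^2 * (g i)^2 * ((-(g' j)) * (((f i)⁻¹)^2 * C f) + (f' j) * (((g i)⁻¹)^2 * C g))
          = (-(g i * g j)) * C f + (f i * f j) * C g := by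
        simp only [hf', hg']
        field_simp
      rw [e] at hprod
      exact hprod
    have e2 : -(C g) / (2*(g i * g j)) = C g / (2 * (-(g i * g j))) := by
      rw [mul_neg, div_neg, neg_div]
    rw [e2, div_le_div_iff₀ (by linarith) (by nlinarith)]
    nlinarith [hW2]
  -- the admissible sets
  have hLne : ∃ f : ℕ → ℝ, 0 < f i * f j ∧ True := by
    refine ⟨fun p => if p = i ∨ p = j then 1 else 0, ?_, trivial⟩
    simp [hij']
  obtain ⟨f₀, hf₀, -⟩ := hLne
  have hUne : ∃ g : ℕ → ℝ, g i * g j < 0 := by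
    refine ⟨fun p => if p = i then 1 else if p = j then -1 else 0, ?_⟩
    simp [hij', hij'.symm]
  obtain ⟨g₀, hg₀⟩ := hUne
  set L : Set ℝ := {r | ∃ f : ℕ → ℝ, 0 < f i * f j ∧ r = -(C f) / (2*(f i * f j))} with hL
  have hLne' : L.Nonempty := ⟨_, f₀, hf₀, rfl⟩
  have hLbdd : BddAbove L := by
    refine ⟨-(C g₀) / (2*(g₀ i * g₀ j)), ?_⟩
    rintro r ⟨f, hf, rfl⟩
    exact key f g₀ hf hg₀
  set c := sSup L with hc
  refine ⟨c, ?_⟩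
  intro f
  rw [split]
  rcases lt_trichotomy (f i * f j) 0 with hneg | hzero | hpos
  · have hcle : c ≤ -(C f) / (2*(f i * f j)) := by
      apply csSup_le hLne'
      rintro r ⟨g, hg, rfl⟩
      exact key g f hg hneg
    -- c ≤ -(C f)/(2N), N<0  ⟹  C f + 2cN ≥ 0
    have hN2 : (2*(f i * f j)) < 0 := by linarith
    have := mul_le_mul_of_nonpos_right hcle hN2.le
    rw [div_mul_cancel₀ _ (by linarith : (2*(f i * f j)) ≠ 0)] at this
    -- this : c * (2N) ≥ -(C f)  (direction flipped)
    nlinarith [this]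
  · rcases mul_eq_zero.1 hzero with h | h
    · have := h1' f h
      rw [hzero]; linarith
    · have := h2' f h
      rw [hzero]; linarith
  · have hle : -(C f) / (2*(f i * f j)) ≤ c := le_csSup hLbdd ⟨f, hpos, rfl⟩
    have hP2 : (0:ℝ) < 2*(f i * f j) := by linarith
    have := mul_le_mul_of_nonneg_right hle hP2.le
    rw [div_mul_cancel₀ _ (by linarith : (2*(f i * f j)) ≠ 0)] at this
    nlinarith [this]


lemma wform_empty (M : ℕ → ℕ → ℝ) {i j : ℕ} (h : j < i) (f : ℕ → ℝ) :
    wform M (Icc i j) f = 0 := by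
  rw [Finset.Icc_eq_empty (by omega)]
  simp [wform]

/-- chordal completion of the band pattern given by points `x 0 ≤ x 1 ≤ ... ≤ x N`
with bandwidth `a`. -/
theorem band_completion (a : ℝ) (ha : 0 < a) (Fe : ℝ → ℝ) (heven : ∀ t, Fe (-t) = Fe t)
    (x : ℕ → ℝ) (N : ℕ)
    (hmono : ∀ p q, p ≤ q → q ≤ N → x p ≤ x q)
    (hband : ∀ i j : ℕ, j ≤ N → |x j - x i| < a →
      PSDon (fun p q => Fe (x p - x q)) (Icc i j)) :
    ∃ Mstar : ℕ → ℕ → ℝ, (∀ p q, Mstar p q = Mstar q p) ∧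
      (∀ p q, p ≤ N → q ≤ N → |x p - x q| < a → Mstar p q = Fe (x p - x q)) ∧
      PSDon Mstar (Icc 0 N) := by
  -- windows of a band corner are entirely in the band
  have wband : ∀ i j p q : ℕ, i ≤ p → p ≤ j → i ≤ q → q ≤ j → j ≤ N →
      |x j - x i| < a → |x p - x q| < a := by
    intro i j p q hip hpj hiq hqj hjN hcorner
    have h1 : x i ≤ x p := hmono i p hip (by omega)
    have h2 : x p ≤ x j := hmono p j hpj hjN
    have h3 : x i ≤ x q := hmono i q hiq (by omega)
    have h4 : x q ≤ x j := hmono q j hqj hjN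
    rw [abs_lt] at hcorner ⊢
    constructor <;> [linarith [hcorner.2]; linarith [hcorner.2]]
  have key : ∀ ℓ : ℕ, ∃ M : ℕ → ℕ → ℝ, (∀ p q, M p q = M q p) ∧
      (∀ p q, p ≤ N → q ≤ N → |x p - x q| < a → M p q = Fe (x p - x q)) ∧
      (∀ i j : ℕ, j ≤ N → j ≤ i + ℓ → PSDon M (Icc i j)) := by
    intro ℓ
    induction ℓ with
    | zero =>
      refine ⟨fun p q => Fe (x p - x q), ?_, ?_, ?_⟩
      · intro p q
        show Fe (x p - x q) = Fe (x q - x p)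
        rw [← heven (x q - x p), neg_sub]
      · intro p q _ _ _; rfl
      · intro i j hjN hle
        rcases Nat.lt_or_ge j i with h | h
        · intro f; rw [wform_empty _ h]
        · have : i = j := by omega
          subst this
          exact hband i i hjN (by simp [ha])
    | succ ℓ IH =>
      obtain ⟨M, hsym, hpres, hpsd⟩ := IH
      classical
      -- the completion condition for a new corner
      set cond : ℕ → ℕ → Prop := fun i j =>
        i < j ∧ j ≤ N ∧ j = i + (ℓ+1) ∧ ¬(|x j - x i| < a) with hcond
      have condprf : ∀ i j, cond i j →
          ∃ c, PSDon (upd2 M i j c) (Icc i j) := by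
        intro i j hc
        exact one_entry M hsym i j hc.1
          (hpsd (i+1) j hc.2.1 (by omega))
          (hpsd i (j-1) (by omega) (by omega))
      set cfun : ℕ → ℕ → ℝ := fun i j =>
        if h : cond i j then Classical.choose (condprf i j h) else 0 with hcfun
      set M' : ℕ → ℕ → ℝ := fun p q =>
        if cond p q then cfun p q else if cond q p then cfun q p else M p q with hM'
      have hM'sym : ∀ p q, M' p q = M' q p := by
        intro p q
        simp only [hM']
        by_cases h1 : cond p q
        · have h2 : ¬ cond q p := by
            intro h2; exact absurd h2.1 (by omega)
          rw [if_pos h1, if_neg h2, if_pos h1]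
        · by_cases h2 : cond q p
          · rw [if_neg h1, if_pos h2, if_pos h2]
          · rw [if_neg h1, if_neg h2, if_neg h2, if_neg h1, hsym]
      have hM'pres : ∀ p q, p ≤ N → q ≤ N → |x p - x q| < a → M' p q = Fe (x p - x q) := by
        intro p q hp hq hb
        have h1 : ¬ cond p q := by
          intro h; exact h.2.2.2 (by rwa [abs_sub_comm] at hb)
        have h2 : ¬ cond q p := by
          intro h; exact h.2.2.2 hb
        simp only [hM', if_neg h1, if_neg h2]
        exact hpres p q hp hq hb
      refine ⟨M', hM'sym, hM'pres, ?_⟩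
      intro i j hjN hle
      rcases Nat.lt_or_ge j i with hlt | hij
      · intro f; rw [wform_empty _ hlt]
      rcases Nat.lt_or_ge (i + ℓ) j with hnew | hold
      swap
      · -- old window : M' agrees with M there
        have : ∀ f, wform M' (Icc i j) f = wform M (Icc i j) f := by
          intro f
          apply wform_congr
          intro p hp q hq
          simp only [Finset.mem_Icc] at hp hq
          have h1 : ¬ cond p q := by intro h; omega
          have h2 : ¬ cond q p := by intro h; omega
          simp only [hM', if_neg h1, if_neg h2]
        intro f; rw [this f]; exact hpsd i j hjN hold f
      · -- new window : j = i + (ℓ+1)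
        have hj : j = i + (ℓ+1) := by omega
        by_cases hb : |x j - x i| < a
        · -- corner in the band : the whole window is given data
          have : ∀ f, wform M' (Icc i j) f = wform (fun p q => Fe (x p - x q)) (Icc i j) f := by
            intro f
            apply wform_congr
            intro p hp q hq
            simp only [Finset.mem_Icc] at hp hq
            have hpq : |x p - x q| < a := wband i j p q hp.1 hp.2 hq.1 hq.2 hjN hb
            exact hM'pres p q (by omega) (by omega) hpq
          intro f; rw [this f]; exact hband i j hjN hb f
        · -- corner completed via the one-entry lemma
          have hcij : cond i j := ⟨by omega, hjN, hj, hb⟩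
          have hcval : cfun i j = Classical.choose (condprf i j hcij) := by
            simp only [hcfun, dif_pos hcij]
          have hspec := Classical.choose_spec (condprf i j hcij)
          have : ∀ f, wform M' (Icc i j) f
              = wform (upd2 M i j (Classical.choose (condprf i j hcij))) (Icc i j) f := by
            intro f
            apply wform_congr
            intro p hp q hq
            simp only [Finset.mem_Icc] at hp hq
            by_cases h1 : p = i ∧ q = j
            · have hc1 : cond p q := by
                refine ⟨by omega, by omega, by omega, ?_⟩
                rw [h1.1, h1.2]; exact hb
              simp only [hM', if_pos hc1, upd2, if_pos (Or.inl h1)]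
              rw [h1.1, h1.2, hcval]
            · by_cases h2 : p = j ∧ q = i
              · have hc2 : cond q p := by
                  refine ⟨by omega, by omega, by omega, ?_⟩
                  rw [h2.1, h2.2]; exact hb
                have hc1 : ¬ cond p q := by intro h; omega
                simp only [hM', if_neg hc1, if_pos hc2, upd2, if_pos (Or.inr h2)]
                rw [h2.1, h2.2, hcval]
              · have hc1 : ¬ cond p q := by
                  intro h
                  exact h1 ⟨by omega, by omega⟩
                have hc2 : ¬ cond q p := by
                  intro h
                  exact h2 ⟨by omega, by omega⟩
                simp only [hM', if_neg hc1, if_neg hc2, upd2,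
                  if_neg (by tauto : ¬((p = i ∧ q = j) ∨ (p = j ∧ q = i)))]
          intro f; rw [this f]; exact hspec f
  obtain ⟨M, hs, hp, hpsd⟩ := key N
  exact ⟨M, hs, hp, hpsd 0 N le_rfl (by omega)⟩


def evenPart (F : ℝ → ℝ) : ℝ → ℝ := fun t => (F t + F (-t))/2

lemma evenPart_even (F : ℝ → ℝ) (t : ℝ) : evenPart F (-t) = evenPart F t := by
  unfold evenPart; rw [neg_neg]; ring

lemma evenPart_zero (F : ℝ → ℝ) : evenPart F 0 = F 0 := by
  unfold evenPart; rw [neg_zero]; ring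

lemma double_sum_antisymm {n : ℕ} (t : Fin n → Fin n → ℝ) (h : ∀ i j, t j i = - t i j) :
    ∑ i, ∑ j, t i j = 0 := by
  have e : (∑ i, ∑ j, t i j) = -(∑ i, ∑ j, t i j) := by
    conv_lhs => rw [Finset.sum_comm]
    rw [← Finset.sum_neg_distrib]
    refine Finset.sum_congr rfl fun i _ => ?_
    rw [← Finset.sum_neg_distrib]
    exact Finset.sum_congr rfl fun j _ => h i j
  linarith [e]

lemma form_even_eq (F : ℝ → ℝ) {n : ℕ} (x α : Fin n → ℝ) :
    ∑ i, ∑ j, α i * α j * evenPart F (x i - x j)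
      = ∑ i, ∑ j, α i * α j * F (x i - x j) := by
  have e : (∑ i, ∑ j, α i * α j * evenPart F (x i - x j))
      - (∑ i, ∑ j, α i * α j * F (x i - x j))
      = ∑ i, ∑ j, α i * α j * ((F (-(x i - x j)) - F (x i - x j))/2) := by
    rw [← Finset.sum_sub_distrib]
    refine Finset.sum_congr rfl fun i _ => ?_
    rw [← Finset.sum_sub_distrib]
    refine Finset.sum_congr rfl fun j _ => ?_
    unfold evenPart; ring
  have z : (∑ i, ∑ j, α i * α j * ((F (-(x i - x j)) - F (x i - x j))/2)) = 0 := by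
    apply double_sum_antisymm
    intro i j
    have : -(x j - x i) = x i - x j := by ring
    rw [← this, neg_neg]
    ring
  linarith [e, z]

lemma bridge (F : ℝ → ℝ) (a : ℝ) (hF : IsPosDefOn (Set.Ioo (-a) a) F)
    (x : ℕ → ℝ) (i j : ℕ)
    (hwin : ∀ p q, p ∈ Icc i j → q ∈ Icc i j → |x p - x q| < a) :
    PSDon (fun p q => evenPart F (x p - x q)) (Icc i j) := by
  intro f
  set n := j + 1 - i with hn
  have conv1 : ∀ g : ℕ → ℝ, ∑ p ∈ Icc i j, g p = ∑ k : Fin n, g (i + (k : ℕ)) := by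
    intro g
    rw [Fin.sum_univ_eq_sum_range (fun k => g (i + k))]
    apply Finset.sum_nbij' (fun p => p - i) (fun k => i + k)
    · intro p hp; simp only [Finset.mem_Icc] at hp; simp only [Finset.mem_range]; omega
    · intro k hk; simp only [Finset.mem_range] at hk; simp only [Finset.mem_Icc]; omega
    · intro p hp; simp only [Finset.mem_Icc] at hp; omega
    · intro k hk; simp only [Finset.mem_range] at hk; omega
    · intro p hp; simp only [Finset.mem_Icc] at hp
      congr 1; omega
  have e : wform (fun p q => evenPart F (x p - x q)) (Icc i j) f
      = ∑ k : Fin n, ∑ l : Fin n,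
          f (i + (k:ℕ)) * f (i + (l:ℕ)) * evenPart F (x (i + (k:ℕ)) - x (i + (l:ℕ))) := by
    unfold wform
    rw [conv1]
    exact Finset.sum_congr rfl fun k _ => conv1 _
  rw [e, form_even_eq F (fun k : Fin n => x (i + (k:ℕ))) (fun k : Fin n => f (i + (k:ℕ)))]
  apply hF n (fun k : Fin n => x (i + (k:ℕ))) (fun k : Fin n => f (i + (k:ℕ)))
  intro k l
  rw [Set.mem_Ioo]
  have hk : i + (k:ℕ) ∈ Icc i j := by
    simp only [Finset.mem_Icc]
    have := k.2
    omega
  have hl : i + (l:ℕ) ∈ Icc i j := by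
    simp only [Finset.mem_Icc]
    have := l.2
    omega
  have := hwin _ _ hk hl
  rw [abs_lt] at this
  exact ⟨this.1, this.2⟩


/-- value of `wform` on a vector supported on two points -/
lemma wform_pair (M : ℕ → ℕ → ℝ) {s : Finset ℕ} {p q : ℕ} (hp : p ∈ s) (hq : q ∈ s)
    (hpq : p ≠ q) (c1 c2 : ℝ) :
    wform M s (fun r => if r = p then c1 else if r = q then c2 else 0)
      = c1^2 * M p p + c1*c2*(M p q + M q p) + c2^2 * M q q := by
  set f : ℕ → ℝ := fun r => if r = p then c1 else if r = q then c2 else 0 with hf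
  have hsub : ({p, q} : Finset ℕ) ⊆ s := by
    intro r hr; simp at hr; rcases hr with h | h <;> simp [h, hp, hq]
  have hzero : ∀ r ∈ s, r ∉ ({p, q} : Finset ℕ) → f r = 0 := by
    intro r _ hr
    simp at hr
    simp [hf, hr.1, hr.2]
  rw [wform_restrict hsub f hzero]
  unfold wform
  rw [Finset.sum_pair hpq, Finset.sum_pair hpq, Finset.sum_pair hpq]
  have fp : f p = c1 := by simp [hf]
  have fq : f q = c2 := by simp [hf, hpq.symm]
  rw [fp, fq]; ring

/-- entries of a psd matrix with constant diagonal `d` are bounded -/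
lemma psd_entry_bound (M : ℕ → ℕ → ℝ) {s : Finset ℕ} (hpsd : PSDon M s)
    {p q : ℕ} (hp : p ∈ s) (hq : q ∈ s) (hpq : p ≠ q) (d : ℝ)
    (hdp : M p p = d) (hdq : M q q = d) : |M p q + M q p| ≤ 2*d := by
  have h1 := hpsd (fun r => if r = p then 1 else if r = q then 1 else 0)
  have h2 := hpsd (fun r => if r = p then 1 else if r = q then -1 else 0)
  rw [wform_pair M hp hq hpq 1 1] at h1
  rw [wform_pair M hp hq hpq 1 (-1)] at h2
  rw [hdp, hdq] at h1 h2
  rw [abs_le]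
  constructor <;> nlinarith [h1, h2]

/-- collapse a tuple-indexed double form to a finitely supported `wform` -/
lemma fiber_collapse {n : ℕ} (B : ℕ → ℕ → ℝ) (N : ℕ) (ι' : Fin n → ℕ)
    (hι : ∀ i, ι' i ∈ Icc 0 N) (α : Fin n → ℝ) :
    ∑ i, ∑ j, α i * α j * B (ι' i) (ι' j)
      = wform B (Icc 0 N) (fun p => ∑ i ∈ Finset.univ.filter (fun i => ι' i = p), α i) := by
  classical
  rw [← Finset.sum_fiberwise_of_maps_to (fun i (_ : i ∈ Finset.univ) => hι i)
    (fun i => ∑ j, α i * α j * B (ι' i) (ι' j))]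
  unfold wform
  refine Finset.sum_congr rfl fun p _ => ?_
  have e1 : ∀ i ∈ Finset.univ.filter (fun i => ι' i = p),
      (∑ j, α i * α j * B (ι' i) (ι' j))
        = ∑ q ∈ Icc 0 N,
            (α i * ((∑ j ∈ Finset.univ.filter (fun j => ι' j = q), α j) * B p q)) := by
    intro i hi
    rw [Finset.mem_filter] at hi
    rw [← Finset.sum_fiberwise_of_maps_to (fun j (_ : j ∈ Finset.univ) => hι j)
      (fun j => α i * α j * B (ι' i) (ι' j))]
    refine Finset.sum_congr rfl fun q _ => ?_
    have e2 : ∀ j ∈ Finset.univ.filter (fun j => ι' j = q),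
        α i * α j * B (ι' i) (ι' j) = (α i * B p q) * α j := by
      intro j hj
      rw [Finset.mem_filter] at hj
      rw [hi.2, hj.2]; ring
    rw [Finset.sum_congr rfl e2, ← Finset.mul_sum]
    ring
  rw [Finset.sum_congr rfl e1, Finset.sum_comm]
  refine Finset.sum_congr rfl fun q _ => ?_
  have e3 : ∀ i ∈ Finset.univ.filter (fun i => ι' i = p),
      α i * ((∑ j ∈ Finset.univ.filter (fun j => ι' j = q), α j) * B p q)
        = ((∑ j ∈ Finset.univ.filter (fun j => ι' j = q), α j) * B p q) * α i := by
    intro i _; ring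
  rw [Finset.sum_congr rfl e3, ← Finset.mul_sum]
  ring

/-- Step C: a (not necessarily translation-invariant) positive kernel on `ℝ × ℝ`
extending the band kernel of `F`. -/
theorem kernel_extension (a : ℝ) (ha : 0 < a) (F : ℝ → ℝ)
    (hF : IsPosDefOn (Set.Ioo (-a) a) F) (hF0 : 0 ≤ F 0) :
    ∃ k : ℝ × ℝ → ℝ,
      (∀ (n : ℕ) (y : Fin n → ℝ) (α : Fin n → ℝ), 0 ≤ ∑ i, ∑ j, α i * α j * k (y i, y j)) ∧
      (∀ s t : ℝ, |s - t| < a → k (s, t) = evenPart F (s - t)) ∧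
      (∀ z : ℝ × ℝ, |k z| ≤ F 0) := by
  classical
  set K := (ℝ × ℝ) → (Set.Icc (-(F 0)) (F 0)) with hK
  have hmem0 : (0:ℝ) ∈ Set.Icc (-(F 0)) (F 0) := by
    rw [Set.mem_Icc]; constructor <;> linarith
  -- constraint index
  set ι : Type := ((Σ n : ℕ, (Fin n → ℝ) × (Fin n → ℝ))) ⊕ (ℝ × ℝ) with hι
  set tset : ι → Set K := fun i =>
    match i with
    | Sum.inl ⟨n, y, α⟩ => {κ | 0 ≤ ∑ i, ∑ j, α i * α j * (κ (y i, y j) : ℝ)}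
    | Sum.inr (s, t) =>
        if |s - t| < a then {κ | (κ (s, t) : ℝ) = evenPart F (s - t)} else Set.univ
    with htset
  have hclosed : ∀ i, IsClosed (tset i) := by
    rintro (⟨n, y, α⟩ | ⟨s, t⟩)
    · apply isClosed_le continuous_const
      apply continuous_finset_sum
      intro i _
      apply continuous_finset_sum
      intro j _
      exact continuous_const.mul ((continuous_apply (y i, y j)).subtype_val)
    · show IsClosed (if |s - t| < a then _ else _)
      split_ifs
      · exact isClosed_eq ((continuous_apply (s, t)).subtype_val) continuous_const
      · exact isClosed_univ
  have hne : (⋂ i, tset i).Nonempty := by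
    by_contra hcon
    rw [Set.not_nonempty_iff_eq_empty] at hcon
    have hempty : (Set.univ : Set K) ∩ ⋂ i, tset i = ∅ := by rw [hcon]; simp
    obtain ⟨u, hu⟩ := isCompact_univ.elim_finite_subfamily_closed tset hclosed hempty
    -- build an explicit member of the finite subfamily
    set pts : ι → Finset ℝ := fun i =>
      match i with
      | Sum.inl ⟨n, y, _⟩ => Finset.image y Finset.univ
      | Sum.inr (s, t) => {s, t}
      with hpts
    set X : Finset ℝ := u.biUnion pts with hX
    have hptsX : ∀ i ∈ u, ∀ r ∈ pts i, r ∈ X := by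
      intro i hi r hr
      exact Finset.mem_biUnion.2 ⟨i, hi, hr⟩
    by_cases hXne : X.Nonempty
    · -- main case
      set N' := X.card with hN'
      have hN'pos : 0 < N' := Finset.card_pos.2 hXne
      set N := N' - 1 with hN
      set ord := X.orderIsoOfFin rfl with hord
      set xf : ℕ → ℝ := fun p => if h : p < N' then (ord ⟨p, h⟩ : ℝ) else 0 with hxf
      have hmono : ∀ p q, p ≤ q → q ≤ N → xf p ≤ xf q := by
        intro p q hpq hqN
        have hp : p < N' := by omega
        have hq : q < N' := by omega
        simp only [hxf, dif_pos hp, dif_pos hq]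
        have : (⟨p, hp⟩ : Fin N') ≤ ⟨q, hq⟩ := by exact hpq
        exact Subtype.coe_le_coe.2 (ord.le_iff_le.2 this)
      set idx : ℝ → ℕ := fun r => if h : r ∈ X then (ord.symm ⟨r, h⟩ : Fin N').val else 0
        with hidx
      have idx_le : ∀ r, idx r ≤ N := by
        intro r
        simp only [hidx]
        split_ifs with h
        · have := (ord.symm ⟨r, h⟩).2; omega
        · omega
      have xf_idx : ∀ r, r ∈ X → xf (idx r) = r := by
        intro r hr
        simp only [hidx, dif_pos hr, hxf]
        have hlt : ((ord.symm ⟨r, hr⟩ : Fin N') : ℕ) < N' := (ord.symm ⟨r, hr⟩).2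
        rw [dif_pos hlt]
        have : (⟨(ord.symm ⟨r, hr⟩ : Fin N'), hlt⟩ : Fin N') = ord.symm ⟨r, hr⟩ := by
          apply Fin.ext; rfl
        rw [this, ord.apply_symm_apply]
      have hband : ∀ i j : ℕ, j ≤ N → |xf j - xf i| < a →
          PSDon (fun p q => evenPart F (xf p - xf q)) (Icc i j) := by
        intro i j hjN hcorner
        apply bridge F a hF
        intro p q hp hq
        simp only [Finset.mem_Icc] at hp hq
        have h1 : xf i ≤ xf p := hmono i p hp.1 (by omega)
        have h2 : xf p ≤ xf j := hmono p j hp.2 (by omega)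
        have h3 : xf i ≤ xf q := hmono i q hq.1 (by omega)
        have h4 : xf q ≤ xf j := hmono q j hq.2 (by omega)
        rw [abs_lt] at hcorner ⊢
        constructor <;> linarith [hcorner.1, hcorner.2]
      obtain ⟨Mstar, hMsym, hMpres, hMpsd⟩ :=
        band_completion a ha (evenPart F) (evenPart_even F) xf N hmono hband
      have hdiag : ∀ p, p ≤ N → Mstar p p = F 0 := by
        intro p hp
        have := hMpres p p hp hp (by simp [ha])
        rw [this, sub_self, evenPart_zero]
      have hbound : ∀ p q, p ≤ N → q ≤ N → |Mstar p q| ≤ F 0 := by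
        intro p q hp hq
        by_cases hpq : p = q
        · subst hpq; rw [hdiag p hp, abs_of_nonneg hF0]
        · have := psd_entry_bound Mstar hMpsd (by simp [Finset.mem_Icc]; omega)
            (by simp [Finset.mem_Icc]; omega) hpq (F 0) (hdiag p hp) (hdiag q hq)
          rw [← hMsym p q] at this
          have e : Mstar p q + Mstar p q = 2 * Mstar p q := by ring
          rw [e, abs_mul, abs_two] at this
          linarith [abs_nonneg (Mstar p q), this]
      set κu : K := fun z =>
        if h : z.1 ∈ X ∧ z.2 ∈ X then
          ⟨Mstar (idx z.1) (idx z.2), by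
            rw [Set.mem_Icc]
            have := hbound (idx z.1) (idx z.2) (idx_le _) (idx_le _)
            rw [abs_le] at this
            exact this⟩
        else ⟨0, hmem0⟩ with hκu
      have hκmem : κu ∈ (Set.univ : Set K) ∩ ⋂ i ∈ u, tset i := by
        refine ⟨Set.mem_univ _, ?_⟩
        rw [Set.mem_iInter₂]
        intro i hi
        match i with
        | Sum.inl ⟨n, y, α⟩ =>
          show 0 ≤ ∑ i', ∑ j', α i' * α j' * (κu (y i', y j') : ℝ)
          have hy : ∀ i', y i' ∈ X := by
            intro i'
            apply hptsX _ hi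
            show y i' ∈ Finset.image y Finset.univ
            exact Finset.mem_image_of_mem y (Finset.mem_univ i')
          have hval : ∀ i' j', (κu (y i', y j') : ℝ) = Mstar (idx (y i')) (idx (y j')) := by
            intro i' j'
            have hcond : y i' ∈ X ∧ y j' ∈ X := ⟨hy i', hy j'⟩
            show ((if h : y i' ∈ X ∧ y j' ∈ X then _ else _ : Set.Icc (-(F 0)) (F 0)) : ℝ) = _
            rw [dif_pos hcond]
          have e : (∑ i', ∑ j', α i' * α j' * (κu (y i', y j') : ℝ))
              = ∑ i', ∑ j', α i' * α j' * Mstar (idx (y i')) (idx (y j')) := by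
            refine Finset.sum_congr rfl fun i' _ => Finset.sum_congr rfl fun j' _ => ?_
            rw [hval]
          rw [e, fiber_collapse Mstar N (fun i' => idx (y i'))
            (fun i' => Finset.mem_Icc.mpr ⟨Nat.zero_le _, idx_le _⟩) α]
          exact hMpsd _
        | Sum.inr (s, t) =>
          show κu ∈ (if |s - t| < a then _ else Set.univ)
          split_ifs with hb
          · show (κu (s, t) : ℝ) = evenPart F (s - t)
            have hs : s ∈ X := hptsX _ hi s (by show s ∈ ({s, t} : Finset ℝ); simp)
            have ht : t ∈ X := hptsX _ hi t (by show t ∈ ({s, t} : Finset ℝ); simp)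
            have hval : (κu (s, t) : ℝ) = Mstar (idx s) (idx t) := by
              have hcond : s ∈ X ∧ t ∈ X := ⟨hs, ht⟩
              show ((if h : s ∈ X ∧ t ∈ X then _ else _ : Set.Icc (-(F 0)) (F 0)) : ℝ) = _
              rw [dif_pos hcond]
            rw [hval, hMpres _ _ (idx_le _) (idx_le _)
              (by rw [xf_idx s hs, xf_idx t ht]; exact hb), xf_idx s hs, xf_idx t ht]
          · exact Set.mem_univ _
      rw [hu] at hκmem
      exact hκmem
    · -- degenerate case : no points at all
      rw [Finset.not_nonempty_iff_eq_empty] at hXne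
      set κ0 : K := fun _ => ⟨0, hmem0⟩ with hκ0
      have hκmem : κ0 ∈ (Set.univ : Set K) ∩ ⋂ i ∈ u, tset i := by
        refine ⟨Set.mem_univ _, ?_⟩
        rw [Set.mem_iInter₂]
        intro i hi
        match i with
        | Sum.inl ⟨n, y, α⟩ =>
          show 0 ≤ ∑ i', ∑ j', α i' * α j' * ((κ0 (y i', y j') : ℝ))
          simp [hκ0]
        | Sum.inr (s, t) =>
          exfalso
          have hs : s ∈ X := hptsX _ hi s (by show s ∈ ({s, t} : Finset ℝ); simp)
          rw [hXne] at hs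
          exact absurd hs (Finset.notMem_empty s)
      rw [hu] at hκmem
      exact hκmem
  obtain ⟨κ, hκ⟩ := hne
  rw [Set.mem_iInter] at hκ
  refine ⟨fun z => (κ z : ℝ), ?_, ?_, ?_⟩
  · intro n y α
    exact hκ (Sum.inl ⟨n, y, α⟩)
  · intro s t hst
    have := hκ (Sum.inr (s, t))
    rw [htset] at this
    simp only [if_pos hst] at this
    exact this
  · intro z
    have := (κ z).2
    rw [Set.mem_Icc] at this
    rw [abs_le]; exact this


/-- iterated averaging operator along a list of step directions -/
def Av (R : ℕ) : List ℝ → (ℝ → ℝ) → (ℝ → ℝ)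
  | [], g => g
  | (τ :: T), g => fun β => (∑ r ∈ Finset.range (R+1), Av R T g (β + (r:ℝ) * τ)) / (R+1)

lemma Av_cons (R : ℕ) (τ : ℝ) (T : List ℝ) (g : ℝ → ℝ) (β : ℝ) :
    Av R (τ :: T) g β = (∑ r ∈ Finset.range (R+1), Av R T g (β + (r:ℝ) * τ)) / ((R:ℝ)+1) := by
  simp only [Av]

lemma Av_bound (R : ℕ) (L : List ℝ) (g : ℝ → ℝ) (c : ℝ) (hg : ∀ β, |g β| ≤ c) :
    ∀ β, |Av R L g β| ≤ c := by
  induction L with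
  | nil => exact hg
  | cons τ T IH =>
    intro β
    have h3 : (0:ℝ) < (R:ℝ)+1 := by positivity
    rw [Av_cons, abs_div, abs_of_pos h3, div_le_iff₀ h3]
    calc |∑ r ∈ Finset.range (R+1), Av R T g (β + (r:ℝ) * τ)|
        ≤ ∑ r ∈ Finset.range (R+1), |Av R T g (β + (r:ℝ) * τ)| :=
          Finset.abs_sum_le_sum_abs _ _
      _ ≤ ∑ _r ∈ Finset.range (R+1), c := Finset.sum_le_sum fun r _ => IH _
      _ = c * ((R:ℝ)+1) := by rw [Finset.sum_const, Finset.card_range]; push_cast; ring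

lemma Av_nonneg (R : ℕ) (L : List ℝ) (g : ℝ → ℝ) (hg : ∀ β, 0 ≤ g β) :
    ∀ β, 0 ≤ Av R L g β := by
  induction L with
  | nil => exact hg
  | cons τ T IH =>
    intro β
    rw [Av_cons]
    apply div_nonneg
    · exact Finset.sum_nonneg fun r _ => IH _
    · positivity

lemma Av_const (R : ℕ) (L : List ℝ) (c : ℝ) : ∀ β, Av R L (fun _ => c) β = c := by
  induction L with
  | nil => intro β; rfl
  | cons τ T IH =>
    intro β
    rw [Av_cons]
    have e : ∀ r ∈ Finset.range (R+1), Av R T (fun _ => c) (β + (r:ℝ) * τ) = c := fun r _ => IH _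
    rw [Finset.sum_congr rfl e, Finset.sum_const, Finset.card_range, nsmul_eq_mul]
    have h3 : ((R:ℝ)+1) ≠ 0 := by positivity
    push_cast
    field_simp

lemma Av_sum (R : ℕ) (L : List ℝ) {ι : Type*} (s : Finset ι) (w : ι → ℝ) (h : ι → ℝ → ℝ) :
    ∀ β, Av R L (fun x => ∑ p ∈ s, w p * h p x) β = ∑ p ∈ s, w p * Av R L (h p) β := by
  induction L with
  | nil => intro β; rfl
  | cons τ T IH =>
    intro β
    rw [Av_cons]
    have e1 : ∀ r ∈ Finset.range (R+1),
        Av R T (fun x => ∑ p ∈ s, w p * h p x) (β + (r:ℝ) * τ)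
          = ∑ p ∈ s, w p * Av R T (h p) (β + (r:ℝ) * τ) := fun r _ => IH _
    rw [Finset.sum_congr rfl e1, Finset.sum_comm, Finset.sum_div]
    refine Finset.sum_congr rfl fun p _ => ?_
    rw [← Finset.mul_sum, mul_div_assoc, ← Av_cons]

lemma Av_shift (R : ℕ) (L : List ℝ) (g : ℝ → ℝ) (σ : ℝ) :
    ∀ β, Av R L (fun x => g (x + σ)) β = Av R L g (β + σ) := by
  induction L with
  | nil => intro β; rfl
  | cons τ T IH =>
    intro β
    rw [Av_cons, Av_cons]
    have e1 : ∀ r ∈ Finset.range (R+1),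
        Av R T (fun x => g (x + σ)) (β + (r:ℝ) * τ) = Av R T g ((β + σ) + (r:ℝ) * τ) := by
      intro r _
      rw [IH]
      congr 1
      ring
    rw [Finset.sum_congr rfl e1]

lemma Av_shift_est (R : ℕ) (L : List ℝ) (g : ℝ → ℝ) (c : ℝ) (τ : ℝ) (hτ : τ ∈ L)
    (hg : ∀ β, |g β| ≤ c) :
    ∀ β, |Av R L (fun x => g (x + τ)) β - Av R L g β| ≤ 2*c/((R:ℝ)+1) := by
  induction L with
  | nil => exact absurd hτ List.not_mem_nil
  | cons σ T IH =>
    intro β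
    have h3 : (0:ℝ) < (R:ℝ)+1 := by positivity
    rcases List.mem_cons.1 hτ with rfl | hmem
    · -- the head direction: telescoping
      rw [Av_cons, Av_cons, div_sub_div_same, ← Finset.sum_sub_distrib]
      have e1 : ∀ r ∈ Finset.range (R+1),
          Av R T (fun x => g (x + τ)) (β + (r:ℝ) * τ) - Av R T g (β + (r:ℝ) * τ)
            = (fun m : ℕ => Av R T g (β + (m:ℝ) * τ)) (r+1)
              - (fun m : ℕ => Av R T g (β + (m:ℝ) * τ)) r := by
        intro r _
        show _ = Av R T g (β + ((r+1 : ℕ):ℝ) * τ) - Av R T g (β + (r:ℝ) * τ)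
        rw [Av_shift]
        congr 2
        push_cast
        ring
      rw [Finset.sum_congr rfl e1,
        Finset.sum_range_sub (fun m : ℕ => Av R T g (β + (m:ℝ) * τ)) (R+1)]
      rw [abs_div, abs_of_pos h3, div_le_div_iff_of_pos_right h3]
      calc |(fun m : ℕ => Av R T g (β + (m:ℝ) * τ)) (R+1)
            - (fun m : ℕ => Av R T g (β + (m:ℝ) * τ)) 0|
          ≤ |(fun m : ℕ => Av R T g (β + (m:ℝ) * τ)) (R+1)|
            + |(fun m : ℕ => Av R T g (β + (m:ℝ) * τ)) 0| := abs_sub _ _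
        _ ≤ c + c := add_le_add (Av_bound R T g c hg _) (Av_bound R T g c hg _)
        _ = 2*c := by ring
    · -- the direction sits in the tail
      rw [Av_cons, Av_cons, div_sub_div_same, ← Finset.sum_sub_distrib, abs_div, abs_of_pos h3,
        div_le_div_iff_of_pos_right h3]
      calc |∑ r ∈ Finset.range (R+1),
          (Av R T (fun x => g (x + τ)) (β + (r:ℝ) * σ) - Av R T g (β + (r:ℝ) * σ))|
          ≤ ∑ r ∈ Finset.range (R+1),
            |Av R T (fun x => g (x + τ)) (β + (r:ℝ) * σ) - Av R T g (β + (r:ℝ) * σ)| :=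
            Finset.abs_sum_le_sum_abs _ _
        _ ≤ ∑ _r ∈ Finset.range (R+1), 2*c/((R:ℝ)+1) := Finset.sum_le_sum fun r _ => IH hmem _
        _ = 2*c := by
            rw [Finset.sum_const, Finset.card_range, nsmul_eq_mul]
            push_cast
            field_simp


/-- the averaged approximant -/
def eta (k : ℝ × ℝ → ℝ) (SR : Finset ℝ × ℕ) : ℝ → ℝ :=
  fun d => Av SR.2 SR.1.toList (fun β => k (β, β + d)) 0

lemma eta_band (a : ℝ) (F : ℝ → ℝ) (k : ℝ × ℝ → ℝ)
    (hkband : ∀ s t : ℝ, |s - t| < a → k (s, t) = evenPart F (s - t))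
    (SR : Finset ℝ × ℕ) (d : ℝ) (hd : |d| < a) : eta k SR d = evenPart F d := by
  have hconst : (fun β => k (β, β + d)) = (fun _ : ℝ => evenPart F d) := by
    funext β
    have h1 : |β - (β + d)| < a := by
      have : β - (β + d) = -d := by ring
      rw [this, abs_neg]; exact hd
    rw [hkband β (β + d) h1]
    have : β - (β + d) = -d := by ring
    rw [this, evenPart_even]
  unfold eta
  rw [hconst, Av_const]

lemma eta_bound (F : ℝ → ℝ) (k : ℝ × ℝ → ℝ) (hkbound : ∀ z : ℝ × ℝ, |k z| ≤ F 0)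
    (SR : Finset ℝ × ℕ) (d : ℝ) : |eta k SR d| ≤ F 0 :=
  Av_bound _ _ _ _ (fun β => hkbound _) 0

lemma eta_form (F : ℝ → ℝ) (k : ℝ × ℝ → ℝ)
    (hkpsd : ∀ (n : ℕ) (y : Fin n → ℝ) (α : Fin n → ℝ),
      0 ≤ ∑ i, ∑ j, α i * α j * k (y i, y j))
    (hkbound : ∀ z : ℝ × ℝ, |k z| ≤ F 0)
    (S : Finset ℝ) (R : ℕ) (n : ℕ) (xs : Fin n → ℝ) (α : Fin n → ℝ)
    (hxs : ∀ i, xs i ∈ S) :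
    -(((∑ i, ∑ j, |α i * α j|) * (2 * F 0))/((R:ℝ)+1))
      ≤ ∑ i, ∑ j, α i * α j * eta k (S, R) (xs i - xs j) := by
  classical
  set L := S.toList with hL
  -- pointwise nonnegative combination
  have hXi : ∀ β : ℝ, 0 ≤ ∑ p : Fin n × Fin n, (α p.1 * α p.2) * k (β + xs p.2, β + xs p.1) := by
    intro β
    have h := hkpsd n (fun i => β + xs i) α
    rw [Finset.sum_comm] at h
    rw [Fintype.sum_prod_type]
    have e : ∀ x : Fin n, ∀ y : Fin n,
        (α x * α y) * k (β + xs y, β + xs x) = α x * α y * k (β + xs y, β + xs x) := by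
      intro x y; ring
    calc (∑ x : Fin n, ∑ y : Fin n, (α x * α y) * k (β + xs y, β + xs x))
        = ∑ x : Fin n, ∑ y : Fin n, α y * α x * k (β + xs y, β + xs x) := by
          refine Finset.sum_congr rfl fun x _ => Finset.sum_congr rfl fun y _ => by ring
      _ ≥ 0 := h
  -- averaged nonnegative combination
  have hT2 : 0 ≤ ∑ p : Fin n × Fin n, (α p.1 * α p.2) *
      Av R L (fun β => k (β + xs p.2, β + xs p.1)) 0 := by
    rw [← Av_sum R L Finset.univ (fun p : Fin n × Fin n => α p.1 * α p.2)
      (fun p β => k (β + xs p.2, β + xs p.1)) 0]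
    exact Av_nonneg R L _ hXi 0
  -- per-term comparison between the two averages
  have hterm : ∀ p : Fin n × Fin n,
      |Av R L (fun β => k (β + xs p.2, β + xs p.1)) 0 - eta k (S, R) (xs p.1 - xs p.2)|
        ≤ 2*(F 0)/((R:ℝ)+1) := by
    intro p
    have e : (fun β => k (β + xs p.2, β + xs p.1))
        = (fun β => (fun x => k (x, x + (xs p.1 - xs p.2))) (β + xs p.2)) := by
      funext β
      have : β + xs p.1 = (β + xs p.2) + (xs p.1 - xs p.2) := by ring
      rw [this]
    rw [e]
    exact Av_shift_est R L (fun x => k (x, x + (xs p.1 - xs p.2))) (F 0) (xs p.2)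
      (Finset.mem_toList.2 (hxs p.2)) (fun β => hkbound _) 0
  -- assemble
  have hdiff : |∑ p : Fin n × Fin n, (α p.1 * α p.2) *
      (Av R L (fun β => k (β + xs p.2, β + xs p.1)) 0 - eta k (S, R) (xs p.1 - xs p.2))|
        ≤ (∑ p : Fin n × Fin n, |α p.1 * α p.2|) * (2*(F 0)/((R:ℝ)+1)) := by
    calc |∑ p : Fin n × Fin n, (α p.1 * α p.2) *
        (Av R L (fun β => k (β + xs p.2, β + xs p.1)) 0 - eta k (S, R) (xs p.1 - xs p.2))|
        ≤ ∑ p : Fin n × Fin n, |(α p.1 * α p.2) *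
          (Av R L (fun β => k (β + xs p.2, β + xs p.1)) 0 - eta k (S, R) (xs p.1 - xs p.2))| :=
          Finset.abs_sum_le_sum_abs _ _
      _ ≤ ∑ p : Fin n × Fin n, |α p.1 * α p.2| * (2*(F 0)/((R:ℝ)+1)) := by
          refine Finset.sum_le_sum fun p _ => ?_
          rw [abs_mul]
          exact mul_le_mul_of_nonneg_left (hterm p) (abs_nonneg _)
      _ = (∑ p : Fin n × Fin n, |α p.1 * α p.2|) * (2*(F 0)/((R:ℝ)+1)) := by
          rw [Finset.sum_mul]
  have hform : (∑ i, ∑ j, α i * α j * eta k (S, R) (xs i - xs j))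
      = ∑ p : Fin n × Fin n, (α p.1 * α p.2) * eta k (S, R) (xs p.1 - xs p.2) := by
    rw [Fintype.sum_prod_type]
  have habs : (∑ i, ∑ j, |α i * α j|) = ∑ p : Fin n × Fin n, |α p.1 * α p.2| := by
    rw [Fintype.sum_prod_type]
  rw [hform, habs]
  have hsplit : ∑ p : Fin n × Fin n, (α p.1 * α p.2) * eta k (S, R) (xs p.1 - xs p.2)
      = (∑ p : Fin n × Fin n, (α p.1 * α p.2) *
          Av R L (fun β => k (β + xs p.2, β + xs p.1)) 0)
        - ∑ p : Fin n × Fin n, (α p.1 * α p.2) *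
          (Av R L (fun β => k (β + xs p.2, β + xs p.1)) 0 - eta k (S, R) (xs p.1 - xs p.2)) := by
    rw [← Finset.sum_sub_distrib]
    refine Finset.sum_congr rfl fun p _ => by ring
  rw [hsplit]
  have h1 := neg_abs_le (∑ p : Fin n × Fin n, (α p.1 * α p.2) *
      (Av R L (fun β => k (β + xs p.2, β + xs p.1)) 0 - eta k (S, R) (xs p.1 - xs p.2)))
  have h2 : (∑ p : Fin n × Fin n, |α p.1 * α p.2|) * (2 * F 0) / ((R:ℝ)+1)
      = (∑ p : Fin n × Fin n, |α p.1 * α p.2|) * (2*(F 0)/((R:ℝ)+1)) := by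
    field_simp
  rw [h2]
  have h3 := le_abs_self (∑ p : Fin n × Fin n, (α p.1 * α p.2) *
      (Av R L (fun β => k (β + xs p.2, β + xs p.1)) 0 - eta k (S, R) (xs p.1 - xs p.2)))
  linarith [hdiff, hT2, h1, h3]

end KreinExt

open KreinExt in
/-- Krein–Artjomenko extension theorem: every function positive-definite on `(-a, a)` extends
to a positive-definite function on all of `ℝ`. -/
theorem posdef_extension_real_line (a : ℝ) (ha : 0 < a) (F : ℝ → ℝ)
    (hF : IsPosDefOn (Set.Ioo (-a) a) F) :
    ∃ G : ℝ → ℝ, IsPosDefOn Set.univ G ∧ ∀ t ∈ Set.Ioo (-a) a, G t = F t := by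
  classical
  have hF0 : 0 ≤ F 0 := by
    have h := hF 1 (fun _ => 0) (fun _ => 1)
      (by intro i j; simp [Set.mem_Ioo]; exact ha)
    simpa using h
  obtain ⟨k, hkpsd, hkband, hkbound⟩ := kernel_extension a ha F hF hF0
  -- the directed index type and the ultrafilter
  haveI : Nonempty (Finset ℝ × ℕ) := ⟨(∅, 0)⟩
  set u : Ultrafilter (Finset ℝ × ℕ) := Ultrafilter.of Filter.atTop with hu
  have huatTop : (u : Filter (Finset ℝ × ℕ)) ≤ Filter.atTop := Ultrafilter.of_le _
  -- the compact target space
  set Kc := ℝ → (Set.Icc (-(F 0)) (F 0)) with hKc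
  set η' : (Finset ℝ × ℕ) → Kc := fun SR t =>
    ⟨eta k SR t, by
      rw [Set.mem_Icc]
      have := eta_bound F k hkbound SR t
      rw [abs_le] at this
      exact this⟩ with hη'
  obtain ⟨κs, -, hκs⟩ := isCompact_univ.ultrafilter_le_nhds (u.map η')
    (by rw [Filter.le_principal_iff]; exact Filter.univ_mem)
  have hTend : Filter.Tendsto η' u (nhds κs) := by
    rw [Ultrafilter.coe_map] at hκs
    exact hκs
  set Gt : ℝ → ℝ := fun t => (κs t : ℝ) with hGt
  -- the limit agrees with the even part of `F` on the band
  have hGtband : ∀ t, |t| < a → Gt t = evenPart F t := by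
    intro t ht
    have hcont : Continuous (fun κ : Kc => (κ t : ℝ)) := (continuous_apply t).subtype_val
    have h1 : Filter.Tendsto (fun SR => (η' SR t : ℝ)) u (nhds (Gt t)) :=
      (hcont.tendsto κs).comp hTend
    have h2 : (fun SR : Finset ℝ × ℕ => (η' SR t : ℝ)) = fun _ => evenPart F t := by
      funext SR
      exact eta_band a F k hkband SR t ht
    rw [h2] at h1
    exact tendsto_nhds_unique h1 tendsto_const_nhds
  -- the limit is positive definite
  have hGtpd : ∀ (n : ℕ) (xs α : Fin n → ℝ),
      0 ≤ ∑ i, ∑ j, α i * α j * Gt (xs i - xs j) := by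
    intro n xs α
    set W := ∑ i, ∑ j, |α i * α j| with hW
    have hWnn : 0 ≤ W :=
      Finset.sum_nonneg fun i _ => Finset.sum_nonneg fun j _ => abs_nonneg _
    set c0 := W * (2 * F 0) with hc0
    have hc0nn : 0 ≤ c0 := mul_nonneg hWnn (by linarith)
    have hcont : Continuous (fun κ : Kc => ∑ i, ∑ j, α i * α j * (κ (xs i - xs j) : ℝ)) := by
      apply continuous_finset_sum
      intro i _
      apply continuous_finset_sum
      intro j _
      exact continuous_const.mul ((continuous_apply (xs i - xs j)).subtype_val)
    have hTendForm : Filter.Tendsto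
        (fun SR => ∑ i, ∑ j, α i * α j * (η' SR (xs i - xs j) : ℝ)) u
        (nhds (∑ i, ∑ j, α i * α j * Gt (xs i - xs j))) :=
      (hcont.tendsto κs).comp hTend
    have hev : ∀ ε : ℝ, 0 < ε →
        ∀ᶠ SR in (u : Filter (Finset ℝ × ℕ)),
          -ε ≤ ∑ i, ∑ j, α i * α j * (η' SR (xs i - xs j) : ℝ) := by
      intro ε hε
      obtain ⟨R0, hR0⟩ := exists_nat_gt (c0/ε)
      have hR0' : c0 / ((R0:ℝ)+1) ≤ ε := by
        rw [div_le_iff₀ (by positivity)]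
        have h1 : c0 / ε < R0 := hR0
        rw [div_lt_iff₀ hε] at h1
        nlinarith [h1, hε]
      have hmem : {SR : Finset ℝ × ℕ | (Finset.image xs Finset.univ, R0) ≤ SR}
          ∈ (u : Filter (Finset ℝ × ℕ)) :=
        huatTop (Filter.mem_atTop (Finset.image xs Finset.univ, R0))
      filter_upwards [hmem] with SR hSR
      obtain ⟨S, R⟩ := SR
      have hS : Finset.image xs Finset.univ ⊆ S := hSR.1
      have hR : R0 ≤ R := hSR.2
      have hxsS : ∀ i, xs i ∈ S := fun i =>
        hS (Finset.mem_image_of_mem xs (Finset.mem_univ i))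
      have hform := eta_form F k hkpsd hkbound S R n xs α hxsS
      have hmono : c0 / ((R:ℝ)+1) ≤ c0 / ((R0:ℝ)+1) := by
        apply div_le_div_of_nonneg_left hc0nn (by positivity)
        push_cast
        exact_mod_cast Nat.add_le_add_right hR 1
      have : -(c0/((R:ℝ)+1)) ≤ ∑ i, ∑ j, α i * α j * eta k (S, R) (xs i - xs j) := by
        have e : W * (2 * F 0) / ((R:ℝ)+1) = c0 / ((R:ℝ)+1) := by rw [hc0]
        calc -(c0/((R:ℝ)+1)) = -(W * (2 * F 0) / ((R:ℝ)+1)) := by rw [e]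
          _ ≤ _ := hform
      have heval : ∀ d, (η' (S, R) d : ℝ) = eta k (S, R) d := fun d => rfl
      calc -ε ≤ -(c0/((R:ℝ)+1)) := by linarith [hR0'.trans_eq rfl, hmono]
        _ ≤ ∑ i, ∑ j, α i * α j * eta k (S, R) (xs i - xs j) := this
        _ = ∑ i, ∑ j, α i * α j * (η' (S, R) (xs i - xs j) : ℝ) := by
            refine Finset.sum_congr rfl fun i _ => Finset.sum_congr rfl fun j _ => ?_
            rw [heval]
    have hfin : ∀ ε : ℝ, 0 < ε → -ε ≤ ∑ i, ∑ j, α i * α j * Gt (xs i - xs j) :=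
      fun ε hε => ge_of_tendsto hTendForm (hev ε hε)
    by_contra hcon
    push_neg at hcon
    have := hfin (-(∑ i, ∑ j, α i * α j * Gt (xs i - xs j))/2) (by linarith)
    linarith
  -- assemble the extension
  refine ⟨fun t => Gt t + (if t ∈ Set.Ioo (-a) a then (F t - F (-t))/2 else 0), ?_, ?_⟩
  · intro n xs α _
    set O : ℝ → ℝ := fun t => if t ∈ Set.Ioo (-a) a then (F t - F (-t))/2 else 0 with hO
    have hOodd : ∀ t, O (-t) = - O t := by
      intro t
      have hiff : (-t) ∈ Set.Ioo (-a) a ↔ t ∈ Set.Ioo (-a) a := by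
        simp only [Set.mem_Ioo]
        constructor <;> intro h <;> constructor <;> linarith [h.1, h.2]
      simp only [hO]
      by_cases h : t ∈ Set.Ioo (-a) a
      · rw [if_pos (hiff.2 h), if_pos h, neg_neg]; ring
      · rw [if_neg (fun hc => h (hiff.1 hc)), if_neg h]; ring
    have hsplit : (∑ i, ∑ j, α i * α j * (Gt (xs i - xs j) + O (xs i - xs j)))
        = (∑ i, ∑ j, α i * α j * Gt (xs i - xs j))
          + ∑ i, ∑ j, α i * α j * O (xs i - xs j) := by
      rw [← Finset.sum_add_distrib]
      refine Finset.sum_congr rfl fun i _ => ?_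
      rw [← Finset.sum_add_distrib]
      refine Finset.sum_congr rfl fun j _ => by ring
    have hOzero : (∑ i, ∑ j, α i * α j * O (xs i - xs j)) = 0 := by
      apply double_sum_antisymm
      intro i j
      have e : xs j - xs i = -(xs i - xs j) := by ring
      rw [e, hOodd]
      ring
    show 0 ≤ ∑ i, ∑ j, α i * α j * (Gt (xs i - xs j) + O (xs i - xs j))
    rw [hsplit, hOzero, add_zero]
    exact hGtpd n xs α
  · intro t ht
    have habs : |t| < a := by
      rw [abs_lt]
      exact ⟨ht.1, ht.2⟩
    show Gt t + (if t ∈ Set.Ioo (-a) a then (F t - F (-t))/2 else 0) = F t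
    rw [if_pos ht, hGtband t habs]
    unfold evenPart
    ring
end
end

section
/- Let X = X₁ ∪ X₂, S = X₁ ∩ X₂, Ω = (X₁ × X₁) ∪ (X₂ × X₂), let K_Ω be a partially reproducing kernel on Ω, and let (H, φ) be a realization of K_S = K_Ω|_{S × S}. Then there exist unique maps v : X₁ → H and w : X₂ → H such that ⟪v x, φ s⟫ = K_Ω(x, s) for all x ∈ X₁, s ∈ S and ⟪w y, φ s⟫ = K_Ω(y, s) for all y ∈ X₂, s ∈ S; and the function K⋆ : X × X → ℝ defined by K⋆(x,y) = K_Ω(x,y) for (x,y) ∈ Ω, K⋆(x,y) = ⟪v x, w y⟫ for x ∈ X₁ ∖ X₂ and y ∈ X₂ ∖ X₁, and K⋆(x,y) = ⟪v y, w x⟫ for x ∈ X₂ ∖ X₁ and y ∈ X₁ ∖ X₂, is a completion of K_Ω. (K⋆ is the canonical completion of K_Ω, satisfying K⋆(x,y) = ⟨k_{x,S}, k_{y,S}⟩_{ℋ(K_S)} for x ∈ X₁, y ∈ X₂.) -/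
open scoped RealInnerProductSpace

/-- `KΩ` is a partially reproducing kernel on `Ω ⊆ X × X`. -/
def IsPartialKernel {X : Type*} (Ω : Set (X × X)) (KΩ : X → X → ℝ) : Prop :=
  ∀ A : Set X, A ×ˢ A ⊆ Ω → IsKernel (fun a b : A => KΩ a b)

section Auxiliary

lemma IsKernel.fsum_nonneg {Y : Type*} {K : Y → Y → ℝ} (hK : IsKernel K)
    {ι : Type*} (I : Finset ι) (α : ι → ℝ) (x : ι → Y) :
    0 ≤ ∑ i ∈ I, ∑ k ∈ I, α i * α k * K (x i) (x k) := by
  classical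
  have e := I.equivFin
  have h := hK.2 I.card (fun i => α (e.symm i)) (fun i => x (e.symm i))
  calc (0:ℝ) ≤ _ := h
    _ = ∑ i ∈ I, ∑ k ∈ I, α i * α k * K (x i) (x k) := by
      rw [← Finset.sum_coe_sort I (fun i => ∑ k ∈ I, α i * α k * K (x i) (x k))]
      rw [← Equiv.sum_comp e.symm]
      refine Finset.sum_congr rfl fun i _ => ?_
      rw [← Finset.sum_coe_sort I (fun k => α _ * α k * K (x _) (x k)),
        ← Equiv.sum_comp e.symm]

lemma IsKernel.cs {Y S' : Type*} {K : Y → Y → ℝ} (hK : IsKernel K) (j : S' → Y)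
    {ι : Type*} (I : Finset ι) (α : ι → ℝ) (x : ι → Y) (c : S' →₀ ℝ) :
    (∑ i ∈ I, ∑ s ∈ c.support, α i * c s * K (x i) (j s))^2 ≤
      (∑ i ∈ I, ∑ k ∈ I, α i * α k * K (x i) (x k)) *
      (∑ s ∈ c.support, ∑ t ∈ c.support, c s * c t * K (j s) (j t)) := by
  classical
  set A := ∑ i ∈ I, ∑ k ∈ I, α i * α k * K (x i) (x k) with hA
  set B := ∑ i ∈ I, ∑ s ∈ c.support, α i * c s * K (x i) (j s) with hB
  set C := ∑ s ∈ c.support, ∑ t ∈ c.support, c s * c t * K (j s) (j t) with hC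
  have key : ∀ t : ℝ, 0 ≤ C * (t * t) + (2 * B) * t + A := by
    intro t
    have h := hK.fsum_nonneg (I.disjSum c.support)
      (Sum.elim α (fun s => t * c s)) (Sum.elim x j)
    simp only [Finset.sum_disjSum, Sum.elim_inl, Sum.elim_inr] at h
    rw [Finset.sum_add_distrib, Finset.sum_add_distrib] at h
    have e2 : ∑ i ∈ I, (∑ s ∈ c.support, α i * (t * c s) * K (x i) (j s)) = t * B := by
      rw [hB, Finset.mul_sum]
      refine Finset.sum_congr rfl fun i _ => ?_
      rw [Finset.mul_sum]
      refine Finset.sum_congr rfl fun s _ => ?_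
      ring
    have e3 : ∑ s ∈ c.support, (∑ i ∈ I, (t * c s) * α i * K (j s) (x i)) = t * B := by
      rw [hB, Finset.mul_sum, Finset.sum_comm]
      refine Finset.sum_congr rfl fun i _ => ?_
      rw [Finset.mul_sum]
      refine Finset.sum_congr rfl fun s _ => ?_
      rw [hK.1 (j s) (x i)]; ring
    have e4 : ∑ s ∈ c.support, (∑ u ∈ c.support, (t * c s) * (t * c u) * K (j s) (j u)) = (t * t) * C := by
      rw [hC, Finset.mul_sum]
      refine Finset.sum_congr rfl fun s _ => ?_
      rw [Finset.mul_sum]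
      refine Finset.sum_congr rfl fun u _ => ?_
      ring
    rw [e2, e3, e4] at h
    linarith
  have hd := discrim_le_zero key
  rw [discrim] at hd
  nlinarith

set_option linter.unusedSectionVars false

variable {H Y S' : Type*} [NormedAddCommGroup H] [InnerProductSpace ℝ H] [CompleteSpace H]
variable {K : Y → Y → ℝ} {j : S' → Y} {φ : S' → H}

lemma linc_apply (c : S' →₀ ℝ) :
    Finsupp.linearCombination ℝ φ c = ∑ s ∈ c.support, c s • φ s := by
  rw [Finsupp.linearCombination_apply, Finsupp.sum]

lemma norm_linc_sq (hφ : ∀ s t : S', ⟪φ s, φ t⟫ = K (j s) (j t)) (c : S' →₀ ℝ) :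
    ‖Finsupp.linearCombination ℝ φ c‖^2 =
      ∑ s ∈ c.support, ∑ t ∈ c.support, c s * c t * K (j s) (j t) := by
  rw [← real_inner_self_eq_norm_sq, linc_apply, sum_inner]
  refine Finset.sum_congr rfl fun s _ => ?_
  rw [inner_sum]
  refine Finset.sum_congr rfl fun t _ => ?_
  rw [real_inner_smul_left, real_inner_smul_right, hφ]
  ring

lemma inner_linc (a : H) (c : S' →₀ ℝ) :
    ⟪a, Finsupp.linearCombination ℝ φ c⟫ = ∑ s ∈ c.support, c s * ⟪a, φ s⟫ := by
  rw [linc_apply, inner_sum]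
  exact Finset.sum_congr rfl fun s _ => real_inner_smul_right a (φ s) (c s)

lemma dense_ext (hd : Dense (Submodule.span ℝ (Set.range φ) : Set H))
    {a b : H} (h : ∀ s, ⟪a, φ s⟫ = ⟪b, φ s⟫) : a = b := by
  set f : H →L[ℝ] ℝ := innerSL ℝ a - innerSL ℝ b with hf
  have hker : (Submodule.span ℝ (Set.range φ) : Set H) ⊆ (LinearMap.ker (f : H →ₗ[ℝ] ℝ) : Set H) := by
    have : Submodule.span ℝ (Set.range φ) ≤ LinearMap.ker (f : H →ₗ[ℝ] ℝ) := by
      rw [Submodule.span_le]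
      rintro - ⟨s, rfl⟩
      simp [hf, LinearMap.mem_ker, h s]
    exact this
  have hclosed : IsClosed ((LinearMap.ker (f : H →ₗ[ℝ] ℝ) : Submodule ℝ H) : Set H) :=
    ContinuousLinearMap.isClosed_ker f
  have hz : ∀ z : H, ⟪a, z⟫ = ⟪b, z⟫ := by
    intro z
    have : z ∈ (LinearMap.ker (f : H →ₗ[ℝ] ℝ) : Submodule ℝ H) := closure_minimal hker hclosed (hd z)
    have := LinearMap.mem_ker.mp this
    simp only [hf, ContinuousLinearMap.coe_coe, ContinuousLinearMap.sub_apply, innerSL_apply_apply] at this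
    have : ⟪a, z⟫ - ⟪b, z⟫ = 0 := by simpa [sub_eq_zero] using this
    linarith
  have h3 := hz (a - b)
  have h2 : ⟪a - b, a - b⟫ = 0 := by rw [inner_sub_left]; linarith
  exact sub_eq_zero.mp (inner_self_eq_zero.mp h2)

lemma exists_riesz (hd : Dense (Submodule.span ℝ (Set.range φ) : Set H)) (y : Y)
    (hb : ∀ c : S' →₀ ℝ, (Finsupp.linearCombination ℝ (fun s => K y (j s)) c)^2 ≤
       K y y * ‖Finsupp.linearCombination ℝ φ c‖^2) (hKyy : 0 ≤ K y y) :
    ∃ a : H, ∀ s, ⟪a, φ s⟫ = K y (j s) := by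
  classical
  set T : (S' →₀ ℝ) →ₗ[ℝ] H := Finsupp.linearCombination ℝ φ with hT
  set L : (S' →₀ ℝ) →ₗ[ℝ] ℝ := Finsupp.linearCombination ℝ (fun s => K y (j s)) with hL
  have hker : LinearMap.ker T ≤ LinearMap.ker L := by
    intro c hc
    rw [LinearMap.mem_ker] at *
    have h := hb c
    rw [hc] at h
    simp only [norm_zero] at h
    have h2 : (L c)^2 ≤ 0 := by simpa [hL] using h
    nlinarith [sq_nonneg (L c)]
  set gq := Submodule.liftQ (LinearMap.ker T) L hker with hgq
  set g : LinearMap.range T →ₗ[ℝ] ℝ := gq.comp (T.quotKerEquivRange).symm.toLinearMap with hg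
  have g_app : ∀ c : S' →₀ ℝ, g ⟨T c, LinearMap.mem_range_self T c⟩ = L c := by
    intro c
    rw [hg]
    simp only [LinearMap.comp_apply, LinearEquiv.coe_toLinearMap]
    rw [LinearMap.quotKerEquivRange_symm_apply_image]
    simp [hgq]
  have bound : ∀ m : LinearMap.range T, ‖g m‖ ≤ Real.sqrt (K y y) * ‖m‖ := by
    rintro ⟨m, hm⟩
    obtain ⟨c, rfl⟩ := hm
    rw [g_app c]
    have h1 := hb c
    have : ‖L c‖ = Real.sqrt ((L c)^2) := by
      rw [Real.sqrt_sq_eq_abs]; rfl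
    rw [this]
    have hnorm : ‖(⟨T c, LinearMap.mem_range_self T c⟩ : LinearMap.range T)‖ = ‖T c‖ := rfl
    rw [hnorm]
    calc Real.sqrt ((L c)^2) ≤ Real.sqrt (K y y * ‖T c‖^2) := Real.sqrt_le_sqrt h1
      _ = Real.sqrt (K y y) * ‖T c‖ := by
          rw [Real.sqrt_mul hKyy, Real.sqrt_sq (norm_nonneg _)]
  set G : LinearMap.range T →L[ℝ] ℝ := LinearMap.mkContinuous g (Real.sqrt (K y y)) bound
  set e : LinearMap.range T →L[ℝ] H := (LinearMap.range T).subtypeL with he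
  have hdr : DenseRange e := by
    have : Set.range e = (LinearMap.range T : Set H) := Subtype.range_coe
    rw [DenseRange, this, Finsupp.range_linearCombination]
    exact hd
  have hui : IsUniformInducing e := isometry_subtype_coe.isUniformInducing
  set ℓ := G.extend e with hℓ
  refine ⟨(InnerProductSpace.toDual ℝ H).symm ℓ, fun s => ?_⟩
  rw [InnerProductSpace.toDual_symm_apply]
  have hmem : φ s ∈ LinearMap.range T := by
    refine ⟨Finsupp.single s 1, ?_⟩
    simp [hT]
  have : φ s = e ⟨φ s, hmem⟩ := rfl
  rw [this, hℓ, ContinuousLinearMap.extend_eq (h_dense := hdr) (h_e := hui)]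
  have : G ⟨φ s, hmem⟩ = g ⟨φ s, hmem⟩ := rfl
  rw [this]
  have hsub : (⟨φ s, hmem⟩ : LinearMap.range T) =
      ⟨T (Finsupp.single s 1), LinearMap.mem_range_self T _⟩ := by
    apply Subtype.ext
    simp [hT]
  rw [hsub, g_app]
  simp [hL]

lemma Kyy_nonneg (hK : IsKernel K) (y : Y) : 0 ≤ K y y := by
  have := hK.2 1 (fun _ => 1) (fun _ => y)
  simpa using this

lemma exists_unique_v (hK : IsKernel K) (hφ : ∀ s t : S', ⟪φ s, φ t⟫ = K (j s) (j t))
    (hd : Dense (Submodule.span ℝ (Set.range φ) : Set H)) :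
    ∃! v : Y → H, ∀ (y : Y) (s : S'), ⟪v y, φ s⟫ = K y (j s) := by
  have hex : ∀ y : Y, ∃ a : H, ∀ s, ⟪a, φ s⟫ = K y (j s) := by
    intro y
    refine exists_riesz hd y (fun c => ?_) (Kyy_nonneg hK y)
    have h := hK.cs j (Finset.univ : Finset Unit) (fun _ => 1) (fun _ => y) c
    simp only [Finset.univ_unique, Finset.sum_singleton, one_mul] at h
    calc (Finsupp.linearCombination ℝ (fun s => K y (j s)) c)^2
        = (∑ s ∈ c.support, c s * K y (j s))^2 := by
          rw [linc_apply]; simp [smul_eq_mul]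
      _ ≤ K y y * (∑ s ∈ c.support, ∑ t ∈ c.support, c s * c t * K (j s) (j t)) := by
          simpa using h
      _ = K y y * ‖Finsupp.linearCombination ℝ φ c‖^2 := by rw [norm_linc_sq hφ]
  refine ⟨fun y => (hex y).choose, fun y s => (hex y).choose_spec s, ?_⟩
  intro v' hv'
  funext y
  exact dense_ext hd fun s => by rw [hv' y s, (hex y).choose_spec s]

lemma v_eq_phi (hφ : ∀ s t : S', ⟪φ s, φ t⟫ = K (j s) (j t))
    (hd : Dense (Submodule.span ℝ (Set.range φ) : Set H))
    {v : Y → H} (hv : ∀ y s, ⟪v y, φ s⟫ = K y (j s)) (s : S') : v (j s) = φ s :=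
  dense_ext hd fun t => by rw [hv (j s) t, hφ s t]

lemma defect (hK : IsKernel K) (hφ : ∀ s t : S', ⟪φ s, φ t⟫ = K (j s) (j t))
    (hd : Dense (Submodule.span ℝ (Set.range φ) : Set H))
    {v : Y → H} (hv : ∀ y s, ⟪v y, φ s⟫ = K y (j s))
    {ι : Type*} (I : Finset ι) (α : ι → ℝ) (x : ι → Y) :
    ∑ i ∈ I, ∑ k ∈ I, α i * α k * ⟪v (x i), v (x k)⟫ ≤
      ∑ i ∈ I, ∑ k ∈ I, α i * α k * K (x i) (x k) := by
  classical
  set A := ∑ i ∈ I, ∑ k ∈ I, α i * α k * K (x i) (x k) with hA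
  have hA0 : 0 ≤ A := hK.fsum_nonneg I α x
  set h0 : H := ∑ i ∈ I, α i • v (x i) with hh0
  have hLHS : ∑ i ∈ I, ∑ k ∈ I, α i * α k * ⟪v (x i), v (x k)⟫ = ‖h0‖^2 := by
    rw [← real_inner_self_eq_norm_sq, hh0, sum_inner]
    refine Finset.sum_congr rfl fun i _ => ?_
    rw [real_inner_smul_left, inner_sum, Finset.mul_sum]
    refine Finset.sum_congr rfl fun k _ => ?_
    rw [real_inner_smul_right]; ring
  rw [hLHS]
  have key : ∀ c : S' →₀ ℝ,
      ⟪h0, Finsupp.linearCombination ℝ φ c⟫^2 ≤ A * ‖Finsupp.linearCombination ℝ φ c‖^2 := by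
    intro c
    have hB : ⟪h0, Finsupp.linearCombination ℝ φ c⟫ =
        ∑ i ∈ I, ∑ s ∈ c.support, α i * c s * K (x i) (j s) := by
      rw [hh0, sum_inner]
      refine Finset.sum_congr rfl fun i _ => ?_
      rw [real_inner_smul_left, inner_linc, Finset.mul_sum]
      refine Finset.sum_congr rfl fun s _ => ?_
      rw [hv (x i) s]; ring
    rw [hB, norm_linc_sq hφ]
    exact hK.cs j I α x c
  have hmem : h0 ∈ closure (Submodule.span ℝ (Set.range φ) : Set H) := hd h0
  rw [mem_closure_iff_seq_limit] at hmem
  obtain ⟨u, hu_mem, hu_lim⟩ := hmem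
  have hrep : ∀ n, ∃ c : S' →₀ ℝ, Finsupp.linearCombination ℝ φ c = u n := by
    intro n
    have : u n ∈ LinearMap.range (Finsupp.linearCombination ℝ φ) := by
      rw [Finsupp.range_linearCombination]; exact hu_mem n
    exact this
  choose c hc using hrep
  have hseq : ∀ n, ⟪h0, u n⟫^2 ≤ A * ‖u n‖^2 := by
    intro n; rw [← hc n]; exact key (c n)
  have lim1 : Filter.Tendsto (fun n => ⟪h0, u n⟫^2) Filter.atTop (nhds ((‖h0‖^2)^2)) := by
    have : Filter.Tendsto (fun n => ⟪h0, u n⟫) Filter.atTop (nhds ⟪h0, h0⟫) :=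
      Filter.Tendsto.inner tendsto_const_nhds hu_lim
    rw [real_inner_self_eq_norm_sq] at this
    exact this.pow 2
  have lim2 : Filter.Tendsto (fun n => A * ‖u n‖^2) Filter.atTop (nhds (A * ‖h0‖^2)) := by
    have : Filter.Tendsto (fun n => ‖u n‖) Filter.atTop (nhds ‖h0‖) := hu_lim.norm
    exact (this.pow 2).const_mul A
  have hfin : (‖h0‖^2)^2 ≤ A * ‖h0‖^2 := le_of_tendsto_of_tendsto' lim1 lim2 hseq
  rcases eq_or_lt_of_le (sq_nonneg ‖h0‖) with h | h
  · rw [← h]; exact hA0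
  · nlinarith

end Auxiliary

/-- Canonical completion for a 2-serrated domain: with `(H, φ)` a realization of the
restriction of `KΩ` to `S = X₁ ∩ X₂`, there exist unique maps `v : X₁ → H`, `w : X₂ → H`
with `⟪v x, φ s⟫ = KΩ x s` and `⟪w y, φ s⟫ = KΩ y s`, and the function `K⋆` defined from
them is a completion of `KΩ`. -/
theorem canonical_completion_two_serrated {X H : Type*}
    [NormedAddCommGroup H] [InnerProductSpace ℝ H] [CompleteSpace H]
    (X₁ X₂ : Set X) (hcover : X₁ ∪ X₂ = Set.univ)
    (KΩ : X → X → ℝ)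
    (hpart : IsPartialKernel (X₁ ×ˢ X₁ ∪ X₂ ×ˢ X₂) KΩ)
    (φ : ↥(X₁ ∩ X₂) → H)
    (hφ : ∀ s t : ↥(X₁ ∩ X₂), ⟪φ s, φ t⟫ = KΩ s t)
    (hd : Dense (Submodule.span ℝ (Set.range φ) : Set H)) :
    (∃! v : X₁ → H, ∀ (u : X₁) (s : ↥(X₁ ∩ X₂)), ⟪v u, φ s⟫ = KΩ u s) ∧
    (∃! w : X₂ → H, ∀ (u : X₂) (s : ↥(X₁ ∩ X₂)), ⟪w u, φ s⟫ = KΩ u s) ∧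
    (∀ (v : X₁ → H) (w : X₂ → H),
      (∀ (u : X₁) (s : ↥(X₁ ∩ X₂)), ⟪v u, φ s⟫ = KΩ u s) →
      (∀ (u : X₂) (s : ↥(X₁ ∩ X₂)), ⟪w u, φ s⟫ = KΩ u s) →
      ∀ K : X → X → ℝ,
        (∀ u z : X, (u, z) ∈ X₁ ×ˢ X₁ ∪ X₂ ×ˢ X₂ → K u z = KΩ u z) →
        (∀ (u z : X) (h1 : u ∈ X₁) (h2 : z ∈ X₂), u ∉ X₂ → z ∉ X₁ →
          K u z = ⟪v ⟨u, h1⟩, w ⟨z, h2⟩⟫) →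
        (∀ (u z : X) (h2 : u ∈ X₂) (h1 : z ∈ X₁), u ∉ X₁ → z ∉ X₂ →
          K u z = ⟪v ⟨z, h1⟩, w ⟨u, h2⟩⟫) →
        IsCompletion (X₁ ×ˢ X₁ ∪ X₂ ×ˢ X₂) KΩ K) := by
  classical
  set Ω : Set (X × X) := X₁ ×ˢ X₁ ∪ X₂ ×ˢ X₂ with hΩ
  have hsub1 : (X₁ ×ˢ X₁ : Set (X × X)) ⊆ Ω := Set.subset_union_left
  have hsub2 : (X₂ ×ˢ X₂ : Set (X × X)) ⊆ Ω := Set.subset_union_right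
  set K₁ : ↥X₁ → ↥X₁ → ℝ := fun a b => KΩ a b with hK₁def
  set K₂ : ↥X₂ → ↥X₂ → ℝ := fun a b => KΩ a b with hK₂def
  have hK₁ : IsKernel K₁ := hpart X₁ hsub1
  have hK₂ : IsKernel K₂ := hpart X₂ hsub2
  set j₁ : ↥(X₁ ∩ X₂) → ↥X₁ := fun s => ⟨s.1, s.2.1⟩ with hj₁
  set j₂ : ↥(X₁ ∩ X₂) → ↥X₂ := fun s => ⟨s.1, s.2.2⟩ with hj₂
  have hφ₁ : ∀ s t : ↥(X₁ ∩ X₂), ⟪φ s, φ t⟫ = K₁ (j₁ s) (j₁ t) := hφ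
  have hφ₂ : ∀ s t : ↥(X₁ ∩ X₂), ⟪φ s, φ t⟫ = K₂ (j₂ s) (j₂ t) := hφ
  have symmKΩ : ∀ a b : X, (a, b) ∈ Ω → KΩ a b = KΩ b a := by
    rintro a b (hab | hab)
    · exact hK₁.1 ⟨a, hab.1⟩ ⟨b, hab.2⟩
    · exact hK₂.1 ⟨a, hab.1⟩ ⟨b, hab.2⟩
  refine ⟨exists_unique_v hK₁ hφ₁ hd, exists_unique_v hK₂ hφ₂ hd, ?_⟩
  intro v w hv hw K hKeq hc1 hc2
  have hmem : ∀ a : X, a ∈ X₁ ∪ X₂ := by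
    intro a; rw [hcover]; trivial
  refine ⟨⟨?_, ?_⟩, fun x y h => hKeq x y h⟩
  · -- symmetry
    intro a b
    by_cases ha1 : a ∈ X₁ <;> by_cases hb1 : b ∈ X₁
    · rw [hKeq a b (Or.inl ⟨ha1, hb1⟩), hKeq b a (Or.inl ⟨hb1, ha1⟩),
        symmKΩ a b (Or.inl ⟨ha1, hb1⟩)]
    · have hb2 : b ∈ X₂ := (hmem b).resolve_left hb1
      by_cases ha2 : a ∈ X₂
      · rw [hKeq a b (Or.inr ⟨ha2, hb2⟩), hKeq b a (Or.inr ⟨hb2, ha2⟩),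
          symmKΩ a b (Or.inr ⟨ha2, hb2⟩)]
      · rw [hc1 a b ha1 hb2 ha2 hb1, hc2 b a hb2 ha1 hb1 ha2]
    · have ha2 : a ∈ X₂ := (hmem a).resolve_left ha1
      by_cases hb2 : b ∈ X₂
      · rw [hKeq a b (Or.inr ⟨ha2, hb2⟩), hKeq b a (Or.inr ⟨hb2, ha2⟩),
          symmKΩ a b (Or.inr ⟨ha2, hb2⟩)]
      · rw [hc2 a b ha2 hb1 ha1 hb2, hc1 b a hb1 ha2 hb2 ha1]
    · have ha2 : a ∈ X₂ := (hmem a).resolve_left ha1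
      have hb2 : b ∈ X₂ := (hmem b).resolve_left hb1
      rw [hKeq a b (Or.inr ⟨ha2, hb2⟩), hKeq b a (Or.inr ⟨hb2, ha2⟩),
        symmKΩ a b (Or.inr ⟨ha2, hb2⟩)]
  · -- positivity
    intro n α x
    set u : Fin n → H := fun i =>
      if h : x i ∈ X₁ then v ⟨x i, h⟩ else w ⟨x i, ((hmem (x i)).resolve_left h)⟩ with hu
    -- cross vanishing
    have cross1 : ∀ i k : Fin n, x i ∈ X₁ → x k ∉ X₁ → K (x i) (x k) = ⟪u i, u k⟫ := by
      intro i k hi hk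
      have hk2 : x k ∈ X₂ := (hmem (x k)).resolve_left hk
      have huk : u k = w ⟨x k, hk2⟩ := by rw [hu]; simp only; rw [dif_neg hk]
      have hui : u i = v ⟨x i, hi⟩ := by rw [hu]; simp only; rw [dif_pos hi]
      by_cases hi2 : x i ∈ X₂
      · set s : ↥(X₁ ∩ X₂) := ⟨x i, hi, hi2⟩ with hs
        have hvphi : v ⟨x i, hi⟩ = φ s := v_eq_phi hφ₁ hd hv s
        rw [hKeq (x i) (x k) (Or.inr ⟨hi2, hk2⟩), hui, huk, hvphi,
          real_inner_comm, hw ⟨x k, hk2⟩ s]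
        exact symmKΩ (x i) (x k) (Or.inr ⟨hi2, hk2⟩)
      · rw [hc1 (x i) (x k) hi hk2 hi2 hk, hui, huk]
    have cross2 : ∀ i k : Fin n, x i ∉ X₁ → x k ∈ X₁ → K (x i) (x k) = ⟪u i, u k⟫ := by
      intro i k hi hk
      have hi2 : x i ∈ X₂ := (hmem (x i)).resolve_left hi
      have hui : u i = w ⟨x i, hi2⟩ := by rw [hu]; simp only; rw [dif_neg hi]
      have huk : u k = v ⟨x k, hk⟩ := by rw [hu]; simp only; rw [dif_pos hk]
      by_cases hk2 : x k ∈ X₂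
      · set s : ↥(X₁ ∩ X₂) := ⟨x k, hk, hk2⟩ with hs
        have hvphi : v ⟨x k, hk⟩ = φ s := v_eq_phi hφ₁ hd hv s
        rw [hKeq (x i) (x k) (Or.inr ⟨hi2, hk2⟩), hui, huk, hvphi, hw ⟨x i, hi2⟩ s]
      · rw [hc2 (x i) (x k) hi2 hk hi hk2, hui, huk,
          real_inner_comm (w ⟨x i, hi2⟩) (v ⟨x k, hk⟩)]
    -- expansion
    have hinner : ⟪∑ i, α i • u i, ∑ i, α i • u i⟫ = ∑ i, ∑ k, α i * α k * ⟪u i, u k⟫ := by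
      rw [sum_inner]
      refine Finset.sum_congr rfl fun i _ => ?_
      rw [real_inner_smul_left, inner_sum, Finset.mul_sum]
      refine Finset.sum_congr rfl fun k _ => ?_
      rw [real_inner_smul_right]; ring
    set F : Fin n → Fin n → ℝ := fun i k => α i * α k * (K (x i) (x k) - ⟪u i, u k⟫) with hF
    have expand : ∑ i, ∑ k, α i * α k * K (x i) (x k)
        = ⟪∑ i, α i • u i, ∑ i, α i • u i⟫ + ∑ i, ∑ k, F i k := by
      rw [hinner, ← Finset.sum_add_distrib]
      refine Finset.sum_congr rfl fun i _ => ?_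
      rw [← Finset.sum_add_distrib]
      refine Finset.sum_congr rfl fun k _ => ?_
      rw [hF]; ring
    set p : Fin n → Prop := fun i => x i ∈ X₁ with hp
    set I₁ : Finset (Fin n) := Finset.univ.filter p with hI₁
    set I₂ : Finset (Fin n) := Finset.univ.filter (fun i => ¬ p i) with hI₂
    have hsplit : ∑ i, ∑ k, F i k =
        (∑ i ∈ I₁, ∑ k ∈ I₁, F i k) + (∑ i ∈ I₂, ∑ k ∈ I₂, F i k) := by
      rw [← Finset.sum_filter_add_sum_filter_not Finset.univ p (fun i => ∑ k, F i k)]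
      congr 1
      · refine Finset.sum_congr rfl fun i hi => ?_
        have hi1 : p i := (Finset.mem_filter.mp hi).2
        rw [← Finset.sum_filter_add_sum_filter_not Finset.univ p (F i)]
        have hz : ∑ k ∈ Finset.univ.filter (fun k => ¬ p k), F i k = 0 :=
          Finset.sum_eq_zero fun k hk => by
            have hk1 : ¬ p k := (Finset.mem_filter.mp hk).2
            rw [hF]; simp only
            rw [cross1 i k hi1 hk1]; ring
        rw [hz, add_zero]
      · refine Finset.sum_congr rfl fun i hi => ?_
        have hi1 : ¬ p i := (Finset.mem_filter.mp hi).2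
        rw [← Finset.sum_filter_add_sum_filter_not Finset.univ p (F i)]
        have hz : ∑ k ∈ Finset.univ.filter p, F i k = 0 :=
          Finset.sum_eq_zero fun k hk => by
            have hk1 : p k := (Finset.mem_filter.mp hk).2
            rw [hF]; simp only
            rw [cross2 i k hi1 hk1]; ring
        rw [hz, zero_add]
    -- block 1
    have block1 : 0 ≤ ∑ i ∈ I₁, ∑ k ∈ I₁, F i k := by
      have hd1 := defect hK₁ hφ₁ hd hv (Finset.univ : Finset ↥I₁)
        (fun i => α i.1) (fun i => (⟨x i.1, (Finset.mem_filter.mp i.2).2⟩ : ↥X₁))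
      have conv : ∀ i : ↥I₁, v ⟨x i.1, (Finset.mem_filter.mp i.2).2⟩ = u i.1 := by
        intro i
        rw [hu]; simp only
        rw [dif_pos ((Finset.mem_filter.mp i.2).2)]
      have conv2 : ∀ (G : Fin n → Fin n → ℝ),
          ∑ i : ↥I₁, ∑ k : ↥I₁, G i.1 k.1 = ∑ i ∈ I₁, ∑ k ∈ I₁, G i k := fun G =>
        (Finset.sum_congr rfl fun i _ => Finset.sum_coe_sort I₁ (fun k => G i.1 k)).trans
          (Finset.sum_coe_sort I₁ (fun i => ∑ k ∈ I₁, G i k))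
      have e1 : ∑ i ∈ I₁, ∑ k ∈ I₁, α i * α k * ⟪u i, u k⟫ ≤
          ∑ i ∈ I₁, ∑ k ∈ I₁, α i * α k * KΩ (x i) (x k) := by
        calc ∑ i ∈ I₁, ∑ k ∈ I₁, α i * α k * ⟪u i, u k⟫
            = ∑ i : ↥I₁, ∑ k : ↥I₁, α i.1 * α k.1 * ⟪u i.1, u k.1⟫ :=
              (conv2 (fun i k => α i * α k * ⟪u i, u k⟫)).symm
          _ ≤ ∑ i : ↥I₁, ∑ k : ↥I₁, α i.1 * α k.1 * KΩ (x i.1) (x k.1) := by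
              have := hd1
              simp only [conv] at this
              exact this
          _ = ∑ i ∈ I₁, ∑ k ∈ I₁, α i * α k * KΩ (x i) (x k) :=
              conv2 (fun i k => α i * α k * KΩ (x i) (x k))
      have e2 : ∑ i ∈ I₁, ∑ k ∈ I₁, F i k =
          (∑ i ∈ I₁, ∑ k ∈ I₁, α i * α k * KΩ (x i) (x k)) -
          (∑ i ∈ I₁, ∑ k ∈ I₁, α i * α k * ⟪u i, u k⟫) := by
        rw [← Finset.sum_sub_distrib]
        refine Finset.sum_congr rfl fun i hi => ?_
        rw [← Finset.sum_sub_distrib]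
        refine Finset.sum_congr rfl fun k hk => ?_
        have hi1 : x i ∈ X₁ := (Finset.mem_filter.mp hi).2
        have hk1 : x k ∈ X₁ := (Finset.mem_filter.mp hk).2
        rw [hF]; simp only
        rw [hKeq (x i) (x k) (Or.inl ⟨hi1, hk1⟩)]; ring
      rw [e2]
      linarith
    -- block 2
    have block2 : 0 ≤ ∑ i ∈ I₂, ∑ k ∈ I₂, F i k := by
      have hd2 := defect hK₂ hφ₂ hd hw (Finset.univ : Finset ↥I₂)
        (fun i => α i.1)
        (fun i => (⟨x i.1, (hmem (x i.1)).resolve_left (Finset.mem_filter.mp i.2).2⟩ : ↥X₂))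
      have conv : ∀ i : ↥I₂,
          w ⟨x i.1, (hmem (x i.1)).resolve_left (Finset.mem_filter.mp i.2).2⟩ = u i.1 := by
        intro i
        rw [hu]; simp only
        rw [dif_neg ((Finset.mem_filter.mp i.2).2)]
      have conv2 : ∀ (G : Fin n → Fin n → ℝ),
          ∑ i : ↥I₂, ∑ k : ↥I₂, G i.1 k.1 = ∑ i ∈ I₂, ∑ k ∈ I₂, G i k := fun G =>
        (Finset.sum_congr rfl fun i _ => Finset.sum_coe_sort I₂ (fun k => G i.1 k)).trans
          (Finset.sum_coe_sort I₂ (fun i => ∑ k ∈ I₂, G i k))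
      have e1 : ∑ i ∈ I₂, ∑ k ∈ I₂, α i * α k * ⟪u i, u k⟫ ≤
          ∑ i ∈ I₂, ∑ k ∈ I₂, α i * α k * KΩ (x i) (x k) := by
        calc ∑ i ∈ I₂, ∑ k ∈ I₂, α i * α k * ⟪u i, u k⟫
            = ∑ i : ↥I₂, ∑ k : ↥I₂, α i.1 * α k.1 * ⟪u i.1, u k.1⟫ :=
              (conv2 (fun i k => α i * α k * ⟪u i, u k⟫)).symm
          _ ≤ ∑ i : ↥I₂, ∑ k : ↥I₂, α i.1 * α k.1 * KΩ (x i.1) (x k.1) := by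
              have := hd2
              simp only [conv] at this
              exact this
          _ = ∑ i ∈ I₂, ∑ k ∈ I₂, α i * α k * KΩ (x i) (x k) :=
              conv2 (fun i k => α i * α k * KΩ (x i) (x k))
      have e2 : ∑ i ∈ I₂, ∑ k ∈ I₂, F i k =
          (∑ i ∈ I₂, ∑ k ∈ I₂, α i * α k * KΩ (x i) (x k)) -
          (∑ i ∈ I₂, ∑ k ∈ I₂, α i * α k * ⟪u i, u k⟫) := by
        rw [← Finset.sum_sub_distrib]
        refine Finset.sum_congr rfl fun i hi => ?_
        rw [← Finset.sum_sub_distrib]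
        refine Finset.sum_congr rfl fun k hk => ?_
        have hi2 : x i ∈ X₂ := (hmem (x i)).resolve_left (Finset.mem_filter.mp hi).2
        have hk2 : x k ∈ X₂ := (hmem (x k)).resolve_left (Finset.mem_filter.mp hk).2
        rw [hF]; simp only
        rw [hKeq (x i) (x k) (Or.inr ⟨hi2, hk2⟩)]; ring
      rw [e2]
      linarith
    rw [expand, hsplit]
    have hnn : 0 ≤ ⟪∑ i, α i • u i, ∑ i, α i • u i⟫ := real_inner_self_nonneg
    linarith
end

section
/- Let X = X₁ ∪ X₂ with S = X₁ ∩ X₂, let K be a reproducing kernel on X, and let (H, φ) be a realization of K; for A ⊆ X let Π_A denote the orthogonal projection of H onto the closed linear span of {φ x : x ∈ A}. Then the following are equivalent: (1) K(x,y) = ⟪Π_S(φ x), Π_S(φ y)⟫ for all x ∈ X₁ and y ∈ X₂; (2) Id_H − Π_{X₁} − Π_{X₂} + Π_S = 0; (3) Π_S = Π_{X₁} ∘ Π_{X₂} = Π_{X₂} ∘ Π_{X₁}. (Condition (1) says K is the canonical completion of its restriction to (X₁ × X₁) ∪ (X₂ × X₂).) -/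
open scoped RealInnerProductSpace

/-- The orthogonal projection of `H` onto the closed linear span of `{φ x : x ∈ A}`, as a
continuous linear endomorphism of `H`. -/
noncomputable def spanProj {X H : Type*} [NormedAddCommGroup H]
    [InnerProductSpace ℝ H] [CompleteSpace H] (φ : X → H) (A : Set X) :
    H →L[ℝ] H :=
  letI U : Submodule ℝ H := (Submodule.span ℝ (φ '' A)).topologicalClosure
  haveI : CompleteSpace U :=
    (Submodule.isClosed_topologicalClosure _).completeSpace_coe
  U.subtypeL.comp U.orthogonalProjectionOnto

section Aux

variable {X H : Type*} [NormedAddCommGroup H] [InnerProductSpace ℝ H] [CompleteSpace H]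

/-- The closed subspace onto which `spanProj` projects. -/
noncomputable def spanSub (φ : X → H) (A : Set X) : Submodule ℝ H :=
  (Submodule.span ℝ (φ '' A)).topologicalClosure

instance spanSub_complete (φ : X → H) (A : Set X) : CompleteSpace (spanSub φ A) :=
  (Submodule.isClosed_topologicalClosure _).completeSpace_coe

lemma spanProj_apply (φ : X → H) (A : Set X) (v : H) :
    spanProj φ A v = ((spanSub φ A).orthogonalProjectionOnto v : H) := rfl

lemma spanProj_mem (φ : X → H) (A : Set X) (v : H) :
    spanProj φ A v ∈ spanSub φ A := by
  rw [spanProj_apply]; exact ((spanSub φ A).orthogonalProjectionOnto v).2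

lemma spanProj_eq_self (φ : X → H) (A : Set X) {v : H} (hv : v ∈ spanSub φ A) :
    spanProj φ A v = v := by
  rw [spanProj_apply, ← Submodule.starProjection_apply, Submodule.starProjection_eq_self_iff]; exact hv

lemma spanProj_idem (φ : X → H) (A : Set X) (v : H) :
    spanProj φ A (spanProj φ A v) = spanProj φ A v :=
  spanProj_eq_self φ A (spanProj_mem φ A v)

lemma inner_spanProj (φ : X → H) (A : Set X) (v w : H) :
    ⟪spanProj φ A v, w⟫ = ⟪v, spanProj φ A w⟫ := by
  rw [spanProj_apply, spanProj_apply]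
  exact Submodule.inner_starProjection_left_eq_right _ v w

lemma spanProj_apply_of_mem (φ : X → H) (A : Set X) {x : X} (hx : x ∈ A) :
    spanProj φ A (φ x) = φ x :=
  spanProj_eq_self φ A (Submodule.le_topologicalClosure _
    (Submodule.subset_span ⟨x, hx, rfl⟩))

lemma spanProj_eq_zero (φ : X → H) (A : Set X) {v : H}
    (hv : ∀ y ∈ A, ⟪v, φ y⟫ = 0) : spanProj φ A v = 0 := by
  have hv1 : v ∈ (Submodule.span ℝ (φ '' A))ᗮ := by
    rw [Submodule.mem_orthogonal]
    intro u hu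
    induction hu using Submodule.span_induction with
    | mem u hu =>
      obtain ⟨y, hy, rfl⟩ := hu
      rw [real_inner_comm]; exact hv y hy
    | zero => simp
    | add u w _ _ h1 h2 => rw [inner_add_left, h1, h2, add_zero]
    | smul c u _ h1 => rw [inner_smul_left, h1, mul_zero]
  have hv2 : v ∈ (spanSub φ A)ᗮ := by
    rw [spanSub, ← Submodule.orthogonal_orthogonal_eq_closure]
    exact Submodule.le_orthogonal_orthogonal _ hv1
  rw [spanProj_apply, Submodule.orthogonalProjectionOnto_apply_of_mem_orthogonal hv2,
    Submodule.coe_zero]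

lemma spanSub_mono (φ : X → H) {A B : Set X} (h : A ⊆ B) :
    spanSub φ A ≤ spanSub φ B :=
  Submodule.topologicalClosure_mono (Submodule.span_mono (Set.image_mono h))

/-- For `A ⊆ B`, `Π_B (Π_A v) = Π_A v`. -/
lemma spanProj_comp_left (φ : X → H) {A B : Set X} (h : A ⊆ B) (v : H) :
    spanProj φ B (spanProj φ A v) = spanProj φ A v :=
  spanProj_eq_self φ B (spanSub_mono φ h (spanProj_mem φ A v))

/-- For `A ⊆ B`, `Π_A (Π_B v) = Π_A v`. -/
lemma spanProj_comp_right (φ : X → H) {A B : Set X} (h : A ⊆ B) (v : H) :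
    spanProj φ A (spanProj φ B v) = spanProj φ A v := by
  have h1 : v - spanProj φ B v ∈ (spanSub φ A)ᗮ :=
    Submodule.orthogonal_le (spanSub_mono φ h)
      (Submodule.sub_starProjection_mem_orthogonal (K := spanSub φ B) v)
  have h2 : spanProj φ A (v - spanProj φ B v) = 0 := by
    rw [spanProj_apply, Submodule.orthogonalProjectionOnto_apply_of_mem_orthogonal h1,
      Submodule.coe_zero]
  have h3 := map_sub (spanProj φ A) v (spanProj φ B v)
  rw [h2] at h3
  exact (sub_eq_zero.mp h3.symm).symm

end Aux

/-- For `X = X₁ ∪ X₂` and `S = X₁ ∩ X₂`, the following are equivalent: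
(1) `K(x,y) = ⟪Π_S (φ x), Π_S (φ y)⟫` for `x ∈ X₁`, `y ∈ X₂` (canonical completion);
(2) `Id − Π_{X₁} − Π_{X₂} + Π_S = 0`;
(3) `Π_S = Π_{X₁} Π_{X₂} = Π_{X₂} Π_{X₁}`. -/
theorem canonical_completion_projection_characterization {X H : Type*}
    [NormedAddCommGroup H] [InnerProductSpace ℝ H] [CompleteSpace H]
    (X₁ X₂ : Set X) (hcover : X₁ ∪ X₂ = Set.univ)
    (K : X → X → ℝ) (hK : IsKernel K)
    (φ : X → H) (hφ : ∀ s t, ⟪φ s, φ t⟫ = K s t)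
    (hd : Dense (Submodule.span ℝ (Set.range φ) : Set H)) :
    ((∀ x y : X, x ∈ X₁ → y ∈ X₂ →
        K x y = ⟪spanProj φ (X₁ ∩ X₂) (φ x), spanProj φ (X₁ ∩ X₂) (φ y)⟫) ↔
      (ContinuousLinearMap.id ℝ H - spanProj φ X₁ - spanProj φ X₂ +
        spanProj φ (X₁ ∩ X₂) = 0)) ∧
    ((ContinuousLinearMap.id ℝ H - spanProj φ X₁ - spanProj φ X₂ +
        spanProj φ (X₁ ∩ X₂) = 0) ↔
      (spanProj φ (X₁ ∩ X₂) = (spanProj φ X₁).comp (spanProj φ X₂) ∧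
       spanProj φ (X₁ ∩ X₂) = (spanProj φ X₂).comp (spanProj φ X₁))) := by
  set P₁ := spanProj φ X₁ with hP₁
  set P₂ := spanProj φ X₂ with hP₂
  set P₀ := spanProj φ (X₁ ∩ X₂) with hP₀
  -- (1) → (2)
  have h12 : (∀ x y : X, x ∈ X₁ → y ∈ X₂ →
      K x y = ⟪P₀ (φ x), P₀ (φ y)⟫) →
      (ContinuousLinearMap.id ℝ H - P₁ - P₂ + P₀ = 0) := by
    intro h1
    -- key: for x ∈ X₁, y ∈ X₂, ⟪φ x - P₀ (φ x), φ y⟫ = 0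
    have key : ∀ x y : X, x ∈ X₁ → y ∈ X₂ → ⟪φ x - P₀ (φ x), φ y⟫ = 0 := by
      intro x y hx hy
      have h2 : ⟪P₀ (φ x), P₀ (φ y)⟫ = ⟪P₀ (φ x), φ y⟫ := by
        rw [inner_spanProj, spanProj_idem, ← inner_spanProj]
      rw [inner_sub_left, hφ, h1 x y hx hy, h2, sub_self]
    apply ContinuousLinearMap.ext_on hd
    rintro _ ⟨x, rfl⟩
    have hx : x ∈ X₁ ∪ X₂ := hcover ▸ Set.mem_univ x
    simp only [ContinuousLinearMap.add_apply, ContinuousLinearMap.sub_apply,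
      ContinuousLinearMap.id_apply, ContinuousLinearMap.zero_apply]
    rcases hx with hx | hx
    · have hx1 : P₁ (φ x) = φ x := spanProj_apply_of_mem φ X₁ hx
      have hx2 : P₂ (φ x - P₀ (φ x)) = 0 :=
        spanProj_eq_zero φ X₂ (fun y hy => key x y hx hy)
      have hx3 : P₂ (P₀ (φ x)) = P₀ (φ x) := by
        have := spanProj_comp_left φ (Set.inter_subset_right : X₁ ∩ X₂ ⊆ X₂) (φ x)
        exact this
      rw [map_sub, hx3, sub_eq_zero] at hx2
      rw [hx1, hx2]
      abel
    · have hx1 : P₂ (φ x) = φ x := spanProj_apply_of_mem φ X₂ hx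
      have keyx : ∀ y ∈ X₁, ⟪φ x - P₀ (φ x), φ y⟫ = 0 := by
        intro y hy
        have h2 : ⟪P₀ (φ y), P₀ (φ x)⟫ = ⟪φ y, P₀ (φ x)⟫ := by
          rw [inner_spanProj, spanProj_idem]
        have := h1 y x hy hx
        rw [inner_sub_left, hφ, hK.1 x y, this, h2, real_inner_comm, sub_self]
      have hx2 : P₁ (φ x - P₀ (φ x)) = 0 :=
        spanProj_eq_zero φ X₁ keyx
      have hx3 : P₁ (P₀ (φ x)) = P₀ (φ x) := by
        have := spanProj_comp_left φ (Set.inter_subset_left : X₁ ∩ X₂ ⊆ X₁) (φ x)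
        exact this
      rw [map_sub, hx3, sub_eq_zero] at hx2
      rw [hx1, hx2]
      abel
  -- (2) → (3)
  have h23 : (ContinuousLinearMap.id ℝ H - P₁ - P₂ + P₀ = 0) →
      (P₀ = P₁.comp P₂ ∧ P₀ = P₂.comp P₁) := by
    intro h2
    have h2' : ∀ v : H, v - P₁ v - P₂ v + P₀ v = 0 := by
      intro v
      have := congrArg (fun T : H →L[ℝ] H => T v) h2
      simpa using this
    constructor
    · ext v
      have hv : P₂ v = v - P₁ v + P₀ v := by
        have h := h2' v
        have h' : (v - P₁ v + P₀ v) - P₂ v = 0 := by rw [← h]; abel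
        exact (sub_eq_zero.mp h').symm
      simp only [ContinuousLinearMap.coe_comp', Function.comp_apply]
      rw [hv, map_add, map_sub, spanProj_idem,
        spanProj_comp_left φ (Set.inter_subset_left : X₁ ∩ X₂ ⊆ X₁) v]
      abel
    · ext v
      have hv : P₁ v = v - P₂ v + P₀ v := by
        have h := h2' v
        have h' : (v - P₂ v + P₀ v) - P₁ v = 0 := by rw [← h]; abel
        exact (sub_eq_zero.mp h').symm
      simp only [ContinuousLinearMap.coe_comp', Function.comp_apply]
      rw [hv, map_add, map_sub, spanProj_idem,
        spanProj_comp_left φ (Set.inter_subset_right : X₁ ∩ X₂ ⊆ X₂) v]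
      abel
  -- (3) → (1)
  have h31 : (P₀ = P₁.comp P₂ ∧ P₀ = P₂.comp P₁) →
      (∀ x y : X, x ∈ X₁ → y ∈ X₂ → K x y = ⟪P₀ (φ x), P₀ (φ y)⟫) := by
    rintro ⟨ha, _⟩ x y hx hy
    have h1 : ⟪P₀ (φ x), P₀ (φ y)⟫ = ⟪φ x, P₀ (φ y)⟫ := by
      rw [inner_spanProj, spanProj_idem]
    have h2 : P₀ (φ y) = P₁ (φ y) := by
      have := congrArg (fun T : H →L[ℝ] H => T (φ y)) ha
      simp only [ContinuousLinearMap.coe_comp', Function.comp_apply] at this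
      rw [this, spanProj_apply_of_mem φ X₂ hy]
    rw [h1, h2, ← inner_spanProj, spanProj_apply_of_mem φ X₁ hx, hφ]
  exact ⟨⟨h12, fun h2 => h31 (h23 h2)⟩, ⟨h23, fun h3 => h12 (h31 h3)⟩⟩
end

section
/- Let K be a reproducing kernel on a set X with realization (H, φ). Then: (i) for every n ≥ 1, all α₁,…,α_n ∈ ℝ and all x₁,…,x_n ∈ X, (1/2) ∑_{i,j=1}^n α_i α_j K(x_i, x_j) = sup_{v ∈ H} ( ∑_{i=1}^n α_i ⟪v, φ x_i⟫ − (1/2) ‖v‖² ), and the supremum is attained at v = ∑_{i=1}^n α_i φ x_i; (ii) for every v ∈ H, (1/2) ‖v‖² = sup over all n ≥ 1, α₁,…,α_n ∈ ℝ, x₁,…,x_n ∈ X of ( ∑_{i=1}^n α_i ⟪v, φ x_i⟫ − (1/2) ∑_{i,j=1}^n α_i α_j K(x_i, x_j) ). -/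
open scoped RealInnerProductSpace

/-- Duality relations: the quadratic form of a reproducing kernel and (half) the squared
RKHS norm are convex conjugates of each other.  Part (i): the quadratic form is the supremum
(attained at `v = ∑ α_i • φ (x i)`); part (ii): the squared norm is the supremum of the dual
expressions. -/
theorem kernel_norm_duality {X H : Type*}
    [NormedAddCommGroup H] [InnerProductSpace ℝ H] [CompleteSpace H]
    (K : X → X → ℝ) (hK : IsKernel K)
    (φ : X → H) (hφ : ∀ s t, ⟪φ s, φ t⟫ = K s t)
    (hd : Dense (Submodule.span ℝ (Set.range φ) : Set H)) :
    (∀ (n : ℕ) (α : Fin n → ℝ) (x : Fin n → X),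
      (∀ v : H, (∑ i, α i * ⟪v, φ (x i)⟫) - (1 / 2) * ‖v‖ ^ 2 ≤
          (1 / 2) * ∑ i, ∑ j, α i * α j * K (x i) (x j)) ∧
      ((∑ i, α i * ⟪∑ j, α j • φ (x j), φ (x i)⟫) -
          (1 / 2) * ‖∑ j, α j • φ (x j)‖ ^ 2 =
          (1 / 2) * ∑ i, ∑ j, α i * α j * K (x i) (x j))) ∧
    (∀ v : H, (1 / 2) * ‖v‖ ^ 2 =
      sSup {r : ℝ | ∃ (n : ℕ) (α : Fin n → ℝ) (x : Fin n → X),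
        r = (∑ i, α i * ⟪v, φ (x i)⟫) -
          (1 / 2) * ∑ i, ∑ j, α i * α j * K (x i) (x j)}) := by
  have key : ∀ (n : ℕ) (α : Fin n → ℝ) (x : Fin n → X) (v : H),
      ∑ i, α i * ⟪v, φ (x i)⟫ = ⟪v, ∑ i, α i • φ (x i)⟫ := by
    intro n α x v
    rw [inner_sum]
    refine Finset.sum_congr rfl fun i _ => ?_
    rw [real_inner_smul_right]
  have keyn : ∀ (n : ℕ) (α : Fin n → ℝ) (x : Fin n → X),
      ‖∑ j, α j • φ (x j)‖ ^ 2 = ∑ i, ∑ j, α i * α j * K (x i) (x j) := by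
    intro n α x
    rw [← real_inner_self_eq_norm_sq, sum_inner]
    refine Finset.sum_congr rfl fun i _ => ?_
    rw [real_inner_smul_left, inner_sum, Finset.mul_sum]
    refine Finset.sum_congr rfl fun j _ => ?_
    rw [real_inner_smul_right, hφ]
    ring
  have basic : ∀ v w : H, ⟪v, w⟫ - (1 / 2) * ‖v‖ ^ 2 ≤ (1 / 2) * ‖w‖ ^ 2 := by
    intro v w
    nlinarith [sq_nonneg ‖v - w‖, norm_sub_sq_real v w]
  refine ⟨fun n α x => ⟨fun v => ?_, ?_⟩, fun v => ?_⟩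
  · rw [key, ← keyn]
    exact basic v _
  · rw [key, ← keyn, real_inner_self_eq_norm_sq]
    ring
  · set S : Set ℝ := {r : ℝ | ∃ (n : ℕ) (α : Fin n → ℝ) (x : Fin n → X),
        r = (∑ i, α i * ⟪v, φ (x i)⟫) -
          (1 / 2) * ∑ i, ∑ j, α i * α j * K (x i) (x j)} with hS
    have hub : ∀ r ∈ S, r ≤ (1 / 2) * ‖v‖ ^ 2 := by
      rintro r ⟨n, α, x, rfl⟩
      rw [key, ← keyn]
      have := basic (∑ j, α j • φ (x j)) v
      rw [real_inner_comm] at this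
      linarith
    have hne : (0 : ℝ) ∈ S := ⟨0, Fin.elim0, Fin.elim0, by simp⟩
    refine le_antisymm ?_ (Real.sSup_le hub (by positivity))
    refine le_of_forall_sub_le fun ε hε => ?_
    have hδ : (0 : ℝ) < Real.sqrt (2 * ε) := Real.sqrt_pos.2 (by linarith)
    obtain ⟨w, hw, hdist⟩ := Metric.mem_closure_iff.1 (hd v) _ hδ
    have hwsq : ‖v - w‖ ^ 2 < 2 * ε := by
      have h1 : ‖v - w‖ < Real.sqrt (2 * ε) := by rwa [← dist_eq_norm]
      calc ‖v - w‖ ^ 2 < Real.sqrt (2 * ε) ^ 2 := by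
            exact pow_lt_pow_left₀ h1 (norm_nonneg _) two_ne_zero
        _ = 2 * ε := Real.sq_sqrt (by linarith)
    obtain ⟨n, f, g, hg⟩ := Submodule.mem_span_set'.1 hw
    set x : Fin n → X := fun i => (g i).2.choose with hx
    have hgx : ∀ i, φ (x i) = (g i : H) := fun i => (g i).2.choose_spec
    have hw' : w = ∑ i, f i • φ (x i) := by
      rw [← hg]
      exact (Finset.sum_congr rfl fun i _ => by rw [hgx]).symm
    have hmem : (⟪v, w⟫ - (1 / 2) * ‖w‖ ^ 2) ∈ S := by
      refine ⟨n, f, x, ?_⟩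
      rw [key, ← keyn, ← hw']
    have hbdd : BddAbove S := ⟨(1 / 2) * ‖v‖ ^ 2, hub⟩
    have hle : ⟪v, w⟫ - (1 / 2) * ‖w‖ ^ 2 ≤ sSup S := le_csSup hbdd hmem
    have hid : ‖v - w‖ ^ 2 = ‖v‖ ^ 2 - 2 * ⟪v, w⟫ + ‖w‖ ^ 2 := norm_sub_sq_real v w
    linarith
end

section
/- Let a > 0, let F : ℝ → ℝ be continuous and positive-definite on [−a, a], let H be a real Hilbert space and k : [0, a] → H a map with ⟪k u, k v⟫ = F(u − v) for all u, v ∈ [0, a] and with the linear span of {k u : u ∈ [0,a]} dense in H. Suppose (Φ_t)_{t ≥ 0} is a family of continuous linear operators on H with Φ_0 = Id_H, Φ_s ∘ Φ_t = Φ_{s+t} for all s, t ≥ 0, ‖Φ_t‖ ≤ 1 for all t ≥ 0, t ↦ Φ_t(g) continuous for every g ∈ H, and Φ_t(k u) = k(u − t) whenever 0 ≤ t ≤ u ≤ a. Then the function F̃ : ℝ → ℝ defined by F̃(t) = ⟪k 0, Φ_{|t|}(k 0)⟫ is positive-definite on ℝ and satisfies F̃(t) = F(t) for all t ∈ [−a,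 a]. -/
open scoped RealInnerProductSpace

section Aux

variable {H : Type*} [NormedAddCommGroup H] [InnerProductSpace ℝ H]

lemma contraction_norm_le' (T : H →L[ℝ] H) (hT : ‖T‖ ≤ 1) (z : H) : ‖T z‖ ≤ ‖z‖ :=
  calc ‖T z‖ ≤ ‖T‖ * ‖z‖ := T.le_opNorm z
  _ ≤ 1 * ‖z‖ := mul_le_mul_of_nonneg_right hT (norm_nonneg z)
  _ = ‖z‖ := one_mul _

lemma contraction_inner (T : H →L[ℝ] H) (hT : ‖T‖ ≤ 1) (x y : H) (hx : ‖T x‖ = ‖x‖) :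
    ⟪T x, T y⟫ = ⟪x, y⟫ := by
  have key : ∀ z : H, ‖T z‖ ^ 2 ≤ ‖z‖ ^ 2 := fun z =>
    pow_le_pow_left₀ (norm_nonneg _) (contraction_norm_le' T hT z) 2
  set c := ⟪x, y⟫ - ⟪T x, T y⟫ with hc
  set d := ‖y‖ ^ 2 - ‖T y‖ ^ 2 with hd'
  have hd : 0 ≤ d := by have := key y; simp [hd']; linarith
  have hq : ∀ lam : ℝ, 0 ≤ 2 * lam * c + lam ^ 2 * d := by
    intro lam
    have h2 := key (x + lam • y)
    have e1 : T (x + lam • y) = T x + lam • T y := by simp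
    rw [e1, norm_add_sq_real, norm_add_sq_real, real_inner_smul_right,
      real_inner_smul_right, norm_smul, norm_smul] at h2
    have habs : (‖lam‖ * ‖T y‖) ^ 2 = lam ^ 2 * ‖T y‖ ^ 2 := by
      rw [mul_pow]; simp [sq_abs]
    have habs2 : (‖lam‖ * ‖y‖) ^ 2 = lam ^ 2 * ‖y‖ ^ 2 := by
      rw [mul_pow]; simp [sq_abs]
    rw [habs, habs2] at h2
    have hx2 : ‖T x‖ ^ 2 = ‖x‖ ^ 2 := by rw [hx]
    simp only [hc, hd']
    nlinarith [h2, hx2]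
  have hd1 : (0:ℝ) < d + 1 := by linarith
  have h3 := hq (-c / (d + 1))
  have h4 : 0 ≤ (2 * (-c/(d+1)) * c + (-c/(d+1))^2 * d) * (d+1)^2 :=
    mul_nonneg h3 (by positivity)
  have h5 : (2 * (-c/(d+1)) * c + (-c/(d+1))^2 * d) * (d+1)^2 = -(c^2) * (d + 2) := by
    field_simp; ring
  have h4' : 0 ≤ -(c^2) * (d + 2) := h5 ▸ h4
  have h6 : c ^ 2 ≤ 0 := by nlinarith [h4', hd, sq_nonneg c]
  have hc0 : c = 0 := by
    have h7 := sq_nonneg c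
    have h8 : c ^ 2 = 0 := le_antisymm h6 h7
    exact pow_eq_zero_iff (by norm_num) |>.mp h8
  have := hc ▸ hc0
  linarith [this]

lemma key_ineq (Φ : ℝ → H →L[ℝ] H) (hΦ0 : Φ 0 = ContinuousLinearMap.id ℝ H)
    (hΦcomp : ∀ s t : ℝ, 0 ≤ s → 0 ≤ t → (Φ s).comp (Φ t) = Φ (s + t))
    (hΦnorm : ∀ t : ℝ, 0 ≤ t → ‖Φ t‖ ≤ 1) (v : H) :
    ∀ (n : ℕ) (x : Fin n → ℝ), Monotone x → ∀ (α : Fin n → ℝ) (c : ℝ), (∀ i, c ≤ x i) →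
      ‖∑ j, α j • Φ (x j - c) v‖ ^ 2 ≤ ∑ i, ∑ j, α i * α j * ⟪v, Φ |x i - x j| v⟫ := by
  intro n
  induction n with
  | zero => intro x hx α c hc; simp
  | succ n ih =>
    intro x hx α c hc
    have hymono : Monotone (x ∘ Fin.succ) := hx.comp Fin.strictMono_succ.monotone
    have hx0 : ∀ i : Fin n, x 0 ≤ x i.succ := fun i => hx (Fin.zero_le _)
    set w : H := ∑ j : Fin n, α j.succ • Φ (x j.succ - x 0) v with hw
    have hIH : ‖w‖ ^ 2 ≤ ∑ i : Fin n, ∑ j : Fin n,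
        α i.succ * α j.succ * ⟪v, Φ |x i.succ - x j.succ| v⟫ :=
      ih (x ∘ Fin.succ) hymono (α ∘ Fin.succ) (x 0) hx0
    have hcross : ∑ j : Fin n, α 0 * α j.succ * ⟪v, Φ (x j.succ - x 0) v⟫ = ⟪α 0 • v, w⟫ := by
      rw [hw, inner_sum]
      refine Finset.sum_congr rfl fun j _ => ?_
      rw [real_inner_smul_left, real_inner_smul_right]; ring
    have habs : ∀ j : Fin n, |x 0 - x j.succ| = x j.succ - x 0 := fun j => by
      rw [abs_sub_comm, abs_of_nonneg (sub_nonneg.2 (hx0 j))]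
    have habs' : ∀ j : Fin n, |x j.succ - x 0| = x j.succ - x 0 := fun j =>
      abs_of_nonneg (sub_nonneg.2 (hx0 j))
    have hsplit : ∑ i, ∑ j, α i * α j * ⟪v, Φ |x i - x j| v⟫
        = ‖α 0 • v‖ ^ 2 + 2 * ⟪α 0 • v, w⟫
          + ∑ i : Fin n, ∑ j : Fin n, α i.succ * α j.succ * ⟪v, Φ |x i.succ - x j.succ| v⟫ := by
      rw [Fin.sum_univ_succ (f := fun i => ∑ j, α i * α j * ⟪v, Φ |x i - x j| v⟫)]
      rw [Fin.sum_univ_succ (f := fun j => α 0 * α j * ⟪v, Φ |x 0 - x j| v⟫)]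
      have e00 : α 0 * α 0 * ⟪v, Φ |x 0 - x 0| v⟫ = ‖α 0 • v‖ ^ 2 := by
        rw [sub_self, abs_zero, hΦ0]
        simp only [ContinuousLinearMap.id_apply]
        rw [real_inner_self_eq_norm_sq, norm_smul, mul_pow, Real.norm_eq_abs, sq_abs]
        ring
      have eB : ∑ j : Fin n, α 0 * α j.succ * ⟪v, Φ |x 0 - x j.succ| v⟫ = ⟪α 0 • v, w⟫ := by
        rw [← hcross]
        exact Finset.sum_congr rfl fun j _ => by rw [habs j]
      have eRow : ∀ i : Fin n, ∑ j, α i.succ * α j * ⟪v, Φ |x i.succ - x j| v⟫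
          = α i.succ * α 0 * ⟪v, Φ |x i.succ - x 0| v⟫
            + ∑ j : Fin n, α i.succ * α j.succ * ⟪v, Φ |x i.succ - x j.succ| v⟫ := fun i =>
        Fin.sum_univ_succ (f := fun j => α i.succ * α j * ⟪v, Φ |x i.succ - x j| v⟫)
      rw [Finset.sum_congr rfl fun i _ => eRow i, Finset.sum_add_distrib]
      have eC : ∑ i : Fin n, α i.succ * α 0 * ⟪v, Φ |x i.succ - x 0| v⟫ = ⟪α 0 • v, w⟫ := by
        rw [← hcross]
        refine Finset.sum_congr rfl fun i _ => ?_
        rw [habs' i]; ring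
      rw [e00, eB, eC]; ring
    have hquad : ‖α 0 • v + w‖ ^ 2 ≤ ∑ i, ∑ j, α i * α j * ⟪v, Φ |x i - x j| v⟫ := by
      rw [hsplit, norm_add_sq_real]; linarith
    have hsum : ∑ j : Fin (n+1), α j • Φ (x j - c) v = Φ (x 0 - c) (α 0 • v + w) := by
      rw [Fin.sum_univ_succ (f := fun j => α j • Φ (x j - c) v), map_add, map_smul, hw,
        map_sum]
      congr 1
      refine Finset.sum_congr rfl fun j _ => ?_
      rw [map_smul]
      congr 1
      have hcmp := hΦcomp (x 0 - c) (x j.succ - x 0) (sub_nonneg.2 (hc 0))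
        (sub_nonneg.2 (hx0 j))
      have happ := congrArg (fun (T : H →L[ℝ] H) => T v) hcmp
      simp only [ContinuousLinearMap.comp_apply] at happ
      rw [show x 0 - c + (x j.succ - x 0) = x j.succ - c by ring] at happ
      exact happ.symm
    calc ‖∑ j, α j • Φ (x j - c) v‖ ^ 2 = ‖Φ (x 0 - c) (α 0 • v + w)‖ ^ 2 := by rw [hsum]
    _ ≤ ‖α 0 • v + w‖ ^ 2 := by
        apply pow_le_pow_left₀ (norm_nonneg _)
        exact contraction_norm_le' _ (hΦnorm _ (sub_nonneg.2 (hc 0))) _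
    _ ≤ _ := hquad

end Aux

/-- Given a realization `(H, k)` of the kernel `(u,v) ↦ F (u - v)` of a continuous
positive-definite function `F` on `[-a, a]`, and a strongly continuous contraction semigroup
`(Φ_t)_{t ≥ 0}` on `H` with `Φ_t (k u) = k (u - t)` for `0 ≤ t ≤ u ≤ a`, the function
`t ↦ ⟪k 0, Φ_{|t|} (k 0)⟫` is positive-definite on `ℝ` and extends `F`. -/
theorem semigroup_gives_canonical_extension {H : Type*}
    [NormedAddCommGroup H] [InnerProductSpace ℝ H] [CompleteSpace H]
    (a : ℝ) (ha : 0 < a) (F : ℝ → ℝ)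
    (hFc : Continuous F) (hF : IsPosDefOn (Set.Icc (-a) a) F)
    (k : ℝ → H)
    (hk : ∀ u ∈ Set.Icc (0 : ℝ) a, ∀ v ∈ Set.Icc (0 : ℝ) a, ⟪k u, k v⟫ = F (u - v))
    (hd : Dense (Submodule.span ℝ (k '' Set.Icc (0 : ℝ) a) : Set H))
    (Φ : ℝ → H →L[ℝ] H)
    (hΦ0 : Φ 0 = ContinuousLinearMap.id ℝ H)
    (hΦcomp : ∀ s t : ℝ, 0 ≤ s → 0 ≤ t → (Φ s).comp (Φ t) = Φ (s + t))
    (hΦnorm : ∀ t : ℝ, 0 ≤ t → ‖Φ t‖ ≤ 1)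
    (hΦcont : ∀ g : H, ContinuousOn (fun t => Φ t g) (Set.Ici (0 : ℝ)))
    (hshift : ∀ t u : ℝ, 0 ≤ t → t ≤ u → u ≤ a → Φ t (k u) = k (u - t)) :
    IsPosDefOn Set.univ (fun t => ⟪k 0, Φ |t| (k 0)⟫) ∧
      ∀ t ∈ Set.Icc (-a) a, ⟪k 0, Φ |t| (k 0)⟫ = F t := by
  constructor
  · -- positive definiteness
    intro n x α _
    show 0 ≤ ∑ i, ∑ j, α i * α j * ⟪k 0, Φ |x i - x j| (k 0)⟫
    rcases n with _ | m
    · simp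
    · set σ := Tuple.sort x with hσ
      have hmono : Monotone (x ∘ σ) := Tuple.monotone_sort x
      have hperm : ∑ i, ∑ j, α i * α j * ⟪k 0, Φ |x i - x j| (k 0)⟫
          = ∑ i, ∑ j, α (σ i) * α (σ j) * ⟪k 0, Φ |x (σ i) - x (σ j)| (k 0)⟫ := by
        rw [← Equiv.sum_comp σ (fun i => ∑ j, α i * α j * ⟪k 0, Φ |x i - x j| (k 0)⟫)]
        exact Finset.sum_congr rfl fun i _ =>
          (Equiv.sum_comp σ (fun j => α (σ i) * α j * ⟪k 0, Φ |x (σ i) - x j| (k 0)⟫)).symm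
      rw [hperm]
      have hc : ∀ i : Fin (m+1), (x ∘ σ) 0 ≤ (x ∘ σ) i := fun i => hmono (Fin.zero_le i)
      have hkey := key_ineq Φ hΦ0 hΦcomp hΦnorm (k 0) (m+1) (x ∘ σ) hmono (α ∘ σ)
        ((x ∘ σ) 0) hc
      exact le_trans (sq_nonneg _) hkey
  · -- extension
    have hnormk : ∀ u, 0 ≤ u → u ≤ a → ‖k u‖ = ‖k 0‖ := by
      intro u h0 h1
      have h2 : ⟪k u, k u⟫ = F 0 := by simpa using hk u ⟨h0, h1⟩ u ⟨h0, h1⟩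
      have h3 : ⟪k 0, k 0⟫ = F 0 := by simpa using hk 0 ⟨le_rfl, ha.le⟩ 0 ⟨le_rfl, ha.le⟩
      have h4 : ‖k u‖ ^ 2 = ‖k 0‖ ^ 2 := by
        rw [← real_inner_self_eq_norm_sq, ← real_inner_self_eq_norm_sq, h2, h3]
      have h5 := congrArg Real.sqrt h4
      rwa [Real.sqrt_sq (norm_nonneg _), Real.sqrt_sq (norm_nonneg _)] at h5
    have hpos : ∀ s, 0 ≤ s → s ≤ a → ⟪k 0, Φ s (k 0)⟫ = F s := by
      intro s h0 h1
      have hks : Φ s (k s) = k 0 := by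
        have := hshift s s h0 le_rfl h1
        rwa [sub_self] at this
      have hnorm : ‖Φ s (k s)‖ = ‖k s‖ := by rw [hks, hnormk s h0 h1]
      have h2 := contraction_inner (Φ s) (hΦnorm s h0) (k s) (k 0) hnorm
      rw [hks] at h2
      rw [h2]
      have := hk s ⟨h0, h1⟩ 0 ⟨le_rfl, ha.le⟩
      simpa using this
    intro t ht
    rcases le_or_gt 0 t with h | h
    · rw [abs_of_nonneg h]; exact hpos t h ht.2
    · rw [abs_of_neg h]
      have h1 := hpos (-t) (by linarith) (by linarith [ht.1])
      rw [h1]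
      have e1 := hk 0 ⟨le_rfl, ha.le⟩ (-t) ⟨by linarith, by linarith [ht.1]⟩
      have e2 := hk (-t) ⟨by linarith, by linarith [ht.1]⟩ 0 ⟨le_rfl, ha.le⟩
      rw [real_inner_comm] at e1
      simp only [zero_sub, sub_zero, neg_neg] at e1 e2
      rw [← e2, e1]
end
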